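/- arXiv:2307.09179 — 2 statements merged into one kernel-verified Lean document; each statement's English description precedes it below -/
import Mathlib

section
/- Let P_1,…,P_ℓ be vertex-disjoint induced paths of a finite simple block graph G, each equipped with an orientation φ_i, and suppose that P_ind does not contain an internal strand, an internal fork, a double fork, or a complete ladder. Let γ_1 be a strand from P_a to P_b and γ_2 be a strand from P_b to P_c. If V(γ_1) ∩ V(γ_2) ≠ ∅, then K_{P_ind} contains the arc (a,c). -/
open SimpleGraph

/-- An induced path in a simple graph `G`: a walk which is a path and such that the
subgraph of `G` induced on its vertex set equals the path. -/
structure InducedPath {V : Type*} (G : SimpleGraph V) where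
  first : V
  last : V
  walk : G.Walk first last
  isPath : walk.IsPath
  induced : ∀ x ∈ walk.support, ∀ y ∈ walk.support, G.Adj x y → s(x, y) ∈ walk.edges

namespace InducedPath

variable {V : Type*} {G : SimpleGraph V}

/-- The vertex set of an induced path. -/
def vertexSet (P : InducedPath G) : Set V := {v | v ∈ P.walk.support}

/-- The edge set of an induced path. -/
def edgeSet (P : InducedPath G) : Set (Sym2 V) := {e | e ∈ P.walk.edges}

/-- The terminal vertices `∂P` of an induced path. -/
def boundary (P : InducedPath G) : Set V := {P.first, P.last}

/-- The internal vertices `P°` of an induced path. -/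
def interior (P : InducedPath G) : Set V := P.vertexSet \ P.boundary

end InducedPath

section FamilyDefs

variable {V : Type*} (G : SimpleGraph V) {ℓ : ℕ}

/-- `Q` contains `P` as a subgraph. -/
def PathContains (Q P : InducedPath G) : Prop :=
  P.vertexSet ⊆ Q.vertexSet ∧ P.edgeSet ⊆ Q.edgeSet

/-- The vertex set of `P_ind`, the induced subgraph on `⋃ i, V(P i)`. -/
def famVerts (P : Fin ℓ → InducedPath G) : Set V := ⋃ i, (P i).vertexSet

/-- The union of the edge sets of the paths `P i`. -/
def famEdges (P : Fin ℓ → InducedPath G) : Set (Sym2 V) := ⋃ i, (P i).edgeSet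

/-- The paths `P i` are pairwise vertex-disjoint. -/
def PairwiseVertexDisjoint (P : Fin ℓ → InducedPath G) : Prop :=
  ∀ i j : Fin ℓ, i ≠ j → Disjoint (P i).vertexSet (P j).vertexSet

/-- `φ` is an orientation of the induced path `P`, i.e. a surjection `{1,2} → ∂P`. -/
def IsOrientation (P : InducedPath G) (φ : Fin 2 → V) : Prop :=
  Set.range φ = P.boundary

/-- `Q` is an induced path of `P_ind` (equivalently, an induced path of `G` all of whose
vertices belong to `⋃ i, V(P i)`). -/
def IsPathOfInd (P : Fin ℓ → InducedPath G) (Q : InducedPath G) : Prop :=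
  Q.vertexSet ⊆ famVerts G P

/-- The data `(P, σ, φ)` is DOIP. -/
def IsDOIPData (P : Fin ℓ → InducedPath G) (σ : Equiv.Perm (Fin ℓ))
    (φ : Fin ℓ → Fin 2 → V) : Prop :=
  (∀ i, IsOrientation G (P i) (φ i)) ∧
    ∀ i j : Fin ℓ, σ i ≤ σ j → ∀ Q : InducedPath G, IsPathOfInd G P Q →
      ({Q.first, Q.last} : Set V) = {φ (σ i) 0, φ (σ j) 1} →
      ∃ k, PathContains G Q (P k)

/-- The family `P` is DOIP: there exist `σ` and orientations making it DOIP. -/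
def FamilyDOIP (P : Fin ℓ → InducedPath G) : Prop :=
  ∃ (σ : Equiv.Perm (Fin ℓ)) (φ : Fin ℓ → Fin 2 → V), IsDOIPData G P σ φ

/-- `Q` realizes an arc `(i,j)` of the directed multigraph `K_{P_ind}`. -/
def KArcWitness (P : Fin ℓ → InducedPath G) (φ : Fin ℓ → Fin 2 → V) (i j : Fin ℓ)
    (Q : InducedPath G) : Prop :=
  IsPathOfInd G P Q ∧ ({Q.first, Q.last} : Set V) = {φ i 0, φ j 1} ∧
    ∀ k, ¬ PathContains G Q (P k)

/-- `(i,j)` is an arc of `K_{P_ind}`. -/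
def KArc (P : Fin ℓ → InducedPath G) (φ : Fin ℓ → Fin 2 → V) (i j : Fin ℓ) : Prop :=
  ∃ Q : InducedPath G, KArcWitness G P φ i j Q

/-- The directed multigraph `K_{P_ind}` is directed acyclic (no loops and no directed
cycles). -/
def KAcyclic (P : Fin ℓ → InducedPath G) (φ : Fin ℓ → Fin 2 → V) : Prop :=
  ∀ i : Fin ℓ, ¬ Relation.TransGen (KArc G P φ) i i

/-- `Q` is a strand of `P_ind` from `P i` to `P j`. -/
def IsStrand (P : Fin ℓ → InducedPath G) (φ : Fin ℓ → Fin 2 → V) (i j : Fin ℓ)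
    (Q : InducedPath G) : Prop :=
  i ≠ j ∧ IsPathOfInd G P Q ∧ Q.first ≠ φ i 1 ∧ Q.last ≠ φ j 0 ∧
    Q.vertexSet ∩ (P i).vertexSet = {Q.first} ∧
    Q.vertexSet ∩ (P j).vertexSet = {Q.last} ∧
    ∀ k, ¬ PathContains G Q (P k)

/-- `Q` is an internal strand of `P_ind` from `P i` to `P j`. -/
def IsInternalStrand (P : Fin ℓ → InducedPath G) (i j : Fin ℓ) (Q : InducedPath G) : Prop :=
  i ≠ j ∧ IsPathOfInd G P Q ∧
    Q.first ∈ (P i).interior ∧ Q.last ∈ (P j).interior ∧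
    Q.vertexSet ∩ (P i).vertexSet = {Q.first} ∧
    Q.vertexSet ∩ (P j).vertexSet = {Q.last} ∧
    ∀ k, ¬ PathContains G Q (P k)

/-- `(Q, b, c)` is an internal fork of `P_ind` from `P i` to `P j`. -/
def IsInternalFork (P : Fin ℓ → InducedPath G) (i j : Fin ℓ) (Q : InducedPath G)
    (b c : V) : Prop :=
  i ≠ j ∧ IsPathOfInd G P Q ∧ Q.first ∈ (P i).interior ∧
    Q.vertexSet ∩ (P i).vertexSet = {Q.first} ∧
    Q.vertexSet ∩ (P j).vertexSet = ∅ ∧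
    b ∈ (P j).vertexSet ∧ c ∈ (P j).vertexSet ∧ b ≠ c ∧
    G.Adj Q.last b ∧ G.Adj Q.last c ∧
    ∀ k, ¬ PathContains G Q (P k)

/-- `(Q, a, b, c, d)` is a double fork of `P_ind` from `P i` to `P j`. -/
def IsDoubleFork (P : Fin ℓ → InducedPath G) (i j : Fin ℓ) (Q : InducedPath G)
    (a b c d : V) : Prop :=
  i ≠ j ∧ IsPathOfInd G P Q ∧
    Q.vertexSet ∩ (P i).vertexSet = ∅ ∧
    Q.vertexSet ∩ (P j).vertexSet = ∅ ∧
    a ∈ (P i).vertexSet ∧ b ∈ (P i).vertexSet ∧ a ≠ b ∧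
    c ∈ (P j).vertexSet ∧ d ∈ (P j).vertexSet ∧ c ≠ d ∧
    G.Adj Q.first a ∧ G.Adj Q.first b ∧ G.Adj Q.last c ∧ G.Adj Q.last d ∧
    ∀ k, ¬ PathContains G Q (P k)

/-- `(a, b, c, d)` is a complete ladder of `P_ind` between `P i` and `P j`. -/
def IsCompleteLadder (P : Fin ℓ → InducedPath G) (i j : Fin ℓ) (a b c d : V) : Prop :=
  i ≠ j ∧ a ∈ (P i).vertexSet ∧ b ∈ (P i).vertexSet ∧ a ≠ b ∧
    c ∈ (P j).vertexSet ∧ d ∈ (P j).vertexSet ∧ c ≠ d ∧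
    G.Adj a b ∧ G.Adj a c ∧ G.Adj a d ∧ G.Adj b c ∧ G.Adj b d ∧ G.Adj c d

/-- `P_ind` contains an internal strand, an internal fork, a double fork, or a
complete ladder. -/
def HasForbidden (P : Fin ℓ → InducedPath G) : Prop :=
  (∃ i j Q, IsInternalStrand G P i j Q) ∨
  (∃ i j Q b c, IsInternalFork G P i j Q b c) ∨
  (∃ i j Q a b c d, IsDoubleFork G P i j Q a b c d) ∨
  (∃ i j a b c d, IsCompleteLadder G P i j a b c d)

/-- `P_ind` contains a complete ladder, or an internal strand, internal fork, or double
fork which is edge-disjoint from the family `P`. -/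
def HasForbiddenEdgeDisjoint (P : Fin ℓ → InducedPath G) : Prop :=
  (∃ i j Q, IsInternalStrand G P i j Q ∧ Disjoint Q.edgeSet (famEdges G P)) ∨
  (∃ i j Q b c, IsInternalFork G P i j Q b c ∧
    Disjoint (Q.edgeSet ∪ {s(Q.last, b), s(Q.last, c)}) (famEdges G P)) ∨
  (∃ i j Q a b c d, IsDoubleFork G P i j Q a b c d ∧
    Disjoint (Q.edgeSet ∪ {s(Q.first, a), s(Q.first, b), s(Q.last, c), s(Q.last, d)})
      (famEdges G P)) ∨
  (∃ i j a b c d, IsCompleteLadder G P i j a b c d)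

end FamilyDefs

section Invariants

variable {V : Type*}

/-- The invariant `ν(G)`: the maximal total number of edges of a family of
vertex-disjoint induced paths of `G` which is DOIP. -/
noncomputable def nu (G : SimpleGraph V) : ℕ :=
  sSup {n : ℕ | ∃ (ℓ : ℕ) (P : Fin ℓ → InducedPath G),
    PairwiseVertexDisjoint G P ∧ FamilyDOIP G P ∧ n = ∑ i, (P i).walk.length}

/-- `ℓ(G)`: the number of edges of a longest induced path of `G`. -/
noncomputable def longestInducedPathLength (G : SimpleGraph V) : ℕ :=
  sSup {n : ℕ | ∃ P : InducedPath G, n = P.walk.length}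

end Invariants

section BlockGraphs

variable {V : Type*} {G : SimpleGraph V}

/-- A subgraph is biconnected if it is connected and remains connected after
deleting any single vertex. -/
def SubgraphBiconnected (H : G.Subgraph) : Prop :=
  H.coe.Connected ∧ ∀ v : V, ((H.deleteVerts {v}).coe).Connected

/-- A block of `G` is a maximal biconnected subgraph. -/
def IsBlock (H : G.Subgraph) : Prop :=
  SubgraphBiconnected H ∧ ∀ H' : G.Subgraph, SubgraphBiconnected H' → H ≤ H' → H' = H

/-- `G` is a block graph if every block of `G` is a complete graph. -/
def IsBlockGraph (G : SimpleGraph V) : Prop :=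
  ∀ H : G.Subgraph, IsBlock H → ∀ a ∈ H.verts, ∀ b ∈ H.verts, a ≠ b → H.Adj a b

/-- The intersection `Q ∩ R` of two induced paths, as a subgraph of `G`. -/
def pathsInter (Q R : InducedPath G) : G.Subgraph where
  verts := Q.vertexSet ∩ R.vertexSet
  Adj a b := G.Adj a b ∧ s(a, b) ∈ Q.walk.edges ∧ s(a, b) ∈ R.walk.edges
  adj_sub h := h.1
  edge_vert h := ⟨Q.walk.fst_mem_support_of_mem_edges h.2.1,
    R.walk.fst_mem_support_of_mem_edges h.2.2⟩
  symm := by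
    constructor
    intro a b h
    refine ⟨h.1.symm, ?_, ?_⟩
    · rw [Sym2.eq_swap]; exact h.2.1
    · rw [Sym2.eq_swap]; exact h.2.2

/-- `s` is a maximal clique of `G`. -/
def IsMaxClique (G : SimpleGraph V) (s : Set V) : Prop :=
  G.IsClique s ∧ ∀ t : Set V, G.IsClique t → s ⊆ t → s = t

/-- `G` has the two-block property: every vertex belongs to at most two maximal
cliques. -/
def TwoBlockProperty (G : SimpleGraph V) : Prop :=
  ∀ v : V, ({s : Set V | IsMaxClique G s ∧ v ∈ s}).ncard ≤ 2

/-- The completion `G_c` of `G` at the vertex `c`. -/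
def completionAt (G : SimpleGraph V) (c : V) : SimpleGraph V where
  Adj u w := G.Adj u w ∨ (u ≠ w ∧ G.Adj c u ∧ G.Adj c w)
  symm := by
    constructor
    intro u w h
    rcases h with h | ⟨hne, h1, h2⟩
    · exact Or.inl h.symm
    · exact Or.inr ⟨hne.symm, h2, h1⟩
  loopless := by
    constructor
    intro u h
    rcases h with h | ⟨hne, _, _⟩
    · exact G.irrefl h
    · exact hne rfl

/-- The number of connected components of a graph. -/
noncomputable def numComponents (G : SimpleGraph V) : ℕ :=
  Nat.card G.ConnectedComponent

/-- `c` is a cut vertex of `G`: deleting it strictly increases the number of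
connected components. -/
def IsCutVertex (G : SimpleGraph V) (c : V) : Prop :=
  numComponents G < numComponents (G.induce ({c}ᶜ : Set V))

end BlockGraphs


/-! ### Auxiliary infrastructure -/

namespace BGAux

open SimpleGraph Walk

variable {V : Type*} {G : SimpleGraph V}

lemma eq_of_length_zero {a b : V} (w : G.Walk a b) (h : w.length = 0) : a = b := by
  cases w with
  | nil => rfl
  | cons h' p => simp [Walk.length_cons] at h

lemma path_loop_nil {b : V} (w : G.Walk b b) (hw : w.IsPath) : w.length = 0 := by
  cases w with
  | nil => rfl
  | cons h' p =>
    exfalso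
    rw [Walk.cons_isPath_iff] at hw
    exact hw.2 p.end_mem_support

lemma edge_of_length_one {a b : V} (w : G.Walk a b) (h : w.length = 1) :
    s(a, b) ∈ w.edges := by
  cases w with
  | nil => simp at h
  | cons h' p =>
    rw [Walk.length_cons, Nat.add_eq_right] at h
    have := eq_of_length_zero p h
    subst this
    simp

/-- An edge of a path joining its two endpoints forces the path to be a single edge. -/
lemma length_one_of_ends_edge {a b : V} (w : G.Walk a b) (hw : w.IsPath)
    (he : s(a, b) ∈ w.edges) : w.length = 1 := by
  cases w with
  | nil => simp at he
  | cons h' p =>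
    rename_i c
    rw [Walk.edges_cons, List.mem_cons] at he
    rcases he with he | he
    · have : b = c ∨ b = a := by
        rw [Sym2.eq_iff] at he
        tauto
      rcases this with rfl | rfl
      · have h0 := path_loop_nil p hw.of_cons
        simp [Walk.length_cons, h0]
      · exfalso
        rw [Walk.cons_isPath_iff] at hw
        exact hw.2 p.end_mem_support
    · exfalso
      have : a ∈ p.support := Walk.fst_mem_support_of_mem_edges p he
      rw [Walk.cons_isPath_iff] at hw
      exact hw.2 this

/-- Splitting a walk at the first vertex satisfying a predicate. -/
lemma split_first {x y : V} (w : G.Walk x y) (S : V → Prop) [DecidablePred S]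
    (hex : ∃ z ∈ w.support, S z) :
    ∃ (m : V) (p : G.Walk x m) (q : G.Walk m y),
      w = p.append q ∧ S m ∧ ∀ z ∈ p.support, S z → z = m := by
  induction w with
  | nil =>
    obtain ⟨z, hz, hSz⟩ := hex
    simp only [Walk.support_nil, List.mem_singleton] at hz
    subst hz
    exact ⟨_, Walk.nil, Walk.nil, rfl, hSz, fun z' hz' _ => by simpa using hz'⟩
  | cons h rest ih =>
    rename_i u v w'
    by_cases hSu : S u
    · exact ⟨u, Walk.nil, Walk.cons h rest, rfl, hSu, by simp⟩
    · have hex' : ∃ z ∈ rest.support, S z := by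
        obtain ⟨z, hz, hSz⟩ := hex
        rw [Walk.support_cons, List.mem_cons] at hz
        rcases hz with rfl | hz
        · exact absurd hSz hSu
        · exact ⟨z, hz, hSz⟩
      obtain ⟨m, p, q, heq, hm, hp⟩ := ih hex'
      refine ⟨m, Walk.cons h p, q, ?_, hm, ?_⟩
      · rw [Walk.cons_append, heq]
      · intro z hz hSz
        rw [Walk.support_cons, List.mem_cons] at hz
        rcases hz with rfl | hz
        · exact absurd hSz hSu
        · exact hp z hz hSz

/-- Splitting a walk at the last vertex satisfying a predicate. -/
lemma split_last {x y : V} (w : G.Walk x y) (S : V → Prop) [DecidablePred S]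
    (hex : ∃ z ∈ w.support, S z) :
    ∃ (m : V) (p : G.Walk x m) (q : G.Walk m y),
      w = p.append q ∧ S m ∧ ∀ z ∈ q.support, S z → z = m := by
  have hex' : ∃ z ∈ w.reverse.support, S z := by
    obtain ⟨z, hz, hSz⟩ := hex
    exact ⟨z, by rwa [Walk.support_reverse, List.mem_reverse], hSz⟩
  obtain ⟨m, p', q', heq, hm, hp'⟩ := split_first w.reverse S hex'
  refine ⟨m, q'.reverse, p'.reverse, ?_, hm, ?_⟩
  · have := congrArg Walk.reverse heq
    rwa [Walk.reverse_reverse, Walk.reverse_append] at this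
  · intro z hz hSz
    rw [Walk.support_reverse, List.mem_reverse] at hz
    exact hp' z hz hSz

/-- In a path `p.append q`, the only common vertex of the two parts is the junction. -/
lemma eq_junction {x m y : V} {p : G.Walk x m} {q : G.Walk m y}
    (hw : (p.append q).IsPath) {z : V} (hzp : z ∈ p.support) (hzq : z ∈ q.support) :
    z = m := by
  have hnd := hw.support_nodup
  rw [Walk.support_append] at hnd
  have hdisj := List.disjoint_of_nodup_append hnd
  have : z ∈ m :: q.support.tail := by rwa [← Walk.support_eq_cons]
  rcases List.mem_cons.mp this with rfl | hz
  · rfl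
  · exact (hdisj hzp hz).elim

lemma edge_in_left {x m y : V} {p : G.Walk x m} {q : G.Walk m y}
    (hw : (p.append q).IsPath) {a b : V} (ha : a ∈ p.support) (hb : b ∈ p.support)
    (hadj : G.Adj a b) (he : s(a, b) ∈ (p.append q).edges) : s(a, b) ∈ p.edges := by
  rw [Walk.edges_append, List.mem_append] at he
  rcases he with he | he
  · exact he
  · exfalso
    have ha' : a ∈ q.support := Walk.fst_mem_support_of_mem_edges q he
    have hb' : b ∈ q.support := Walk.snd_mem_support_of_mem_edges q he
    have h1 := eq_junction hw ha ha'
    have h2 := eq_junction hw hb hb'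
    exact hadj.ne (h1.trans h2.symm)

lemma edge_in_right {x m y : V} {p : G.Walk x m} {q : G.Walk m y}
    (hw : (p.append q).IsPath) {a b : V} (ha : a ∈ q.support) (hb : b ∈ q.support)
    (hadj : G.Adj a b) (he : s(a, b) ∈ (p.append q).edges) : s(a, b) ∈ q.edges := by
  rw [Walk.edges_append, List.mem_append] at he
  rcases he with he | he
  · exfalso
    have ha' : a ∈ p.support := Walk.fst_mem_support_of_mem_edges p he
    have hb' : b ∈ p.support := Walk.snd_mem_support_of_mem_edges p he
    have h1 := eq_junction hw ha' ha
    have h2 := eq_junction hw hb' hb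
    exact hadj.ne (h1.trans h2.symm)
  · exact he

/-- No triangle among the edges of a path. -/
lemma no_triangle_edges {x y : V} (w : G.Walk x y) (hw : w.IsPath) :
    ∀ a b c : V, a ≠ b → b ≠ c → a ≠ c →
      s(a, b) ∈ w.edges → s(b, c) ∈ w.edges → s(a, c) ∈ w.edges → False := by
  induction w with
  | nil => intro a b c _ _ _ h1 _ _; simp at h1
  | cons hadj rest ih =>
    rename_i u v w'
    intro a b c hab hbc hac h1 h2 h3
    rw [Walk.cons_isPath_iff] at hw
    -- helper: an edge of the cons containing u must be the head edge
    have head : ∀ {p q : V}, s(p, q) ∈ (Walk.cons hadj rest).edges → p = u → q = v := by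
      intro p q hpq hpu
      subst hpu
      rw [Walk.edges_cons, List.mem_cons] at hpq
      rcases hpq with hpq | hpq
      · rw [Sym2.eq_iff] at hpq
        rcases hpq with ⟨_, rfl⟩ | ⟨h', rfl⟩
        · rfl
        · exact h'
      · exact absurd (Walk.fst_mem_support_of_mem_edges rest hpq) hw.2
    have notu : ∀ {p q : V}, s(p, q) ∈ (Walk.cons hadj rest).edges → p ≠ u → q ≠ u →
        s(p, q) ∈ rest.edges := by
      intro p q hpq hpu hqu
      rw [Walk.edges_cons, List.mem_cons] at hpq
      rcases hpq with hpq | hpq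
      · rw [Sym2.eq_iff] at hpq
        rcases hpq with ⟨rfl, _⟩ | ⟨_, rfl⟩
        · exact absurd rfl hpu
        · exact absurd rfl hqu
      · exact hpq
    by_cases hau : a = u
    · subst hau
      have hb : b = v := head h1 rfl
      have hc : c = v := head h3 rfl
      exact hbc (hb.trans hc.symm)
    · by_cases hbu : b = u
      · subst hbu
        have ha : a = v := head (by rwa [Sym2.eq_swap] at h1) rfl
        have hc : c = v := head h2 rfl
        exact hac (ha.trans hc.symm)
      · by_cases hcu : c = u
        · subst hcu
          have hb : b = v := head (by rwa [Sym2.eq_swap] at h2) rfl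
          have ha : a = v := head (by rwa [Sym2.eq_swap] at h3) rfl
          exact hab (ha.trans hb.symm)
        · exact ih hw.1 a b c hab hbc hac (notu h1 hau hbu) (notu h2 hbu hcu)
            (notu h3 hau hcu)

/-- In an induced path there is no triangle of vertices. -/
lemma InducedPath.no_triangle (γ : InducedPath G) {a b c : V}
    (ha : a ∈ γ.walk.support) (hb : b ∈ γ.walk.support) (hc : c ∈ γ.walk.support)
    (hab : a ≠ b) (hbc : b ≠ c) (hac : a ≠ c)
    (e1 : G.Adj a b) (e2 : G.Adj b c) (e3 : G.Adj a c) : False :=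
  no_triangle_edges γ.walk γ.isPath a b c hab hbc hac
    (γ.induced a ha b hb e1) (γ.induced b hb c hc e2) (γ.induced a ha c hc e3)

/-- One shortening step for a non-induced path. -/
lemma shorten_step {x y : V} [DecidableEq V] (p : G.Walk x y) (hp : p.IsPath)
    (hviol : ¬ ∀ a ∈ p.support, ∀ b ∈ p.support, G.Adj a b → s(a, b) ∈ p.edges) :
    ∃ w' : G.Walk x y, w'.length < p.length ∧ ∀ z ∈ w'.support, z ∈ p.support := by
  push_neg at hviol
  obtain ⟨a, ha, b, hb, hadj, hne⟩ := hviol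
  obtain ⟨m, p₁, q₁, heq, hm, -⟩ := split_first p (· = a) ⟨a, ha, rfl⟩
  subst hm
  by_cases hbq : b ∈ q₁.support
  · obtain ⟨m₂, p₂, q₂, heq₂, hm₂, -⟩ := split_first q₁ (· = b) ⟨b, hbq, rfl⟩
    subst hm₂
    have hplen : p.length = p₁.length + (p₂.length + q₂.length) := by
      rw [heq, heq₂, Walk.length_append, Walk.length_append]
    have hp2 : 2 ≤ p₂.length := by
      rcases Nat.lt_or_ge p₂.length 2 with h | h
      · interval_cases h' : p₂.length
        · exact absurd (eq_of_length_zero p₂ h') hadj.ne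
        · exfalso
          apply hne
          rw [heq, heq₂]
          rw [Walk.edges_append, Walk.edges_append, List.mem_append, List.mem_append]
          exact Or.inr (Or.inl (edge_of_length_one p₂ h'))
      · exact h
    refine ⟨p₁.append (Walk.cons hadj q₂), ?_, ?_⟩
    · rw [Walk.length_append, Walk.length_cons]
      omega
    · intro z hz
      rw [Walk.mem_support_append_iff] at hz
      rw [heq, heq₂]
      rw [Walk.mem_support_append_iff, Walk.mem_support_append_iff]
      rcases hz with hz | hz
      · exact Or.inl hz
      · rw [Walk.support_cons, List.mem_cons] at hz
        rcases hz with rfl | hz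
        · exact Or.inr (Or.inl p₂.start_mem_support)
        · exact Or.inr (Or.inr hz)
  · have hbp : b ∈ p₁.support := by
      have : b ∈ p.support := hb
      rw [heq, Walk.mem_support_append_iff] at this
      tauto
    obtain ⟨m₃, p₃, q₃, heq₃, hm₃, -⟩ := split_first p₁ (· = b) ⟨b, hbp, rfl⟩
    subst hm₃
    have hplen : p.length = p₃.length + q₃.length + q₁.length := by
      rw [heq, heq₃, Walk.length_append, Walk.length_append]
    have hq3 : 2 ≤ q₃.length := by
      rcases Nat.lt_or_ge q₃.length 2 with h | h
      · interval_cases h' : q₃.length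
        · exact absurd (eq_of_length_zero q₃ h').symm hadj.ne
        · exfalso
          apply hne
          rw [heq, heq₃]
          rw [Walk.edges_append, Walk.edges_append, List.mem_append, List.mem_append]
          refine Or.inl (Or.inr ?_)
          have := edge_of_length_one q₃ h'
          rwa [Sym2.eq_swap] at this
      · exact h
    refine ⟨p₃.append (Walk.cons hadj.symm q₁), ?_, ?_⟩
    · rw [Walk.length_append, Walk.length_cons]
      omega
    · intro z hz
      rw [Walk.mem_support_append_iff] at hz
      rw [heq, heq₃]
      rw [Walk.mem_support_append_iff, Walk.mem_support_append_iff]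
      rcases hz with hz | hz
      · exact Or.inl (Or.inl hz)
      · rw [Walk.support_cons, List.mem_cons] at hz
        rcases hz with rfl | hz
        · exact Or.inl (Or.inl p₃.end_mem_support)
        · exact Or.inr hz

/-- From any walk we can extract an induced path with the same endpoints whose
support lies inside the support of the walk. -/
lemma exists_inducedPath {x y : V} [DecidableEq V] (w : G.Walk x y) :
    ∃ Q : InducedPath G, Q.first = x ∧ Q.last = y ∧
      ∀ z ∈ Q.walk.support, z ∈ w.support := by
  suffices h : ∀ (n : ℕ) {x y : V} (w : G.Walk x y), w.length ≤ n →
      ∃ Q : InducedPath G, Q.first = x ∧ Q.last = y ∧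
        ∀ z ∈ Q.walk.support, z ∈ w.support by
    exact h w.length w le_rfl
  intro n
  induction n with
  | zero =>
    intro x y w hlen
    have h0 : w.length = 0 := Nat.le_zero.mp hlen
    have := eq_of_length_zero w h0
    subst this
    refine ⟨⟨x, x, Walk.nil, by simp, ?_⟩, rfl, rfl, ?_⟩
    · intro a ha b hb hadj
      simp only [Walk.support_nil, List.mem_singleton] at ha hb
      subst ha; subst hb
      exact absurd rfl hadj.ne
    · intro z hz
      simp only [Walk.support_nil, List.mem_singleton] at hz
      simp [hz, Walk.start_mem_support]
  | succ n ih =>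
    intro x y w hlen
    set p := w.bypass with hpdef
    have hp : p.IsPath := Walk.bypass_isPath w
    by_cases hind : ∀ a ∈ p.support, ∀ b ∈ p.support, G.Adj a b → s(a, b) ∈ p.edges
    · exact ⟨⟨x, y, p, hp, hind⟩, rfl, rfl,
        fun z hz => Walk.support_bypass_subset w hz⟩
    · obtain ⟨w', hlt, hsub⟩ := shorten_step p hp hind
      have hle : w'.length ≤ n := by
        have h2 : p.length ≤ w.length := by
          rw [hpdef]; exact Walk.length_bypass_le w
        omega
      obtain ⟨Q, h1, h2, h3⟩ := ih w' hle
      exact ⟨Q, h1, h2, fun z hz =>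
        Walk.support_bypass_subset w (hsub z (h3 z hz))⟩

section BlockGraphTools

variable [DecidableEq V]

lemma reach_in (K : G.Subgraph) {a b : V} (q : G.Walk a b)
    (hq : ∀ x y : V, s(x, y) ∈ q.edges → K.Adj x y) (ha : a ∈ K.verts)
    (hb : b ∈ K.verts) : K.coe.Reachable ⟨a, ha⟩ ⟨b, hb⟩ := by
  induction q with
  | nil => rfl
  | cons hadj rest ih =>
    rename_i u v w'
    have hK : K.Adj u v := hq u v (by simp)
    have hv : v ∈ K.verts := K.edge_vert hK.symm
    have step : K.coe.Adj ⟨u, ha⟩ ⟨v, hv⟩ := hK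
    exact (step.reachable).trans (ih (fun x y he => hq x y (by simp [he])) hv hb)

/-- Deleting one vertex from a cycle leaves a path through all other vertices. -/
lemma cycle_del {u : V} (c : G.Walk u u) (hc : c.IsCycle) (w : V) :
    ∃ (x y : V) (τ : G.Walk x y), τ.IsPath ∧
      (∀ z ∈ τ.support, z ∈ c.support ∧ z ≠ w) ∧
      (∀ z ∈ c.support, z ≠ w → z ∈ τ.support) ∧
      (∀ e ∈ τ.edges, e ∈ c.edges) := by
  by_cases hw : w ∈ c.support
  · obtain ⟨c', hc', hsup, hedg⟩ :
        ∃ c' : G.Walk w w, c'.IsCycle ∧ (∀ z, z ∈ c'.support ↔ z ∈ c.support) ∧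
          (∀ e, e ∈ c'.edges ↔ e ∈ c.edges) := by
      refine ⟨c.rotate w hw, hc.rotate hw, ?_, fun e => ((c.rotate_edges w hw).perm).mem_iff⟩
      intro z
      have h1 : z ∈ (c.rotate w hw).support ↔ z = w ∨ z ∈ (c.rotate w hw).support.tail := by
        conv_lhs => rw [Walk.support_eq_cons]
        rw [List.mem_cons]
      have h2 : z ∈ c.support ↔ z = u ∨ z ∈ c.support.tail := by
        conv_lhs => rw [Walk.support_eq_cons]
        rw [List.mem_cons]
      have h3 : z ∈ (c.rotate w hw).support.tail ↔ z ∈ c.support.tail :=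
        ((c.support_rotate w hw).perm).mem_iff
      have hu : u ∈ c.support.tail := by
        cases c with
        | nil => exact absurd rfl hc.ne_nil
        | cons h rest => simpa using rest.end_mem_support
      have hwt : w ∈ c.support.tail := by
        rw [Walk.support_eq_cons, List.mem_cons] at hw
        rcases hw with rfl | hw
        · exact hu
        · exact hw
      rw [h1, h2, h3]
      constructor
      · rintro (rfl | hz)
        · exact Or.inr hwt
        · exact Or.inr hz
      · rintro (rfl | hz)
        · exact Or.inr hu
        · exact Or.inr hz
    clear hw
    rcases c' with _ | ⟨hadj, t⟩
    · exact absurd rfl hc'.ne_nil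
    rename_i v₂
    rw [Walk.cons_isCycle_iff] at hc'
    have ht : t.IsPath := hc'.1
    have htr : t.reverse.IsPath := by rwa [Walk.isPath_reverse_iff]
    rcases hrev : t.reverse with _ | ⟨hadj₂, t₂⟩
    · exfalso
      have : t.reverse.length = 0 := by rw [hrev]; rfl
      rw [Walk.length_reverse] at this
      have := eq_of_length_zero t (by omega)
      exact hadj.ne this.symm
    rename_i w₃
    rw [hrev, Walk.cons_isPath_iff] at htr
    have ht₂ : t₂.IsPath := htr.1
    have hwt₂ : w ∉ t₂.support := htr.2
    have hmem : ∀ z, z ∈ t.support ↔ z = w ∨ z ∈ t₂.support := by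
      intro z
      have : t.support = t.reverse.support.reverse := by
        rw [Walk.support_reverse, List.reverse_reverse]
      rw [this, hrev]
      simp [or_comm]
    have hedge₂ : ∀ e ∈ t₂.edges, e ∈ t.edges := by
      intro e he
      have : e ∈ t.reverse.edges := by rw [hrev]; simp [he]
      rwa [Walk.edges_reverse, List.mem_reverse] at this
    refine ⟨w₃, v₂, t₂, ht₂, ?_, ?_, ?_⟩
    · intro z hz
      constructor
      · rw [← hsup]
        rw [Walk.support_cons, List.mem_cons]
        exact Or.inr ((hmem z).2 (Or.inr hz))
      · rintro rfl
        exact hwt₂ hz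
    · intro z hz hzw
      rw [← hsup, Walk.support_cons, List.mem_cons] at hz
      rcases hz with rfl | hz
      · exact absurd rfl hzw
      · rcases (hmem z).1 hz with rfl | hz'
        · exact absurd rfl hzw
        · exact hz'
    · intro e he
      rw [← hedg, Walk.edges_cons, List.mem_cons]
      exact Or.inr (hedge₂ e he)
  · rcases c with _ | ⟨hadj, t⟩
    · exact absurd rfl hc.ne_nil
    rename_i v₂
    rw [Walk.cons_isCycle_iff] at hc
    refine ⟨v₂, u, t, hc.1, ?_, ?_, ?_⟩
    · intro z hz
      refine ⟨by simp [hz], ?_⟩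
      rintro rfl
      exact hw (by simp [hz])
    · intro z hz _
      rw [Walk.support_cons, List.mem_cons] at hz
      rcases hz with rfl | hz
      · exact t.end_mem_support
      · exact hz
    · intro e he
      simp [he]

lemma finite_subgraph [Finite V] : Finite G.Subgraph := by
  have : Function.Injective (fun K : G.Subgraph => (K.verts, K.Adj)) := by
    intro K₁ K₂ h
    simp only [Prod.mk.injEq] at h
    exact SimpleGraph.Subgraph.ext h.1 h.2
  exact Finite.of_injective _ this

lemma exists_block_above [Finite V] (H : G.Subgraph) (hH : SubgraphBiconnected H) :
    ∃ B : G.Subgraph, IsBlock B ∧ H ≤ B := by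
  have : Finite G.Subgraph := finite_subgraph
  have hfin : {K : G.Subgraph | SubgraphBiconnected K ∧ H ≤ K}.Finite := Set.toFinite _
  obtain ⟨B, hB, hmax⟩ : ∃ B ∈ {K : G.Subgraph | SubgraphBiconnected K ∧ H ≤ K},
      ∀ K ∈ {K : G.Subgraph | SubgraphBiconnected K ∧ H ≤ K}, id B ≤ id K → id B = id K := by
    obtain ⟨B, hBm⟩ := hfin.exists_maximal ⟨H, hH, le_rfl⟩
    exact ⟨B, hBm.1, fun K hK hle => le_antisymm hle (hBm.2 hK hle)⟩
  refine ⟨B, ⟨hB.1, ?_⟩, hB.2⟩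
  intro H' hH' hle
  exact (hmax H' ⟨hH', hB.2.trans hle⟩ hle).symm

/-- In a block graph, the vertices of any cycle are pairwise adjacent. -/
lemma cycle_clique [Finite V] (hBG : IsBlockGraph G) {u : V} {c : G.Walk u u}
    (hc : c.IsCycle) :
    ∀ x ∈ c.support, ∀ y ∈ c.support, x ≠ y → G.Adj x y := by
  have hbic : SubgraphBiconnected c.toSubgraph := by
    constructor
    · exact (Walk.toSubgraph_connected c).coe
    · intro w
      obtain ⟨x, y, τ, hτ, hτsub, hτall, hτedge⟩ := cycle_del c hc w
      set K := c.toSubgraph.deleteVerts {w} with hK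
      have hvK : ∀ z ∈ τ.support, z ∈ K.verts := by
        intro z hz
        obtain ⟨h1, h2⟩ := hτsub z hz
        rw [hK, SimpleGraph.Subgraph.deleteVerts_verts]
        exact ⟨(c.mem_verts_toSubgraph).2 h1, by simpa using h2⟩
      have hKadj : ∀ a b : V, s(a, b) ∈ τ.edges → K.Adj a b := by
        intro a b he
        have haa : a ∈ τ.support := Walk.fst_mem_support_of_mem_edges τ he
        have hbb : b ∈ τ.support := Walk.snd_mem_support_of_mem_edges τ he
        rw [hK, SimpleGraph.Subgraph.deleteVerts_adj]
        refine ⟨(c.mem_verts_toSubgraph).2 (hτsub a haa).1, by simpa using (hτsub a haa).2,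
          (c.mem_verts_toSubgraph).2 (hτsub b hbb).1, by simpa using (hτsub b hbb).2, ?_⟩
        rw [← SimpleGraph.Subgraph.mem_edgeSet, Walk.mem_edges_toSubgraph]
        exact hτedge _ he
      rw [SimpleGraph.connected_iff]
      constructor
      · rintro ⟨p, hp⟩ ⟨q, hq⟩
        have hp' : p ∈ c.support ∧ p ≠ w := by
          rw [hK, SimpleGraph.Subgraph.deleteVerts_verts] at hp
          exact ⟨(c.mem_verts_toSubgraph).1 hp.1, by simpa using hp.2⟩
        have hq' : q ∈ c.support ∧ q ≠ w := by
          rw [hK, SimpleGraph.Subgraph.deleteVerts_verts] at hq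
          exact ⟨(c.mem_verts_toSubgraph).1 hq.1, by simpa using hq.2⟩
        have hpτ : p ∈ τ.support := hτall p hp'.1 hp'.2
        have hqτ : q ∈ τ.support := hτall q hq'.1 hq'.2
        obtain ⟨m, σ₁, σ₂, heq, hm, -⟩ := split_first τ (· = p) ⟨p, hpτ, rfl⟩
        subst hm
        obtain ⟨m₂, σ₃, σ₄, heq₂, hm₂, -⟩ := split_first τ (· = q) ⟨q, hqτ, rfl⟩
        subst hm₂
        have hx : x ∈ K.verts := hvK x τ.start_mem_support
        have e₁ : ∀ a b : V, s(a, b) ∈ σ₁.edges → K.Adj a b := by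
          intro a b he
          exact hKadj a b (by rw [heq, Walk.edges_append, List.mem_append]; exact Or.inl he)
        have e₂ : ∀ a b : V, s(a, b) ∈ σ₃.edges → K.Adj a b := by
          intro a b he
          exact hKadj a b (by rw [heq₂, Walk.edges_append, List.mem_append]; exact Or.inl he)
        exact (reach_in K σ₁ e₁ hx hp).symm.trans (reach_in K σ₃ e₂ hx hq)
      · exact ⟨⟨x, hvK x τ.start_mem_support⟩⟩
  obtain ⟨B, hB, hle⟩ := exists_block_above _ hbic
  intro x hx y hy hxy
  have hxB : x ∈ B.verts := (SimpleGraph.Subgraph.verts_mono hle) ((c.mem_verts_toSubgraph).2 hx)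
  have hyB : y ∈ B.verts := (SimpleGraph.Subgraph.verts_mono hle) ((c.mem_verts_toSubgraph).2 hy)
  exact (hBG B hB x hxB y hyB hxy).adj_sub

end BlockGraphTools

/-- The key block-graph tool: two paths between the same endpoints meeting only at
those endpoints span a clique. -/
lemma clique_of_two_paths [Finite V] [DecidableEq V] (hBG : IsBlockGraph G) {α β : V}
    (hne : α ≠ β) (p q : G.Walk α β) (hp : p.IsPath) (hq : q.IsPath)
    (hint : ∀ z ∈ p.support, z ∈ q.support → z = α ∨ z = β) :
    ∀ x, (x ∈ p.support ∨ x ∈ q.support) → ∀ y, (y ∈ p.support ∨ y ∈ q.support) →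
      x ≠ y → G.Adj x y := by
  by_cases hdeg : p.length = 1 ∧ q.length = 1
  · -- both are the edge α-β
    have hadj : G.Adj α β := Walk.adj_of_mem_edges p (edge_of_length_one p hdeg.1)
    have hsup : ∀ z, (z ∈ p.support ∨ z ∈ q.support) → z = α ∨ z = β := by
      intro z hz
      have hmem : ∀ (r : G.Walk α β), r.length = 1 → z ∈ r.support → z = α ∨ z = β := by
        intro r hr hzr
        cases r with
        | nil => simp at hr
        | cons h' rest =>
          rename_i c
          rw [Walk.length_cons, Nat.add_eq_right] at hr
          cases rest with
          | nil =>
            rw [Walk.support_cons, List.mem_cons] at hzr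
            rcases hzr with rfl | hzr
            · exact Or.inl rfl
            · simp at hzr
              exact Or.inr hzr
          | cons h'' rest' => simp [Walk.length_cons] at hr
      rcases hz with hz | hz
      · exact hmem p hdeg.1 hz
      · exact hmem q hdeg.2 hz
    intro x hx y hy hxy
    rcases hsup x hx with rfl | rfl <;> rcases hsup y hy with rfl | rfl
    · exact absurd rfl hxy
    · exact hadj
    · exact hadj.symm
    · exact absurd rfl hxy
  · -- build a cycle and apply `cycle_clique`
    set C : G.Walk α α := p.append q.reverse with hC
    have hqr : q.reverse.IsPath := by rwa [Walk.isPath_reverse_iff]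
    have htl : C.support.tail = p.support.tail ++ q.reverse.support.tail := by
      rw [hC, Walk.support_append, List.tail_append_of_ne_nil (Walk.support_ne_nil p)]
    have hcyc : C.IsCycle := by
      rw [Walk.isCycle_def]
      refine ⟨⟨?_⟩, ?_, ?_⟩
      · -- trail: edges nodup
        rw [hC, Walk.edges_append]
        refine List.Nodup.append hp.isTrail.edges_nodup hqr.isTrail.edges_nodup ?_
        intro e hep heq'
        have heq2 : e ∈ q.edges := by rwa [Walk.edges_reverse, List.mem_reverse] at heq'
        induction e with
        | h a b =>
          have haab : G.Adj a b := Walk.adj_of_mem_edges p hep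
          have hap : a ∈ p.support := Walk.fst_mem_support_of_mem_edges p hep
          have hbp : b ∈ p.support := Walk.snd_mem_support_of_mem_edges p hep
          have haq : a ∈ q.support := Walk.fst_mem_support_of_mem_edges q heq2
          have hbq : b ∈ q.support := Walk.snd_mem_support_of_mem_edges q heq2
          have h1 := hint a hap haq
          have h2 := hint b hbp hbq
          have hlp : p.length = 1 := by
            rcases h1 with rfl | rfl <;> rcases h2 with rfl | rfl
            · exact absurd rfl haab.ne
            · exact length_one_of_ends_edge p hp hep
            · exact length_one_of_ends_edge p hp (by rwa [Sym2.eq_swap] at hep)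
            · exact absurd rfl haab.ne
          have hlq : q.length = 1 := by
            rcases h1 with rfl | rfl <;> rcases h2 with rfl | rfl
            · exact absurd rfl haab.ne
            · exact length_one_of_ends_edge q hq heq2
            · exact length_one_of_ends_edge q hq (by rwa [Sym2.eq_swap] at heq2)
            · exact absurd rfl haab.ne
          exact hdeg ⟨hlp, hlq⟩
      · -- not nil
        intro hnil
        have : C.length = 0 := by rw [hnil]; rfl
        rw [hC, Walk.length_append] at this
        exact hne (eq_of_length_zero p (by omega))
      · -- support tail nodup
        rw [htl]
        have h1 : p.support.tail.Nodup := by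
          have := hp.support_nodup
          rw [Walk.support_eq_cons] at this
          exact (List.nodup_cons.mp this).2
        have h2 : q.reverse.support.tail.Nodup := by
          have := hqr.support_nodup
          rw [Walk.support_eq_cons] at this
          exact (List.nodup_cons.mp this).2
        refine List.Nodup.append h1 h2 ?_
        intro z hz1 hz2
        have hzp : z ∈ p.support := List.mem_of_mem_tail hz1
        have hzq : z ∈ q.support := by
          have : z ∈ q.reverse.support := List.mem_of_mem_tail hz2
          rwa [Walk.support_reverse, List.mem_reverse] at this
        rcases hint z hzp hzq with rfl | rfl
        · have := hp.support_nodup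
          rw [Walk.support_eq_cons, List.nodup_cons] at this
          exact this.1 hz1
        · have := hqr.support_nodup
          rw [Walk.support_eq_cons, List.nodup_cons] at this
          exact this.1 hz2
    have hmemC : ∀ z, (z ∈ p.support ∨ z ∈ q.support) → z ∈ C.support := by
      intro z hz
      rw [hC, Walk.mem_support_append_iff]
      rcases hz with hz | hz
      · exact Or.inl hz
      · exact Or.inr (by rwa [Walk.support_reverse, List.mem_reverse])
    intro x hx y hy hxy
    exact cycle_clique hBG hcyc x (hmemC x hx) y (hmemC y hy) hxy

/-- A walk is *induced-on* if adjacency of support vertices forces an edge of the walk. -/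
def IndOn (w : G.Walk x y) : Prop :=
  ∀ a ∈ w.support, ∀ b ∈ w.support, G.Adj a b → s(a, b) ∈ w.edges

variable {x y : V}

lemma indOn_left {m : V} {p : G.Walk x m} {q : G.Walk m y}
    (hw : (p.append q).IsPath) (h : IndOn (p.append q)) : IndOn p := by
  intro a ha b hb hadj
  have ha' : a ∈ (p.append q).support := by rw [Walk.mem_support_append_iff]; exact Or.inl ha
  have hb' : b ∈ (p.append q).support := by rw [Walk.mem_support_append_iff]; exact Or.inl hb
  exact edge_in_left hw ha hb hadj (h a ha' b hb' hadj)

lemma indOn_right {m : V} {p : G.Walk x m} {q : G.Walk m y}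
    (hw : (p.append q).IsPath) (h : IndOn (p.append q)) : IndOn q := by
  intro a ha b hb hadj
  have ha' : a ∈ (p.append q).support := by rw [Walk.mem_support_append_iff]; exact Or.inr ha
  have hb' : b ∈ (p.append q).support := by rw [Walk.mem_support_append_iff]; exact Or.inr hb
  exact edge_in_right hw ha hb hadj (h a ha' b hb' hadj)

lemma indOn_reverse {w : G.Walk x y} (h : IndOn w) : IndOn w.reverse := by
  intro a ha b hb hadj
  rw [Walk.support_reverse, List.mem_reverse] at ha hb
  rw [Walk.edges_reverse, List.mem_reverse]
  exact h a ha b hb hadj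

lemma support_length_one {α β z : V} (r : G.Walk α β) (hr : r.length = 1)
    (hz : z ∈ r.support) : z = α ∨ z = β := by
  cases r with
  | nil => simp at hr
  | cons h' rest =>
    rename_i c
    rw [Walk.length_cons, Nat.add_eq_right] at hr
    cases rest with
    | nil =>
      rw [Walk.support_cons, List.mem_cons] at hz
      rcases hz with rfl | hz
      · exact Or.inl rfl
      · simp at hz
        exact Or.inr hz
    | cons h'' rest' => simp [Walk.length_cons] at hr

/-- Extract the sub-walk of an induced path between two of its vertices. -/
lemma seg_between [DecidableEq V] {x y : V} (w : G.Walk x y) (hw : w.IsPath)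
    (hind : IndOn w) {aa bb : V} (ha : aa ∈ w.support) (hb : bb ∈ w.support) :
    ∃ σ : G.Walk aa bb, σ.IsPath ∧ IndOn σ ∧ (∀ z ∈ σ.support, z ∈ w.support) ∧
      (∀ e ∈ σ.edges, e ∈ w.edges) := by
  obtain ⟨m, p, q, heq, hm, -⟩ := split_first w (· = aa) ⟨aa, ha, rfl⟩
  subst hm
  rw [heq] at hw hind hb ⊢
  by_cases hbq : bb ∈ q.support
  · obtain ⟨m₂, r, t, heq₂, hm₂, -⟩ := split_first q (· = bb) ⟨bb, hbq, rfl⟩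
    subst hm₂
    have hq : q.IsPath := hw.of_append_right
    have hqi : IndOn q := indOn_right hw hind
    rw [heq₂] at hq hqi
    refine ⟨r, hq.of_append_left, indOn_left hq hqi, ?_, ?_⟩
    · intro z hz
      rw [Walk.mem_support_append_iff]
      refine Or.inr ?_
      rw [heq₂, Walk.mem_support_append_iff]
      exact Or.inl hz
    · intro e he
      rw [Walk.edges_append, List.mem_append]
      refine Or.inr ?_
      rw [heq₂, Walk.edges_append, List.mem_append]
      exact Or.inl he
  · have hbp : bb ∈ p.support := by
      rw [Walk.mem_support_append_iff] at hb
      tauto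
    obtain ⟨m₃, r, t, heq₃, hm₃, -⟩ := split_first p (· = bb) ⟨bb, hbp, rfl⟩
    subst hm₃
    have hp : p.IsPath := hw.of_append_left
    have hpi : IndOn p := indOn_left hw hind
    rw [heq₃] at hp hpi
    refine ⟨t.reverse, by rw [Walk.isPath_reverse_iff]; exact hp.of_append_right,
      indOn_reverse (indOn_right hp hpi), ?_, ?_⟩
    · intro z hz
      rw [Walk.support_reverse, List.mem_reverse] at hz
      rw [Walk.mem_support_append_iff]
      refine Or.inl ?_
      rw [heq₃, Walk.mem_support_append_iff]
      exact Or.inr hz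
    · intro e he
      rw [Walk.edges_reverse, List.mem_reverse] at he
      rw [Walk.edges_append, List.mem_append]
      refine Or.inl ?_
      rw [heq₃, Walk.edges_append, List.mem_append]
      exact Or.inr he

/-- **Uniqueness of induced paths in block graphs** (one inclusion). -/
lemma uniq_subset [Finite V] [DecidableEq V] (hBG : IsBlockGraph G) :
    ∀ (n : ℕ) {x y : V} (p q : G.Walk x y), p.IsPath → q.IsPath → IndOn p → IndOn q →
      p.length + q.length ≤ n → ∀ z ∈ p.support, z ∈ q.support := by
  intro n
  induction n with
  | zero =>
    intro x y p q hp hq _ _ hlen z hz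
    have h0 : p.length = 0 := by omega
    have hxy := eq_of_length_zero p h0
    subst hxy
    cases p with
    | nil =>
      simp at hz
      subst hz
      exact q.start_mem_support
    | cons h rest => simp [Walk.length_cons] at h0
  | succ n ih =>
    intro x y p q hp hq hpi hqi hlen z hz
    by_cases hxy : x = y
    · subst hxy
      have h0 := path_loop_nil p hp
      cases p with
      | nil =>
        simp at hz
        subst hz
        exact q.start_mem_support
      | cons h rest => simp [Walk.length_cons] at h0
    by_cases hmid : ∃ m, m ∈ p.support ∧ m ∈ q.support ∧ m ≠ x ∧ m ≠ y
    · obtain ⟨m, hmp, hmq, hmx, hmy⟩ := hmid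
      obtain ⟨m1, p₁, p₂, heqp, hm1, -⟩ := split_first p (· = m) ⟨m, hmp, rfl⟩
      obtain ⟨m2, q₁, q₂, heqq, hm2, -⟩ := split_first q (· = m) ⟨m, hmq, rfl⟩
      subst hm1
      subst hm2
      rw [heqp] at hp hpi
      rw [heqq] at hq hqi
      have hp1 : p₁.IsPath := hp.of_append_left
      have hp2 : p₂.IsPath := hp.of_append_right
      have hq1 : q₁.IsPath := hq.of_append_left
      have hq2 : q₂.IsPath := hq.of_append_right
      have hp1i : IndOn p₁ := indOn_left hp hpi
      have hp2i : IndOn p₂ := indOn_right hp hpi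
      have hq1i : IndOn q₁ := indOn_left hq hqi
      have hq2i : IndOn q₂ := indOn_right hq hqi
      have hl2 : 1 ≤ p₂.length := by
        rcases Nat.eq_zero_or_pos p₂.length with h | h
        · exact absurd (eq_of_length_zero p₂ h) hmy
        · exact h
      have hl2' : 1 ≤ q₂.length := by
        rcases Nat.eq_zero_or_pos q₂.length with h | h
        · exact absurd (eq_of_length_zero q₂ h) hmy
        · exact h
      have hl1 : 1 ≤ p₁.length := by
        rcases Nat.eq_zero_or_pos p₁.length with h | h
        · exact absurd (eq_of_length_zero p₁ h).symm hmx
        · exact h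
      have hl1' : 1 ≤ q₁.length := by
        rcases Nat.eq_zero_or_pos q₁.length with h | h
        · exact absurd (eq_of_length_zero q₁ h).symm hmx
        · exact h
      have hlen' : p.length = p₁.length + p₂.length := by
        rw [heqp, Walk.length_append]
      have hlen'' : q.length = q₁.length + q₂.length := by
        rw [heqq, Walk.length_append]
      rw [heqp, Walk.mem_support_append_iff] at hz
      rw [heqq, Walk.mem_support_append_iff]
      rcases hz with hz | hz
      · exact Or.inl (ih p₁ q₁ hp1 hq1 hp1i hq1i (by omega) z hz)
      · exact Or.inr (ih p₂ q₂ hp2 hq2 hp2i hq2i (by omega) z hz)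
    · push_neg at hmid
      have hint : ∀ z ∈ p.support, z ∈ q.support → z = x ∨ z = y := by
        intro z hzp hzq
        by_contra hcon
        push_neg at hcon
        exact hcon.2 (hmid z hzp hzq hcon.1)
      have hclq := clique_of_two_paths hBG hxy p q hp hq hint
      have hplen : p.length = 1 := by
        by_contra hlp
        have h2 : 2 ≤ p.length := by
          rcases Nat.lt_or_ge p.length 2 with h | h
          · have hc : p.length = 0 ∨ p.length = 1 := by omega
            rcases hc with h0 | h1
            · exact absurd (eq_of_length_zero p h0) hxy
            · exact absurd h1 hlp
          · exact h
        -- second vertex of p gives a triangle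
        cases p with
        | nil => simp at h2
        | cons hadj rest =>
          rename_i v₂
          have hv₂ : v₂ ≠ x := by
            rintro rfl
            rw [Walk.cons_isPath_iff] at hp
            exact hp.2 rest.start_mem_support
          have hv₂y : v₂ ≠ y := by
            rintro rfl
            rw [Walk.cons_isPath_iff] at hp
            have := path_loop_nil rest hp.1
            rw [Walk.length_cons] at h2
            omega
          have hxs : x ∈ (Walk.cons hadj rest).support := Walk.start_mem_support _
          have hv₂s : v₂ ∈ (Walk.cons hadj rest).support := by simp [rest.start_mem_support]
          have hys : y ∈ (Walk.cons hadj rest).support := Walk.end_mem_support _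
          have t1 : G.Adj x v₂ := hadj
          have t2 : G.Adj v₂ y := hclq v₂ (Or.inl hv₂s) y (Or.inl hys) hv₂y
          have t3 : G.Adj x y := hclq x (Or.inl hxs) y (Or.inl hys) hxy
          exact no_triangle_edges _ hp x v₂ y (Ne.symm hv₂) hv₂y hxy
            (hpi x hxs v₂ hv₂s t1) (hpi v₂ hv₂s y hys t2) (hpi x hxs y hys t3)
      rcases support_length_one p hplen hz with rfl | rfl
      · exact q.start_mem_support
      · exact q.end_mem_support

lemma append_isPath {a m b : V} {p : G.Walk a m} {q : G.Walk m b}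
    (hp : p.IsPath) (hq : q.IsPath)
    (hint : ∀ z ∈ p.support, z ∈ q.support → z = m) : (p.append q).IsPath := by
  rw [Walk.isPath_def, Walk.support_append]
  have hq' : q.support = m :: q.support.tail := Walk.support_eq_cons q
  refine List.Nodup.append hp.support_nodup ?_ ?_
  · have := hq.support_nodup
    rw [hq', List.nodup_cons] at this
    exact this.2
  · intro z hzp hzq
    have hzq' : z ∈ q.support := by rw [hq']; exact List.mem_cons_of_mem _ hzq
    have := hint z hzp hzq'
    subst this
    have := hq.support_nodup
    rw [hq', List.nodup_cons] at this
    exact this.1 hzq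

/-- Segment extraction with endpoint control. -/
lemma seg_between' [DecidableEq V] {x y : V} (w : G.Walk x y) (hw : w.IsPath)
    (hind : IndOn w) {aa bb : V} (ha : aa ∈ w.support) (hb : bb ∈ w.support) :
    ∃ σ : G.Walk aa bb, σ.IsPath ∧ IndOn σ ∧ (∀ z ∈ σ.support, z ∈ w.support) ∧
      (∀ e ∈ σ.edges, e ∈ w.edges) ∧
      (x ∈ σ.support → x = aa ∨ x = bb) ∧ (y ∈ σ.support → y = aa ∨ y = bb) := by
  obtain ⟨m, p, q, heq, hm, -⟩ := split_first w (· = aa) ⟨aa, ha, rfl⟩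
  subst hm
  rw [heq] at hw hind hb
  by_cases hbq : bb ∈ q.support
  · obtain ⟨m₂, r, t, heq₂, hm₂, -⟩ := split_first q (· = bb) ⟨bb, hbq, rfl⟩
    subst hm₂
    have hq : q.IsPath := hw.of_append_right
    have hqi : IndOn q := indOn_right hw hind
    rw [heq₂] at hq hqi
    refine ⟨r, hq.of_append_left, indOn_left hq hqi, ?_, ?_, ?_, ?_⟩
    · intro z hz
      rw [heq, Walk.mem_support_append_iff]
      refine Or.inr ?_
      rw [heq₂, Walk.mem_support_append_iff]
      exact Or.inl hz
    · intro e he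
      rw [heq, Walk.edges_append, List.mem_append]
      refine Or.inr ?_
      rw [heq₂, Walk.edges_append, List.mem_append]
      exact Or.inl he
    · intro hx
      exact Or.inl (eq_junction hw p.start_mem_support
        (by rw [heq₂, Walk.mem_support_append_iff]; exact Or.inl hx))
    · intro hy
      refine Or.inr (eq_junction hq hy t.end_mem_support)
  · have hbp : bb ∈ p.support := by
      rw [Walk.mem_support_append_iff] at hb
      tauto
    obtain ⟨m₃, r, t, heq₃, hm₃, -⟩ := split_first p (· = bb) ⟨bb, hbp, rfl⟩
    subst hm₃
    have hp : p.IsPath := hw.of_append_left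
    have hpi : IndOn p := indOn_left hw hind
    rw [heq₃] at hp hpi
    refine ⟨t.reverse, by rw [Walk.isPath_reverse_iff]; exact hp.of_append_right,
      indOn_reverse (indOn_right hp hpi), ?_, ?_, ?_, ?_⟩
    · intro z hz
      rw [Walk.support_reverse, List.mem_reverse] at hz
      rw [heq, Walk.mem_support_append_iff]
      refine Or.inl ?_
      rw [heq₃, Walk.mem_support_append_iff]
      exact Or.inr hz
    · intro e he
      rw [Walk.edges_reverse, List.mem_reverse] at he
      rw [heq, Walk.edges_append, List.mem_append]
      refine Or.inl ?_
      rw [heq₃, Walk.edges_append, List.mem_append]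
      exact Or.inr he
    · intro hx
      rw [Walk.support_reverse, List.mem_reverse] at hx
      exact Or.inr (eq_junction hp r.start_mem_support hx)
    · intro hy
      rw [Walk.support_reverse, List.mem_reverse] at hy
      have : y ∈ p.support := by
        rw [heq₃, Walk.mem_support_append_iff]
        exact Or.inr hy
      exact Or.inl (eq_junction hw this q.end_mem_support)

/-- The first vertex of a path has a unique neighbour along the walk edges. -/
lemma first_nbr {x y : V} (w : G.Walk x y) (hw : w.IsPath) {c : V}
    (hc : s(x, c) ∈ w.edges) : ∀ {c' : V}, s(x, c') ∈ w.edges → c' = c := by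
  intro c' hc'
  cases w with
  | nil => simp at hc
  | cons hadj rest =>
    rename_i v₂
    rw [Walk.cons_isPath_iff] at hw
    have key : ∀ {d : V}, s(x, d) ∈ (Walk.cons hadj rest).edges → d = v₂ := by
      intro d hd
      rw [Walk.edges_cons, List.mem_cons] at hd
      rcases hd with hd | hd
      · rw [Sym2.eq_iff] at hd
        rcases hd with ⟨_, rfl⟩ | ⟨h1, rfl⟩
        · rfl
        · exact h1.symm ▸ rfl
      · exact absurd (Walk.fst_mem_support_of_mem_edges rest hd) hw.2
    rw [key hc', key hc]

/-- An interior vertex of a path has two distinct neighbours among its vertices. -/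
lemma interior_nbrs [DecidableEq V] {x y : V} (w : G.Walk x y) (hw : w.IsPath) {z : V}
    (hz : z ∈ w.support) (hzx : z ≠ x) (hzy : z ≠ y) :
    ∃ p₁ p₂ : V, p₁ ≠ p₂ ∧ p₁ ∈ w.support ∧ p₂ ∈ w.support ∧
      s(z, p₁) ∈ w.edges ∧ s(z, p₂) ∈ w.edges := by
  obtain ⟨m, p, q, heq, hm, -⟩ := split_first w (· = z) ⟨z, hz, rfl⟩
  subst hm
  rw [heq] at hw ⊢
  obtain ⟨v₃, hadj₂, rest₂, rfl⟩ := Walk.exists_eq_cons_of_ne hzy q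
  obtain ⟨v₁, hadj₁, rest₁, hpr⟩ := Walk.exists_eq_cons_of_ne hzx p.reverse
  have hv₁p : v₁ ∈ p.support := by
    have : v₁ ∈ p.reverse.support := by rw [hpr]; simp [rest₁.start_mem_support]
    rwa [Walk.support_reverse, List.mem_reverse] at this
  have he₁ : s(m, v₁) ∈ p.edges := by
    have : s(m, v₁) ∈ p.reverse.edges := by rw [hpr]; simp
    rwa [Walk.edges_reverse, List.mem_reverse] at this
  refine ⟨v₁, v₃, ?_, ?_, ?_, ?_, ?_⟩
  · intro hcon
    subst hcon
    have hv₁q : v₁ ∈ (Walk.cons hadj₂ rest₂).support := by simp [rest₂.start_mem_support]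
    exact hadj₁.ne (eq_junction hw hv₁p hv₁q).symm
  · rw [Walk.mem_support_append_iff]
    exact Or.inl hv₁p
  · rw [Walk.mem_support_append_iff]
    exact Or.inr (by simp [rest₂.start_mem_support])
  · rw [Walk.edges_append, List.mem_append]
    exact Or.inl he₁
  · rw [Walk.edges_append, List.mem_append]
    exact Or.inr (by simp)

/-- Two induced paths with the same support have the same endpoint pair. -/
lemma ends_det [DecidableEq V] {a₁ b₁ a₂ b₂ : V} (w₁ : G.Walk a₁ b₁) (w₂ : G.Walk a₂ b₂)
    (h₁ : w₁.IsPath) (h₂ : w₂.IsPath) (hi₁ : IndOn w₁) (hi₂ : IndOn w₂)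
    (hsup : ∀ z, z ∈ w₁.support ↔ z ∈ w₂.support) :
    (a₂ = a₁ ∨ a₂ = b₁) ∧ (b₂ = a₁ ∨ b₂ = b₁) := by
  have key : ∀ {z : V}, z ∈ w₁.support → (∀ {c : V}, s(z, c) ∈ w₂.edges →
      ∀ {c' : V}, s(z, c') ∈ w₂.edges → c' = c) → z = a₁ ∨ z = b₁ := by
    intro z hzsup huniq
    by_contra hcon
    push_neg at hcon
    obtain ⟨p₁, p₂, hne, hp₁, hp₂, he₁, he₂⟩ := interior_nbrs w₁ h₁ hzsup hcon.1 hcon.2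
    have a₁' : G.Adj z p₁ := Walk.adj_of_mem_edges _ he₁
    have a₂' : G.Adj z p₂ := Walk.adj_of_mem_edges _ he₂
    have e₁' : s(z, p₁) ∈ w₂.edges :=
      hi₂ z ((hsup z).1 hzsup) p₁ ((hsup p₁).1 hp₁) a₁'
    have e₂' : s(z, p₂) ∈ w₂.edges :=
      hi₂ z ((hsup z).1 hzsup) p₂ ((hsup p₂).1 hp₂) a₂'
    exact hne (huniq e₁' e₂').symm
  constructor
  · refine key ((hsup a₂).2 w₂.start_mem_support) ?_
    intro c hc c' hc'
    exact first_nbr w₂ h₂ hc hc'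
  · refine key ((hsup b₂).2 w₂.end_mem_support) ?_
    intro c hc c' hc'
    have hc2 : s(b₂, c) ∈ w₂.reverse.edges := by
      rw [Walk.edges_reverse, List.mem_reverse]; exact hc
    have hc2' : s(b₂, c') ∈ w₂.reverse.edges := by
      rw [Walk.edges_reverse, List.mem_reverse]; exact hc'
    exact first_nbr w₂.reverse (by rwa [Walk.isPath_reverse_iff]) hc2 hc2'


lemma support_length_zero {a b : V} (w : G.Walk a b) (h : w.length = 0) :
    ∀ z ∈ w.support, z = a := by
  cases w with
  | nil => intro z hz; simpa using hz
  | cons h' p => simp [Walk.length_cons] at h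

lemma edges_length_zero {a b : V} (w : G.Walk a b) (h : w.length = 0) : w.edges = [] := by
  cases w with
  | nil => rfl
  | cons h' p => simp [Walk.length_cons] at h

section Family

variable {ℓ : ℕ} {P : Fin ℓ → InducedPath G} {φ : Fin ℓ → Fin 2 → V}

lemma mem_vs {γ : InducedPath G} {z : V} : z ∈ γ.vertexSet ↔ z ∈ γ.walk.support := Iff.rfl

lemma mem_es {γ : InducedPath G} {e : Sym2 V} : e ∈ γ.edgeSet ↔ e ∈ γ.walk.edges := Iff.rfl

lemma notContains_sub {γ Q : InducedPath G}
    (hγ : ∀ k, ¬ PathContains G γ (P k))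
    (hv : ∀ z ∈ Q.walk.support, z ∈ γ.walk.support)
    (he : ∀ e ∈ Q.walk.edges, e ∈ γ.walk.edges) :
    ∀ k, ¬ PathContains G Q (P k) := by
  intro k hc
  exact hγ k ⟨fun z hz => hv z (hc.1 hz), fun e hee => he e (hc.2 hee)⟩

lemma inter_eq_iff {γ D : InducedPath G} {x₀ : V}
    (h : γ.vertexSet ∩ D.vertexSet = {x₀}) :
    (x₀ ∈ γ.walk.support ∧ x₀ ∈ D.vertexSet) ∧
      ∀ z, z ∈ γ.walk.support → z ∈ D.vertexSet → z = x₀ := by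
  constructor
  · have : x₀ ∈ γ.vertexSet ∩ D.vertexSet := by rw [h]; rfl
    exact ⟨this.1, this.2⟩
  · intro z hz hz'
    have : z ∈ γ.vertexSet ∩ D.vertexSet := ⟨hz, hz'⟩
    rwa [h] at this

/-- If a path of the family meets something only in one vertex but cannot be contained,
it has at least two vertices. -/
lemma family_two {γ : InducedPath G} {i : Fin ℓ} {x₀ : V}
    (hx₀ : x₀ ∈ γ.walk.support) (hx₀' : x₀ ∈ (P i).vertexSet)
    (hγ : ∀ k, ¬ PathContains G γ (P k)) : (P i).first ≠ (P i).last := by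
  intro heq
  have h0 : (P i).walk.length = 0 := by
    have hcopy := path_loop_nil ((P i).walk.copy rfl heq.symm)
      (by rw [Walk.isPath_copy]; exact (P i).isPath)
    rwa [Walk.length_copy] at hcopy
  refine hγ i ⟨?_, ?_⟩
  · intro z hz
    rw [mem_vs] at hz ⊢
    have hz1 := support_length_zero _ h0 z hz
    have hz2 := support_length_zero _ h0 x₀ hx₀'
    rw [hz1, ← hz2]
    exact hx₀
  · intro e he
    rw [mem_es, edges_length_zero _ h0] at he
    simp at he

lemma orient_ne {i : Fin ℓ} (horient : ∀ i, IsOrientation G (P i) (φ i))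
    (hne : (P i).first ≠ (P i).last) :
    φ i 0 ≠ φ i 1 ∧
      (∀ z, (z = φ i 0 ∨ z = φ i 1) ↔ (z = (P i).first ∨ z = (P i).last)) := by
  have hr := horient i
  rw [IsOrientation] at hr
  have hiff : ∀ z, (z = φ i 0 ∨ z = φ i 1) ↔ (z = (P i).first ∨ z = (P i).last) := by
    intro z
    have := Set.ext_iff.mp hr z
    simp only [Set.mem_range, InducedPath.boundary, Set.mem_insert_iff,
      Set.mem_singleton_iff] at this
    rw [← this]
    constructor
    · rintro (rfl | rfl)
      · exact ⟨0, rfl⟩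
      · exact ⟨1, rfl⟩
    · rintro ⟨k, rfl⟩
      fin_cases k
      · exact Or.inl rfl
      · exact Or.inr rfl
  refine ⟨?_, hiff⟩
  intro heq
  have h1 : (P i).first = φ i 0 ∨ (P i).first = φ i 1 := (hiff _).2 (Or.inl rfl)
  have h2 : (P i).last = φ i 0 ∨ (P i).last = φ i 1 := (hiff _).2 (Or.inr rfl)
  apply hne
  rcases h1 with h1 | h1 <;> rcases h2 with h2 | h2 <;>
    first
      | exact h1.trans h2.symm
      | (rw [h1, h2, heq]) | (rw [h1, h2, ← heq])

lemma phi_mem {i : Fin ℓ} (horient : ∀ i, IsOrientation G (P i) (φ i)) (k : Fin 2) :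
    φ i k ∈ (P i).vertexSet := by
  have hr := horient i
  rw [IsOrientation] at hr
  have : φ i k ∈ Set.range (φ i) := ⟨k, rfl⟩
  rw [hr] at this
  rcases this with h | h <;> rw [mem_vs, h]
  · exact (P i).walk.start_mem_support
  · exact (P i).walk.end_mem_support

lemma mem_interior_of {i : Fin ℓ} (horient : ∀ i, IsOrientation G (P i) (φ i))
    (hne : (P i).first ≠ (P i).last) {z : V} (hz : z ∈ (P i).vertexSet)
    (h0 : z ≠ φ i 0) (h1 : z ≠ φ i 1) : z ∈ (P i).interior := by
  refine ⟨hz, ?_⟩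
  intro hb
  have hb' : z = (P i).first ∨ z = (P i).last := by
    simpa [InducedPath.boundary] using hb
  have := ((orient_ne horient hne).2 z).2 hb'
  tauto

/-- An oriented copy of a family path, as a bare walk from `φ i 0` to `φ i 1`. -/
lemma orient_walk {i : Fin ℓ} (horient : ∀ i, IsOrientation G (P i) (φ i))
    (hne : (P i).first ≠ (P i).last) :
    ∃ w : G.Walk (φ i 0) (φ i 1), w.IsPath ∧ IndOn w ∧
      (∀ z, z ∈ w.support ↔ z ∈ (P i).vertexSet) ∧
      (∀ e ∈ w.edges, e ∈ (P i).walk.edges) := by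
  have h0 : (φ i 0 = (P i).first ∨ φ i 0 = (P i).last) :=
    ((orient_ne horient hne).2 _).1 (Or.inl rfl)
  have h1 : (φ i 1 = (P i).first ∨ φ i 1 = (P i).last) :=
    ((orient_ne horient hne).2 _).1 (Or.inr rfl)
  have hne01 := (orient_ne horient hne).1
  rcases h0 with h0 | h0
  · have h1' : φ i 1 = (P i).last := by
      rcases h1 with h1 | h1
      · exact absurd (h0.trans h1.symm) hne01
      · exact h1
    refine ⟨(P i).walk.copy h0.symm h1'.symm, ?_, ?_, ?_, ?_⟩
    · rw [Walk.isPath_copy]; exact (P i).isPath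
    · intro a ha b hb hadj
      rw [Walk.support_copy] at ha hb
      rw [Walk.edges_copy]
      exact (P i).induced a ha b hb hadj
    · intro z
      rw [Walk.support_copy]
      exact Iff.rfl
    · intro e he
      rwa [Walk.edges_copy] at he
  · have h1' : φ i 1 = (P i).first := by
      rcases h1 with h1 | h1
      · exact h1
      · exact absurd (h0.trans h1.symm) hne01
    refine ⟨(P i).walk.reverse.copy h0.symm h1'.symm, ?_, ?_, ?_, ?_⟩
    · rw [Walk.isPath_copy, Walk.isPath_reverse_iff]; exact (P i).isPath
    · intro a ha b hb hadj
      rw [Walk.support_copy, Walk.support_reverse, List.mem_reverse] at ha hb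
      rw [Walk.edges_copy, Walk.edges_reverse, List.mem_reverse]
      exact (P i).induced a ha b hb hadj
    · intro z
      rw [Walk.support_copy, Walk.support_reverse, List.mem_reverse]
      exact Iff.rfl
    · intro e he
      rw [Walk.edges_copy, Walk.edges_reverse, List.mem_reverse] at he
      exact he

lemma mem_famVerts {i : Fin ℓ} {z : V} (hz : z ∈ (P i).vertexSet) :
    z ∈ famVerts G P := Set.mem_iUnion.2 ⟨i, hz⟩

end Family

lemma inter_eq_single {Q : InducedPath G} {S : Set V} {q : V}
    (h1 : q ∈ Q.walk.support) (h2 : q ∈ S)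
    (h3 : ∀ z ∈ Q.walk.support, z ∈ S → z = q) : Q.vertexSet ∩ S = {q} := by
  ext z
  constructor
  · rintro ⟨hz1, hz2⟩
    exact h3 z hz1 hz2
  · rintro rfl
    exact ⟨h1, h2⟩

lemma inter_eq_empty {Q : InducedPath G} {S : Set V}
    (h : ∀ z ∈ Q.walk.support, z ∈ S → False) : Q.vertexSet ∩ S = ∅ := by
  ext z
  simp only [Set.mem_inter_iff, Set.mem_empty_iff_false, iff_false, not_and]
  exact fun hz1 hz2 => h z hz1 hz2


section BigLemmas

variable [Fintype V] [DecidableEq V] {ℓ : ℕ} {P : Fin ℓ → InducedPath G}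
  {φ : Fin ℓ → Fin 2 → V}

/-- **Machinery lemma**: two meeting strands in opposite directions between the same
two paths are impossible. -/
lemma lemM (hBG : IsBlockGraph G) (hdisj : PairwiseVertexDisjoint G P)
    (horient : ∀ i, IsOrientation G (P i) (φ i)) (hforb : ¬ HasForbidden G P)
    {a b : Fin ℓ} {γ₁ γ₂ : InducedPath G}
    (h₁ : IsStrand G P φ a b γ₁) (h₂ : IsStrand G P φ b a γ₂)
    (hmeet : (γ₁.vertexSet ∩ γ₂.vertexSet).Nonempty) : False := by
  classical
  obtain ⟨hab, hind₁, hx₀s', hx₁t, hiA, hiB₁, hnc₁⟩ := h₁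
  obtain ⟨hba, hind₂, hy₀t', hy₁s, hiB₂, hiA₂, hnc₂⟩ := h₂
  obtain ⟨⟨hx₀γ, hx₀A⟩, hA₁⟩ := inter_eq_iff hiA
  obtain ⟨⟨hx₁γ, hx₁B⟩, hB₁⟩ := inter_eq_iff hiB₁
  obtain ⟨⟨hy₀γ, hy₀B⟩, hB₂⟩ := inter_eq_iff hiB₂
  obtain ⟨⟨hy₁γ, hy₁A⟩, hA₂⟩ := inter_eq_iff hiA₂
  obtain ⟨m0, hm0₁, hm0₂⟩ := hmeet
  rw [mem_vs] at hm0₁ hm0₂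
  have hAne : (P a).first ≠ (P a).last := family_two hx₀γ hx₀A hnc₁
  have hBne : (P b).first ≠ (P b).last := family_two hx₁γ hx₁B hnc₁
  have hφa := (orient_ne horient hAne).1
  have hφb := (orient_ne horient hBne).1
  obtain ⟨wA, hwAp, hwAi, hwAsup, hwAe⟩ := orient_walk horient hAne
  obtain ⟨wB, hwBp, hwBi, hwBsup, hwBe⟩ := orient_walk horient hBne
  have hABdisj := hdisj a b hab
  by_cases hxy : γ₁.first = γ₂.last
  · -- case (i)
    have hx₀int : γ₁.first ∈ (P a).interior :=
      mem_interior_of horient hAne hx₀A (hxy ▸ hy₁s) hx₀s'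
    by_cases hx₁' : γ₁.last ≠ φ b 1
    · -- γ₁ is an internal strand from a to b
      exact hforb (Or.inl ⟨a, b, γ₁, hab, hind₁, hx₀int,
        mem_interior_of horient hBne hx₁B hx₁t hx₁', hiA, hiB₁, hnc₁⟩)
    by_cases hy₀' : γ₂.first ≠ φ b 0
    · exact hforb (Or.inl ⟨b, a, γ₂, Ne.symm hab, hind₂,
        mem_interior_of horient hBne hy₀B hy₀' hy₀t', hxy ▸ hx₀int, hiB₂, hiA₂, hnc₂⟩)
    push_neg at hx₁' hy₀'
    -- last meet along γ₁
    obtain ⟨z, f, g, hsplit, hz₂, hgm⟩ :=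
      split_last γ₁.walk (· ∈ γ₂.walk.support) ⟨m0, hm0₁, hm0₂⟩
    have hz₁ : z ∈ γ₁.walk.support := by
      rw [hsplit, Walk.mem_support_append_iff]; exact Or.inl f.end_mem_support
    have hγ₁p := γ₁.isPath
    rw [hsplit] at hγ₁p
    have hfsub : ∀ w ∈ f.support, w ∈ γ₁.walk.support := by
      intro w hw; rw [hsplit, Walk.mem_support_append_iff]; exact Or.inl hw
    have hgsub : ∀ w ∈ g.support, w ∈ γ₁.walk.support := by
      intro w hw; rw [hsplit, Walk.mem_support_append_iff]; exact Or.inr hw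
    have hzB : z ∉ (P b).vertexSet := by
      intro hzB
      have e1 : z = γ₁.last := hB₁ z hz₁ hzB
      have e2 : z = γ₂.first := hB₂ z hz₂ hzB
      exact hφb ((hy₀'.symm.trans e2.symm).trans (e1.trans hx₁'))
    have hzx₁ : z ≠ γ₁.last := fun h => hzB (h ▸ hx₁B)
    have hzy₀ : z ≠ γ₂.first := fun h => hzB (h ▸ hy₀B)
    obtain ⟨σ, hσp, hσi, hσsub, hσe, -, -⟩ :=
      seg_between' γ₂.walk γ₂.isPath γ₂.induced hz₂ γ₂.walk.start_mem_support
    have hwB'' : ∃ w : G.Walk γ₂.first γ₁.last, w.IsPath ∧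
        (∀ u, u ∈ w.support ↔ u ∈ (P b).vertexSet) := by
      refine ⟨wB.copy hy₀'.symm hx₁'.symm, ?_, ?_⟩
      · rw [Walk.isPath_copy]; exact hwBp
      · intro u; rw [Walk.support_copy]; exact hwBsup u
    obtain ⟨wB'', hwB''p, hwB''sup⟩ := hwB''
    have hq : (σ.append wB'').IsPath := by
      refine append_isPath hσp hwB''p ?_
      intro u hu hu'
      exact hB₂ u (hσsub u hu) ((hwB''sup u).1 hu')
    have hg : g.IsPath := hγ₁p.of_append_right
    have hclq := clique_of_two_paths hBG hzx₁ g (σ.append wB'') hg hq ?_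
    swap
    · intro u hu hu'
      rw [Walk.mem_support_append_iff] at hu'
      rcases hu' with hu' | hu'
      · exact Or.inl (hgm u hu (hσsub u hu'))
      · exact Or.inr (hB₁ u (hgsub u hu) ((hwB''sup u).1 hu'))
    have hadj1 : G.Adj z γ₁.last :=
      hclq z (Or.inl g.start_mem_support) γ₁.last (Or.inl g.end_mem_support) hzx₁
    have hadj2 : G.Adj z γ₂.first := by
      refine hclq z (Or.inl g.start_mem_support) γ₂.first ?_ hzy₀
      refine Or.inr ?_
      rw [Walk.mem_support_append_iff]
      exact Or.inl σ.end_mem_support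
    -- internal fork from a to b
    have hγ₁i : IndOn (f.append g) := by
      have h := γ₁.induced
      rw [hsplit] at h
      exact h
    set QF : InducedPath G := ⟨γ₁.first, z, f, hγ₁p.of_append_left, indOn_left hγ₁p hγ₁i⟩
      with hQF
    have hx₁f : γ₁.last ∉ f.support := by
      intro hcon
      exact hzx₁ (eq_junction hγ₁p hcon g.end_mem_support).symm
    refine hforb (Or.inr (Or.inl ⟨a, b, QF, γ₂.first, γ₁.last, hab, ?_, hx₀int, ?_, ?_,
      hy₀B, hx₁B, ?_, hadj2, hadj1, ?_⟩))
    · intro u hu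
      rw [mem_vs] at hu
      exact hind₁ (hfsub u hu)
    · exact inter_eq_single f.start_mem_support hx₀A
        (fun u hu hu' => hA₁ u (hfsub u hu) hu')
    · refine inter_eq_empty ?_
      intro u hu hu'
      exact hx₁f ((hB₁ u (hfsub u hu) hu') ▸ hu)
    · rw [hy₀', hx₁']
      exact hφb
    · refine notContains_sub hnc₁ hfsub ?_
      intro e he
      rw [hsplit, Walk.edges_append, List.mem_append]
      exact Or.inl he
  · -- x₀ ≠ y₁
    by_cases hmB : ∃ m, m ∈ γ₁.walk.support ∧ m ∈ γ₂.walk.support ∧ m ∈ (P b).vertexSet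
    · -- case (ii)
      obtain ⟨m, hm₁, hm₂, hmB'⟩ := hmB
      have hx₁y₀ : γ₁.last = γ₂.first := (hB₁ m hm₁ hmB').symm.trans (hB₂ m hm₂ hmB')
      have hwint : γ₁.last ∈ (P b).interior :=
        mem_interior_of horient hBne hx₁B hx₁t (hx₁y₀ ▸ hy₀t')
      by_cases hx₀' : γ₁.first ≠ φ a 0
      · exact hforb (Or.inl ⟨a, b, γ₁, hab, hind₁,
          mem_interior_of horient hAne hx₀A hx₀' hx₀s', hwint, hiA, hiB₁, hnc₁⟩)
      by_cases hy₁' : γ₂.last ≠ φ a 1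
      · exact hforb (Or.inl ⟨b, a, γ₂, Ne.symm hab, hind₂, hx₁y₀ ▸ hwint,
          mem_interior_of horient hAne hy₁A hy₁s hy₁', hiB₂, hiA₂, hnc₂⟩)
      push_neg at hx₀' hy₁'
      -- first meet along γ₁
      obtain ⟨z, f, g, hsplit, hz₂, hfm⟩ :=
        split_first γ₁.walk (· ∈ γ₂.walk.support) ⟨m0, hm0₁, hm0₂⟩
      have hz₁ : z ∈ γ₁.walk.support := by
        rw [hsplit, Walk.mem_support_append_iff]; exact Or.inl f.end_mem_support
      have hγ₁p := γ₁.isPath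
      rw [hsplit] at hγ₁p
      have hfsub : ∀ w ∈ f.support, w ∈ γ₁.walk.support := by
        intro w hw; rw [hsplit, Walk.mem_support_append_iff]; exact Or.inl hw
      have hzA : z ∉ (P a).vertexSet := by
        intro hzA
        exact hxy (((hA₁ z hz₁ hzA).symm.trans (hA₂ z hz₂ hzA)) ▸ rfl)
      have hzx₀ : z ≠ γ₁.first := fun h => hzA (h ▸ hx₀A)
      have hzy₁ : z ≠ γ₂.last := fun h => hzA (h ▸ hy₁A)
      obtain ⟨σ, hσp, hσi, hσsub, hσe, -, -⟩ :=
        seg_between' γ₂.walk γ₂.isPath γ₂.induced hz₂ γ₂.walk.end_mem_support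
      have hwA'' : ∃ w : G.Walk γ₁.first γ₂.last, w.IsPath ∧
          (∀ u, u ∈ w.support ↔ u ∈ (P a).vertexSet) := by
        refine ⟨wA.copy hx₀'.symm hy₁'.symm, ?_, ?_⟩
        · rw [Walk.isPath_copy]; exact hwAp
        · intro u; rw [Walk.support_copy]; exact hwAsup u
      obtain ⟨wA'', hwA''p, hwA''sup⟩ := hwA''
      have hq : (wA''.append σ.reverse).IsPath := by
        refine append_isPath hwA''p (by rwa [Walk.isPath_reverse_iff]) ?_
        intro u hu hu'
        rw [Walk.support_reverse, List.mem_reverse] at hu'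
        exact hA₂ u (hσsub u hu') ((hwA''sup u).1 hu)
      have hf : f.IsPath := hγ₁p.of_append_left
      have hclq := clique_of_two_paths hBG hzx₀.symm f (wA''.append σ.reverse) hf hq ?_
      swap
      · intro u hu hu'
        rw [Walk.mem_support_append_iff] at hu'
        rcases hu' with hu' | hu'
        · exact Or.inl (hA₁ u (hfsub u hu) ((hwA''sup u).1 hu'))
        · rw [Walk.support_reverse, List.mem_reverse] at hu'
          exact Or.inr (hfm u hu (hσsub u hu'))
      have hadj1 : G.Adj z γ₁.first :=
        (hclq γ₁.first (Or.inl f.start_mem_support) z (Or.inl f.end_mem_support) hzx₀.symm).symm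
      have hadj2 : G.Adj z γ₂.last := by
        refine hclq z (Or.inl f.end_mem_support) γ₂.last ?_ hzy₁
        refine Or.inr ?_
        rw [Walk.mem_support_append_iff]
        exact Or.inl wA''.end_mem_support
      -- internal fork from b to a, along the prefix of γ₂ up to z
      obtain ⟨z', τ, ρ, hsplit₂, hz'eq, -⟩ := split_first γ₂.walk (· = z) ⟨z, hz₂, rfl⟩
      subst hz'eq
      have hγ₂p := γ₂.isPath
      rw [hsplit₂] at hγ₂p
      have hτsub : ∀ w ∈ τ.support, w ∈ γ₂.walk.support := by
        intro w hw; rw [hsplit₂, Walk.mem_support_append_iff]; exact Or.inl hw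
      have hγ₂i : IndOn (τ.append ρ) := by
        have h := γ₂.induced
        rw [hsplit₂] at h
        exact h
      set QF : InducedPath G := ⟨γ₂.first, z', τ, hγ₂p.of_append_left,
        indOn_left hγ₂p hγ₂i⟩ with hQF
      have hy₁τ : γ₂.last ∉ τ.support := by
        intro hcon
        exact hzy₁ (eq_junction hγ₂p hcon ρ.end_mem_support).symm
      refine hforb (Or.inr (Or.inl ⟨b, a, QF, γ₁.first, γ₂.last, Ne.symm hab, ?_,
        hx₁y₀ ▸ hwint, ?_, ?_, hx₀A, hy₁A, hxy, hadj1, hadj2, ?_⟩))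
      · intro u hu
        rw [mem_vs] at hu
        exact hind₂ (hτsub u hu)
      · exact inter_eq_single τ.start_mem_support hy₀B
          (fun u hu hu' => hB₂ u (hτsub u hu) hu')
      · refine inter_eq_empty ?_
        intro u hu hu'
        exact hy₁τ ((hA₂ u (hτsub u hu) hu') ▸ hu)
      · refine notContains_sub hnc₂ hτsub ?_
        intro e he
        rw [hsplit₂, Walk.edges_append, List.mem_append]
        exact Or.inl he
    · -- case (iii)
      push_neg at hmB
      have hx₁y₀ : γ₁.last ≠ γ₂.first := by
        intro h
        refine hmB γ₁.last (γ₁.walk.end_mem_support) ?_ hx₁B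
        rw [h]
        exact γ₂.walk.start_mem_support
      -- first meet along γ₁
      obtain ⟨z, f, g, hsplit, hz₂, hfm⟩ :=
        split_first γ₁.walk (· ∈ γ₂.walk.support) ⟨m0, hm0₁, hm0₂⟩
      have hz₁ : z ∈ γ₁.walk.support := by
        rw [hsplit, Walk.mem_support_append_iff]; exact Or.inl f.end_mem_support
      have hγ₁p := γ₁.isPath
      rw [hsplit] at hγ₁p
      have hfsub : ∀ w ∈ f.support, w ∈ γ₁.walk.support := by
        intro w hw; rw [hsplit, Walk.mem_support_append_iff]; exact Or.inl hw
      have hzA : z ∉ (P a).vertexSet := fun hzA =>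
        hxy (((hA₁ z hz₁ hzA).symm.trans (hA₂ z hz₂ hzA)) ▸ rfl)
      have hzB : z ∉ (P b).vertexSet := fun hzB => hmB z hz₁ hz₂ hzB
      have hzx₀ : z ≠ γ₁.first := fun h => hzA (h ▸ hx₀A)
      have hzy₁ : z ≠ γ₂.last := fun h => hzA (h ▸ hy₁A)
      have hzx₁ : z ≠ γ₁.last := fun h => hzB (h ▸ hx₁B)
      have hzy₀ : z ≠ γ₂.first := fun h => hzB (h ▸ hy₀B)
      -- cycle 1 : adjacency of z with x₀ and y₁
      have hx₀wA : γ₁.first ∈ wA.support := (hwAsup _).2 hx₀A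
      have hy₁wA : γ₂.last ∈ wA.support := (hwAsup _).2 hy₁A
      obtain ⟨σA, hσAp, hσAi, hσAsub, hσAe, -, -⟩ :=
        seg_between' wA hwAp hwAi hx₀wA hy₁wA
      obtain ⟨σ₂, hσ₂p, hσ₂i, hσ₂sub, hσ₂e, -, -⟩ :=
        seg_between' γ₂.walk γ₂.isPath γ₂.induced hz₂ γ₂.walk.end_mem_support
      have hq : (σA.append σ₂.reverse).IsPath := by
        refine append_isPath hσAp (by rwa [Walk.isPath_reverse_iff]) ?_
        intro u hu hu'
        rw [Walk.support_reverse, List.mem_reverse] at hu'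
        exact hA₂ u (hσ₂sub u hu') ((hwAsup u).1 (hσAsub u hu))
      have hf : f.IsPath := hγ₁p.of_append_left
      have hclq := clique_of_two_paths hBG hzx₀.symm f (σA.append σ₂.reverse) hf hq ?_
      swap
      · intro u hu hu'
        rw [Walk.mem_support_append_iff] at hu'
        rcases hu' with hu' | hu'
        · exact Or.inl (hA₁ u (hfsub u hu) ((hwAsup u).1 (hσAsub u hu')))
        · rw [Walk.support_reverse, List.mem_reverse] at hu'
          exact Or.inr (hfm u hu (hσ₂sub u hu'))
      have hadjzx₀ : G.Adj z γ₁.first :=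
        (hclq γ₁.first (Or.inl f.start_mem_support) z (Or.inl f.end_mem_support) hzx₀.symm).symm
      have hadjzy₁ : G.Adj z γ₂.last := by
        refine hclq z (Or.inl f.end_mem_support) γ₂.last ?_ hzy₁
        refine Or.inr ?_
        rw [Walk.mem_support_append_iff]
        exact Or.inl σA.end_mem_support
      -- cycle 2 : adjacency of z₂ with y₀ and x₁
      obtain ⟨z₂, f₂, g₂, hsplit₂, hz₂₁, hfm₂⟩ :=
        split_first γ₂.walk (· ∈ γ₁.walk.support) ⟨m0, hm0₂, hm0₁⟩
      have hz₂₂ : z₂ ∈ γ₂.walk.support := by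
        rw [hsplit₂, Walk.mem_support_append_iff]; exact Or.inl f₂.end_mem_support
      have hγ₂p := γ₂.isPath
      rw [hsplit₂] at hγ₂p
      have hf₂sub : ∀ w ∈ f₂.support, w ∈ γ₂.walk.support := by
        intro w hw; rw [hsplit₂, Walk.mem_support_append_iff]; exact Or.inl hw
      have hz₂A : z₂ ∉ (P a).vertexSet := fun hzA =>
        hxy (((hA₁ z₂ hz₂₁ hzA).symm.trans (hA₂ z₂ hz₂₂ hzA)) ▸ rfl)
      have hz₂B : z₂ ∉ (P b).vertexSet := fun hzB => hmB z₂ hz₂₁ hz₂₂ hzB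
      have hz₂y₀ : z₂ ≠ γ₂.first := fun h => hz₂B (h ▸ hy₀B)
      have hz₂x₁ : z₂ ≠ γ₁.last := fun h => hz₂B (h ▸ hx₁B)
      have hy₀wB : γ₂.first ∈ wB.support := (hwBsup _).2 hy₀B
      have hx₁wB : γ₁.last ∈ wB.support := (hwBsup _).2 hx₁B
      obtain ⟨σB, hσBp, hσBi, hσBsub, hσBe, -, -⟩ :=
        seg_between' wB hwBp hwBi hy₀wB hx₁wB
      obtain ⟨σ₃, hσ₃p, hσ₃i, hσ₃sub, hσ₃e, -, -⟩ :=
        seg_between' γ₁.walk γ₁.isPath γ₁.induced hz₂₁ γ₁.walk.end_mem_support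
      have hq₂ : (σB.append σ₃.reverse).IsPath := by
        refine append_isPath hσBp (by rwa [Walk.isPath_reverse_iff]) ?_
        intro u hu hu'
        rw [Walk.support_reverse, List.mem_reverse] at hu'
        exact hB₁ u (hσ₃sub u hu') ((hwBsup u).1 (hσBsub u hu))
      have hf₂ : f₂.IsPath := hγ₂p.of_append_left
      have hclq₂ := clique_of_two_paths hBG hz₂y₀.symm f₂ (σB.append σ₃.reverse) hf₂ hq₂ ?_
      swap
      · intro u hu hu'
        rw [Walk.mem_support_append_iff] at hu'
        rcases hu' with hu' | hu'
        · exact Or.inl (hB₂ u (hf₂sub u hu) ((hwBsup u).1 (hσBsub u hu')))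
        · rw [Walk.support_reverse, List.mem_reverse] at hu'
          exact Or.inr (hfm₂ u hu (hσ₃sub u hu'))
      have hadjz₂y₀ : G.Adj z₂ γ₂.first :=
        (hclq₂ γ₂.first (Or.inl f₂.start_mem_support) z₂
          (Or.inl f₂.end_mem_support) hz₂y₀.symm).symm
      have hadjz₂x₁ : G.Adj z₂ γ₁.last := by
        refine hclq₂ z₂ (Or.inl f₂.end_mem_support) γ₁.last ?_ hz₂x₁
        refine Or.inr ?_
        rw [Walk.mem_support_append_iff]
        exact Or.inl σB.end_mem_support
      -- double fork between a and b
      obtain ⟨σQ, hσQp, hσQi, hσQsub, hσQe, hσQx₀, hσQx₁⟩ :=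
        seg_between' γ₁.walk γ₁.isPath γ₁.induced hz₁ hz₂₁
      set QF : InducedPath G := ⟨z, z₂, σQ, hσQp, hσQi⟩ with hQF
      have hx₀σQ : γ₁.first ∉ σQ.support := by
        intro hcon
        rcases hσQx₀ hcon with h | h
        · exact hzA (h ▸ hx₀A)
        · exact hz₂A (h ▸ hx₀A)
      have hx₁σQ : γ₁.last ∉ σQ.support := by
        intro hcon
        rcases hσQx₁ hcon with h | h
        · exact hzB (h ▸ hx₁B)
        · exact hz₂B (h ▸ hx₁B)
      refine hforb (Or.inr (Or.inr (Or.inl ⟨a, b, QF, γ₁.first, γ₂.last, γ₁.last, γ₂.first,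
        hab, ?_, ?_, ?_, hx₀A, hy₁A, hxy, hx₁B, hy₀B, hx₁y₀, hadjzx₀, hadjzy₁,
        hadjz₂x₁, hadjz₂y₀, ?_⟩)))
      · intro u hu
        rw [mem_vs] at hu
        exact hind₁ (hσQsub u hu)
      · refine inter_eq_empty ?_
        intro u hu hu'
        exact hx₀σQ ((hA₁ u (hσQsub u hu) hu') ▸ hu)
      · refine inter_eq_empty ?_
        intro u hu hu'
        exact hx₁σQ ((hB₁ u (hσQsub u hu) hu') ▸ hu)
      · exact notContains_sub hnc₁ hσQsub hσQe

/-- If all vertices of a family path lie on an induced path that cannot contain any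
family path, we get a contradiction. -/
lemma contains_of_verts {k : Fin ℓ} {γ : InducedPath G}
    (hnc : ∀ j, ¬ PathContains G γ (P j))
    (h : ∀ z ∈ (P k).vertexSet, z ∈ γ.walk.support) : False := by
  refine hnc k ⟨?_, ?_⟩
  · intro z hz
    rw [mem_vs]
    exact h z hz
  · intro e he
    rw [mem_es] at he ⊢
    induction e with
    | h u v =>
      have hu : u ∈ (P k).walk.support := Walk.fst_mem_support_of_mem_edges _ he
      have hv : v ∈ (P k).walk.support := Walk.snd_mem_support_of_mem_edges _ he
      exact γ.induced u (h u hu) v (h v hv) (Walk.adj_of_mem_edges _ he)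

/-- If both oriented endpoints of a family path lie on an induced path that cannot
contain any family path, we get a contradiction (uniqueness of induced paths). -/
lemma contains_of_both (hBG : IsBlockGraph G)
    (horient : ∀ i, IsOrientation G (P i) (φ i)) {i : Fin ℓ} {γ : InducedPath G}
    (hnc : ∀ k, ¬ PathContains G γ (P k)) (hne : (P i).first ≠ (P i).last)
    (h0 : φ i 0 ∈ γ.walk.support) (h1 : φ i 1 ∈ γ.walk.support) : False := by
  obtain ⟨wI, hwIp, hwIi, hwIsup, hwIe⟩ := orient_walk horient hne
  obtain ⟨σ, hσp, hσi, hσsub, hσe, -, -⟩ :=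
    seg_between' γ.walk γ.isPath γ.induced h0 h1
  have hsub : ∀ z ∈ wI.support, z ∈ σ.support :=
    uniq_subset hBG (wI.length + σ.length) wI σ hwIp hσp hwIi hσi le_rfl
  have hverts : ∀ z ∈ (P i).vertexSet, z ∈ γ.walk.support := by
    intro z hz
    exact hσsub z (hsub z ((hwIsup z).2 hz))
  refine hnc i ⟨?_, ?_⟩
  · intro z hz
    rw [mem_vs]
    exact hverts z hz
  · intro e he
    rw [mem_es] at he ⊢
    induction e with
    | h u v =>
      have hu : u ∈ (P i).walk.support := Walk.fst_mem_support_of_mem_edges _ he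
      have hv : v ∈ (P i).walk.support := Walk.snd_mem_support_of_mem_edges _ he
      exact γ.induced u (hverts u hu) v (hverts v hv) (Walk.adj_of_mem_edges _ he)

/-- `φ a 1` does not lie on `γ₂`. -/
lemma lemRA (hBG : IsBlockGraph G) (hdisj : PairwiseVertexDisjoint G P)
    (horient : ∀ i, IsOrientation G (P i) (φ i)) (hforb : ¬ HasForbidden G P)
    {a b c : Fin ℓ} {γ₁ γ₂ : InducedPath G} (hac : a ≠ c)
    (h₁ : IsStrand G P φ a b γ₁) (h₂ : IsStrand G P φ b c γ₂)
    (hmeet : (γ₁.vertexSet ∩ γ₂.vertexSet).Nonempty)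
    (hs' : φ a 1 ∈ γ₂.walk.support) : False := by
  classical
  obtain ⟨hab, hind₁, hx₀s', hx₁t, hiA, hiB₁, hnc₁⟩ := h₁
  obtain ⟨hbc, hind₂, hy₀t', hy₁u, hiB₂, hiC, hnc₂⟩ := h₂
  obtain ⟨⟨hx₀γ, hx₀A⟩, hA₁⟩ := inter_eq_iff hiA
  obtain ⟨⟨hx₁γ, hx₁B⟩, hB₁⟩ := inter_eq_iff hiB₁
  obtain ⟨⟨hy₀γ, hy₀B⟩, hB₂⟩ := inter_eq_iff hiB₂
  obtain ⟨⟨hy₁γ, hy₁C⟩, hC₂⟩ := inter_eq_iff hiC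
  obtain ⟨m0, hm0₁, hm0₂⟩ := hmeet
  rw [mem_vs] at hm0₁ hm0₂
  have hAne : (P a).first ≠ (P a).last := family_two hx₀γ hx₀A hnc₁
  have hBne : (P b).first ≠ (P b).last := family_two hx₁γ hx₁B hnc₁
  obtain ⟨wB, hwBp, hwBi, hwBsup, hwBe⟩ := orient_walk horient hBne
  -- `φ a 0` cannot also lie on `γ₂`
  have hs : φ a 0 ∉ γ₂.walk.support := by
    intro hs
    exact contains_of_both hBG horient hnc₂ hAne hs hs'
  -- first vertex of `A` along `γ₂`
  obtain ⟨δ, d, e, hsplit, hδA, hdA⟩ :=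
    split_first γ₂.walk (· ∈ (P a).vertexSet) ⟨φ a 1, hs', phi_mem horient 1⟩
  have hγ₂p := γ₂.isPath
  rw [hsplit] at hγ₂p
  have hdsub : ∀ w ∈ d.support, w ∈ γ₂.walk.support := by
    intro w hw; rw [hsplit, Walk.mem_support_append_iff]; exact Or.inl hw
  have hδγ₂ : δ ∈ γ₂.walk.support := hdsub δ d.end_mem_support
  have hδs : δ ≠ φ a 0 := fun h => hs (h ▸ hδγ₂)
  by_cases hM1 : ∃ m ∈ d.support, m ∈ γ₁.walk.support
  · -- apply the machinery lemma to γ₁ and the prefix of γ₂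
    obtain ⟨m, hmd, hmγ₁⟩ := hM1
    have hγ₂i : IndOn (d.append e) := by
      have h := γ₂.induced
      rw [hsplit] at h
      exact h
    set γ₂' : InducedPath G := ⟨γ₂.first, δ, d, hγ₂p.of_append_left,
      indOn_left hγ₂p hγ₂i⟩ with hγ₂'
    have hstr : IsStrand G P φ b a γ₂' := by
      refine ⟨Ne.symm hab, ?_, hy₀t', hδs, ?_, ?_, ?_⟩
      · intro u hu
        rw [mem_vs] at hu
        exact hind₂ (hdsub u hu)
      · exact inter_eq_single d.start_mem_support hy₀B
          (fun u hu hu' => hB₂ u (hdsub u hu) hu')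
      · exact inter_eq_single d.end_mem_support hδA hdA
      · refine notContains_sub hnc₂ hdsub ?_
        intro ee hee
        rw [hsplit, Walk.edges_append, List.mem_append]
        exact Or.inl hee
    exact lemM hBG hdisj horient hforb hstr
      ⟨hab, hind₁, hx₀s', hx₁t, hiA, hiB₁, hnc₁⟩ ⟨m, hmd, hmγ₁⟩
  · push_neg at hM1
    have hm0e : m0 ∈ e.support := by
      have := hm0₂
      rw [hsplit, Walk.mem_support_append_iff] at this
      rcases this with h | h
      · exact absurd hm0₁ (hM1 m0 h)
      · exact h
    obtain ⟨z, f', g', hsplite, hzγ₁, hf'm⟩ :=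
      split_first e (· ∈ γ₁.walk.support) ⟨m0, hm0e, hm0₁⟩
    have hsplit2 : γ₂.walk = (d.append f').append g' := by
      rw [hsplit, hsplite, Walk.append_assoc]
    set f : G.Walk γ₂.first z := d.append f' with hf
    have hγ₂p2 := γ₂.isPath
    rw [hsplit2] at hγ₂p2
    have hfp : f.IsPath := hγ₂p2.of_append_left
    have hfsub : ∀ w ∈ f.support, w ∈ γ₂.walk.support := by
      intro w hw
      rw [hsplit2, Walk.mem_support_append_iff]
      exact Or.inl hw
    have hfm : ∀ u ∈ f.support, u ∈ γ₁.walk.support → u = z := by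
      intro u hu huγ₁
      rw [hf, Walk.mem_support_append_iff] at hu
      rcases hu with hu | hu
      · exact absurd huγ₁ (hM1 u hu)
      · exact hf'm u hu huγ₁
    have hδf : δ ∈ f.support := by
      rw [hf, Walk.mem_support_append_iff]
      exact Or.inl d.end_mem_support
    have hy₀z : γ₂.first ≠ z := by
      intro h
      exact hM1 γ₂.first d.start_mem_support (h ▸ hzγ₁)
    have hδz : δ ≠ z := by
      intro h
      exact hM1 δ d.end_mem_support (h ▸ hzγ₁)
    have hy₀δ : γ₂.first ≠ δ := (hdisj b a (Ne.symm hab)).ne_of_mem hy₀B hδA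
    have hx₁y₀ : γ₁.last ≠ γ₂.first := by
      intro h
      exact hM1 γ₂.first d.start_mem_support (h ▸ γ₁.walk.end_mem_support)
    obtain ⟨σB, hσBp, hσBi, hσBsub, hσBe, -, -⟩ :=
      seg_between' wB hwBp hwBi ((hwBsup _).2 hy₀B) ((hwBsup _).2 hx₁B)
    obtain ⟨ρ, hρp, hρi, hρsub, hρe, -, -⟩ :=
      seg_between' γ₁.walk γ₁.isPath γ₁.induced hzγ₁ γ₁.walk.end_mem_support
    have hq : (σB.append ρ.reverse).IsPath := by
      refine append_isPath hσBp (by rwa [Walk.isPath_reverse_iff]) ?_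
      intro u hu hu'
      rw [Walk.support_reverse, List.mem_reverse] at hu'
      exact hB₁ u (hρsub u hu') ((hwBsup u).1 (hσBsub u hu))
    have hclq := clique_of_two_paths hBG hy₀z f (σB.append ρ.reverse) hfp hq ?_
    swap
    · intro u hu hu'
      rw [Walk.mem_support_append_iff] at hu'
      rcases hu' with hu' | hu'
      · exact Or.inl (hB₂ u (hfsub u hu) ((hwBsup u).1 (hσBsub u hu')))
      · rw [Walk.support_reverse, List.mem_reverse] at hu'
        exact Or.inr (hfm u hu (hρsub u hu'))
    have t1 : G.Adj γ₂.first δ :=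
      hclq γ₂.first (Or.inl f.start_mem_support) δ (Or.inl hδf) hy₀δ
    have t2 : G.Adj δ z := hclq δ (Or.inl hδf) z (Or.inl f.end_mem_support) hδz
    have t3 : G.Adj γ₂.first z :=
      hclq γ₂.first (Or.inl f.start_mem_support) z (Or.inl f.end_mem_support) hy₀z
    exact InducedPath.no_triangle γ₂ (hdsub _ d.start_mem_support) hδγ₂ (hfsub _ f.end_mem_support)
      hy₀δ hδz hy₀z t1 t2 t3

/-- `φ c 0` does not lie on `γ₁`. -/
lemma lemRC (hBG : IsBlockGraph G) (hdisj : PairwiseVertexDisjoint G P)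
    (horient : ∀ i, IsOrientation G (P i) (φ i)) (hforb : ¬ HasForbidden G P)
    {a b c : Fin ℓ} {γ₁ γ₂ : InducedPath G} (hac : a ≠ c)
    (h₁ : IsStrand G P φ a b γ₁) (h₂ : IsStrand G P φ b c γ₂)
    (hmeet : (γ₁.vertexSet ∩ γ₂.vertexSet).Nonempty)
    (hu : φ c 0 ∈ γ₁.walk.support) : False := by
  classical
  obtain ⟨hab, hind₁, hx₀s', hx₁t, hiA, hiB₁, hnc₁⟩ := h₁
  obtain ⟨hbc, hind₂, hy₀t', hy₁u, hiB₂, hiC, hnc₂⟩ := h₂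
  obtain ⟨⟨hx₀γ, hx₀A⟩, hA₁⟩ := inter_eq_iff hiA
  obtain ⟨⟨hx₁γ, hx₁B⟩, hB₁⟩ := inter_eq_iff hiB₁
  obtain ⟨⟨hy₀γ, hy₀B⟩, hB₂⟩ := inter_eq_iff hiB₂
  obtain ⟨⟨hy₁γ, hy₁C⟩, hC₂⟩ := inter_eq_iff hiC
  obtain ⟨m0, hm0₁, hm0₂⟩ := hmeet
  rw [mem_vs] at hm0₁ hm0₂
  have hBne : (P b).first ≠ (P b).last := family_two hx₁γ hx₁B hnc₁
  have hCne : (P c).first ≠ (P c).last := family_two hy₁γ hy₁C hnc₂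
  obtain ⟨wB, hwBp, hwBi, hwBsup, hwBe⟩ := orient_walk horient hBne
  have hu' : φ c 1 ∉ γ₁.walk.support := by
    intro hu'
    exact contains_of_both hBG horient hnc₁ hCne hu hu'
  -- last vertex of `C` along `γ₁`
  obtain ⟨lam, d, e, hsplit, hlamC, heC⟩ :=
    split_last γ₁.walk (· ∈ (P c).vertexSet) ⟨φ c 0, hu, phi_mem horient 0⟩
  have hγ₁p := γ₁.isPath
  rw [hsplit] at hγ₁p
  have hesub : ∀ w ∈ e.support, w ∈ γ₁.walk.support := by
    intro w hw; rw [hsplit, Walk.mem_support_append_iff]; exact Or.inr hw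
  have hdsub : ∀ w ∈ d.support, w ∈ γ₁.walk.support := by
    intro w hw; rw [hsplit, Walk.mem_support_append_iff]; exact Or.inl hw
  have hlamγ₁ : lam ∈ γ₁.walk.support := hesub lam e.start_mem_support
  have hlamu' : lam ≠ φ c 1 := fun h => hu' (h ▸ hlamγ₁)
  by_cases hM1 : ∃ m ∈ e.support, m ∈ γ₂.walk.support
  · obtain ⟨m, hme, hmγ₂⟩ := hM1
    have hγ₁i : IndOn (d.append e) := by
      have h := γ₁.induced
      rw [hsplit] at h
      exact h
    set γ₁' : InducedPath G := ⟨lam, γ₁.last, e, hγ₁p.of_append_right,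
      indOn_right hγ₁p hγ₁i⟩ with hγ₁'
    have hstr : IsStrand G P φ c b γ₁' := by
      refine ⟨Ne.symm hbc, ?_, hlamu', hx₁t, ?_, ?_, ?_⟩
      · intro u hu
        rw [mem_vs] at hu
        exact hind₁ (hesub u hu)
      · exact inter_eq_single e.start_mem_support hlamC heC
      · exact inter_eq_single e.end_mem_support hx₁B
          (fun u hu hu' => hB₁ u (hesub u hu) hu')
      · refine notContains_sub hnc₁ hesub ?_
        intro ee hee
        rw [hsplit, Walk.edges_append, List.mem_append]
        exact Or.inr hee
    exact lemM hBG hdisj horient hforb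
      ⟨hbc, hind₂, hy₀t', hy₁u, hiB₂, hiC, hnc₂⟩ hstr ⟨m, hmγ₂, hme⟩
  · push_neg at hM1
    have hm0d : m0 ∈ d.support := by
      have := hm0₁
      rw [hsplit, Walk.mem_support_append_iff] at this
      rcases this with h | h
      · exact h
      · exact absurd hm0₂ (hM1 m0 h)
    obtain ⟨z, f', g', hsplitd, hzγ₂, hg'm⟩ :=
      split_last d (· ∈ γ₂.walk.support) ⟨m0, hm0d, hm0₂⟩
    have hsplit2 : γ₁.walk = f'.append (g'.append e) := by
      rw [hsplit, hsplitd, Walk.append_assoc]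
    set eW : G.Walk z γ₁.last := g'.append e with heW
    have hγ₁p2 := γ₁.isPath
    rw [hsplit2] at hγ₁p2
    have hep : eW.IsPath := hγ₁p2.of_append_right
    have heWsub : ∀ w ∈ eW.support, w ∈ γ₁.walk.support := by
      intro w hw
      rw [hsplit2, Walk.mem_support_append_iff]
      exact Or.inr hw
    have heWm : ∀ u ∈ eW.support, u ∈ γ₂.walk.support → u = z := by
      intro u hu huγ₂
      rw [heW, Walk.mem_support_append_iff] at hu
      rcases hu with hu | hu
      · exact hg'm u hu huγ₂
      · exact absurd huγ₂ (hM1 u hu)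
    have hlame : lam ∈ eW.support := by
      rw [heW, Walk.mem_support_append_iff]
      exact Or.inr e.start_mem_support
    have hzx₁ : z ≠ γ₁.last := by
      intro h
      exact hM1 γ₁.last e.end_mem_support (h ▸ hzγ₂)
    have hzlam : z ≠ lam := by
      intro h
      exact hM1 lam e.start_mem_support (h ▸ hzγ₂)
    have hlamx₁ : lam ≠ γ₁.last := (hdisj c b (Ne.symm hbc)).ne_of_mem hlamC hx₁B
    obtain ⟨σ₂, hσ₂p, hσ₂i, hσ₂sub, hσ₂e, -, -⟩ :=
      seg_between' γ₂.walk γ₂.isPath γ₂.induced hzγ₂ γ₂.walk.start_mem_support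
    obtain ⟨σB, hσBp, hσBi, hσBsub, hσBe, -, -⟩ :=
      seg_between' wB hwBp hwBi ((hwBsup _).2 hy₀B) ((hwBsup _).2 hx₁B)
    have hq : (σ₂.append σB).IsPath := by
      refine append_isPath hσ₂p hσBp ?_
      intro u hu hu'
      exact hB₂ u (hσ₂sub u hu) ((hwBsup u).1 (hσBsub u hu'))
    have hclq := clique_of_two_paths hBG hzx₁ eW (σ₂.append σB) hep hq ?_
    swap
    · intro u hu hu'
      rw [Walk.mem_support_append_iff] at hu'
      rcases hu' with hu' | hu'
      · exact Or.inl (heWm u hu (hσ₂sub u hu'))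
      · exact Or.inr (hB₁ u (heWsub u hu) ((hwBsup u).1 (hσBsub u hu')))
    have t1 : G.Adj z lam := hclq z (Or.inl eW.start_mem_support) lam (Or.inl hlame) hzlam
    have t2 : G.Adj lam γ₁.last :=
      hclq lam (Or.inl hlame) γ₁.last (Or.inl eW.end_mem_support) hlamx₁
    have t3 : G.Adj z γ₁.last :=
      hclq z (Or.inl eW.start_mem_support) γ₁.last (Or.inl eW.end_mem_support) hzx₁
    exact InducedPath.no_triangle γ₁ (heWsub _ eW.start_mem_support) hlamγ₁
      γ₁.walk.end_mem_support hzlam hlamx₁ hzx₁ t1 t2 t3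

/-- No other path of the family is covered by the two strand segments. -/
lemma lemP3 (hBG : IsBlockGraph G) (hdisj : PairwiseVertexDisjoint G P)
    (horient : ∀ i, IsOrientation G (P i) (φ i)) (hforb : ¬ HasForbidden G P)
    {a b c : Fin ℓ} {γ₁ γ₂ : InducedPath G} (hac : a ≠ c)
    (h₁ : IsStrand G P φ a b γ₁) (h₂ : IsStrand G P φ b c γ₂)
    {n₁ v : V} {d₁ : G.Walk γ₁.first v} {e₁ : G.Walk v γ₁.last}
    (hsplit₁ : γ₁.walk = d₁.append e₁)
    {pre₂ : G.Walk γ₂.first n₁} {μ₂ : G.Walk n₁ v} {e₂ : G.Walk v γ₂.last}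
    (hsplit₂ : γ₂.walk = pre₂.append (μ₂.append e₂))
    (hpre : ∀ z ∈ pre₂.support, z ∈ γ₁.walk.support → z = n₁)
    (hμ : ∀ z ∈ μ₂.support, z ∈ γ₁.walk.support)
    (hlastm : ∀ z ∈ e₂.support, z ∈ γ₁.walk.support → z = v)
    {k : Fin ℓ} (hka : k ≠ a) (hkb : k ≠ b) (hkc : k ≠ c)
    (hcov : ∀ z ∈ (P k).vertexSet, z ∈ d₁.support ∨ z ∈ e₂.support) : False := by
  classical
  obtain ⟨hab, hind₁, hx₀s', hx₁t, hiA, hiB₁, hnc₁⟩ := h₁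
  obtain ⟨hbc, hind₂, hy₀t', hy₁u, hiB₂, hiC, hnc₂⟩ := h₂
  obtain ⟨⟨hx₀γ, hx₀A⟩, hA₁⟩ := inter_eq_iff hiA
  obtain ⟨⟨hx₁γ, hx₁B⟩, hB₁⟩ := inter_eq_iff hiB₁
  obtain ⟨⟨hy₀γ, hy₀B⟩, hB₂⟩ := inter_eq_iff hiB₂
  obtain ⟨⟨hy₁γ, hy₁C⟩, hC₂⟩ := inter_eq_iff hiC
  have hBne : (P b).first ≠ (P b).last := family_two hx₁γ hx₁B hnc₁
  obtain ⟨wB, hwBp, hwBi, hwBsup, hwBe⟩ := orient_walk horient hBne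
  have hγ₁p := γ₁.isPath
  rw [hsplit₁] at hγ₁p
  have hγ₁i : IndOn (d₁.append e₁) := by
    have h := γ₁.induced; rw [hsplit₁] at h; exact h
  have hγ₂p := γ₂.isPath
  rw [hsplit₂] at hγ₂p
  have hγ₂i : IndOn (pre₂.append (μ₂.append e₂)) := by
    have h := γ₂.induced; rw [hsplit₂] at h; exact h
  have hd₁p : d₁.IsPath := hγ₁p.of_append_left
  have hd₁i : IndOn d₁ := indOn_left hγ₁p hγ₁i
  have hrestp : (μ₂.append e₂).IsPath := hγ₂p.of_append_right
  have hresti : IndOn (μ₂.append e₂) := indOn_right hγ₂p hγ₂i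
  have hμ₂p : μ₂.IsPath := hrestp.of_append_left
  have hμ₂i : IndOn μ₂ := indOn_left hrestp hresti
  have he₂p : e₂.IsPath := hrestp.of_append_right
  have he₂i : IndOn e₂ := indOn_right hrestp hresti
  have hd₁sub : ∀ z ∈ d₁.support, z ∈ γ₁.walk.support := by
    intro z hz; rw [hsplit₁, Walk.mem_support_append_iff]; exact Or.inl hz
  have hμ₂sub : ∀ z ∈ μ₂.support, z ∈ γ₂.walk.support := by
    intro z hz
    rw [hsplit₂, Walk.mem_support_append_iff, Walk.mem_support_append_iff]
    exact Or.inr (Or.inl hz)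
  have he₂sub : ∀ z ∈ e₂.support, z ∈ γ₂.walk.support := by
    intro z hz
    rw [hsplit₂, Walk.mem_support_append_iff, Walk.mem_support_append_iff]
    exact Or.inr (Or.inr hz)
  have hμ₂e : ∀ e ∈ μ₂.edges, e ∈ γ₂.walk.edges := by
    intro e he
    rw [hsplit₂, Walk.edges_append, Walk.edges_append, List.mem_append, List.mem_append]
    exact Or.inr (Or.inl he)
  have hvγ₁ : v ∈ γ₁.walk.support := hd₁sub v d₁.end_mem_support
  have hvγ₂ : v ∈ γ₂.walk.support := he₂sub v e₂.start_mem_support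
  have hMch : ∀ z, z ∈ γ₂.walk.support → z ∈ γ₁.walk.support → z ∈ μ₂.support := by
    intro z hz2 hz1
    rw [hsplit₂, Walk.mem_support_append_iff, Walk.mem_support_append_iff] at hz2
    rcases hz2 with hz | hz | hz
    · rw [hpre z hz hz1]; exact μ₂.start_mem_support
    · exact hz
    · rw [hlastm z hz hz1]; exact μ₂.end_mem_support
  have hMB : ∀ z ∈ μ₂.support, z ∈ (P b).vertexSet → z = γ₁.last ∧ z = γ₂.first :=
    fun z hz hzB => ⟨hB₁ z (hμ z hz) hzB, hB₂ z (hμ₂sub z hz) hzB⟩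
  have hends : ∀ (γ : InducedPath G), (∀ j, ¬ PathContains G γ (P j)) →
      (P k).first ∈ γ.walk.support → (P k).last ∈ γ.walk.support → False := by
    intro γ hnc hf hl
    obtain ⟨σ, hσp, hσi, hσsub, -, -, -⟩ := seg_between' γ.walk γ.isPath γ.induced hf hl
    refine contains_of_verts (k := k) hnc ?_
    intro z hz
    exact hσsub z (uniq_subset hBG ((P k).walk.length + σ.length) (P k).walk σ
      (P k).isPath hσp (P k).induced hσi le_rfl z hz)
  have hfirstmem : (P k).first ∈ (P k).vertexSet := (P k).walk.start_mem_support
  have hlastmem : (P k).last ∈ (P k).vertexSet := (P k).walk.end_mem_support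
  obtain ⟨df, dl, wD, hwDp, hwDi, hwDsup, hdfd₁, hdfγ₂, hdle₂, hdlγ₁, hintD⟩ :
      ∃ (df dl : V) (wD : G.Walk df dl), wD.IsPath ∧ IndOn wD ∧
        (∀ z, z ∈ wD.support ↔ z ∈ (P k).vertexSet) ∧
        df ∈ d₁.support ∧ df ∉ γ₂.walk.support ∧
        dl ∈ e₂.support ∧ dl ∉ γ₁.walk.support ∧
        (∀ z ∈ (P k).vertexSet, z ≠ df → z ≠ dl → z ∈ (P k).interior) := by
    by_cases hf1 : (P k).first ∈ γ₁.walk.support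
    · by_cases hl1 : (P k).last ∈ γ₁.walk.support
      · exact (hends γ₁ hnc₁ hf1 hl1).elim
      · have hl2 : (P k).last ∈ e₂.support := by
          rcases hcov _ hlastmem with h | h
          · exact absurd (hd₁sub _ h) hl1
          · exact h
        have hf2 : (P k).first ∉ γ₂.walk.support := by
          intro hcon
          exact hends γ₂ hnc₂ hcon (he₂sub _ hl2)
        have hf1' : (P k).first ∈ d₁.support := by
          rcases hcov _ hfirstmem with h | h
          · exact h
          · exact absurd (he₂sub _ h) hf2
        refine ⟨(P k).first, (P k).last, (P k).walk, (P k).isPath, (P k).induced,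
          fun z => Iff.rfl, hf1', hf2, hl2, hl1, ?_⟩
        intro z hz hz1 hz2
        refine ⟨hz, ?_⟩
        intro hb
        simp only [InducedPath.boundary, Set.mem_insert_iff, Set.mem_singleton_iff] at hb
        tauto
    · have hf2 : (P k).first ∈ e₂.support := by
        rcases hcov _ hfirstmem with h | h
        · exact absurd (hd₁sub _ h) hf1
        · exact h
      have hl2 : (P k).last ∉ γ₂.walk.support := by
        intro hcon
        exact hends γ₂ hnc₂ (he₂sub _ hf2) hcon
      have hl1' : (P k).last ∈ d₁.support := by
        rcases hcov _ hlastmem with h | h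
        · exact h
        · exact absurd (he₂sub _ h) hl2
      refine ⟨(P k).last, (P k).first, (P k).walk.reverse,
        by rw [Walk.isPath_reverse_iff]; exact (P k).isPath, indOn_reverse (P k).induced,
        ?_, hl1', hl2, hf2, hf1, ?_⟩
      · intro z
        rw [Walk.support_reverse, List.mem_reverse]
        exact Iff.rfl
      · intro z hz hz1 hz2
        refine ⟨hz, ?_⟩
        intro hb
        simp only [InducedPath.boundary, Set.mem_insert_iff, Set.mem_singleton_iff] at hb
        tauto
  have hdfD : df ∈ (P k).vertexSet := (hwDsup df).1 wD.start_mem_support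
  have hdlD : dl ∈ (P k).vertexSet := (hwDsup dl).1 wD.end_mem_support
  obtain ⟨m₂, pre₁', post₁, hsplitP, hm₂γ₂, hpostm⟩ :=
    split_last γ₁.walk (· ∈ γ₂.walk.support) ⟨v, hvγ₁, hvγ₂⟩
  have hγ₁P := γ₁.isPath
  rw [hsplitP] at hγ₁P
  have hpostp : post₁.IsPath := hγ₁P.of_append_right
  have hpostsub : ∀ z ∈ post₁.support, z ∈ γ₁.walk.support := by
    intro z hz; rw [hsplitP, Walk.mem_support_append_iff]; exact Or.inr hz
  have hm₂γ₁ : m₂ ∈ γ₁.walk.support := hpostsub _ post₁.start_mem_support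
  have hm₂M : m₂ ∈ μ₂.support := hMch m₂ hm₂γ₂ hm₂γ₁
  have hanchor : γ₁.last ≠ γ₂.first →
      G.Adj m₂ γ₁.last ∧ G.Adj m₂ γ₂.first := by
    intro hxy
    have hm₂x₁ : m₂ ≠ γ₁.last := by
      intro h
      rw [h] at hm₂γ₂
      exact hxy (hB₂ _ hm₂γ₂ hx₁B)
    have hm₂y₀ : m₂ ≠ γ₂.first := by
      intro h
      rw [h] at hm₂γ₁
      exact hxy (hB₁ _ hm₂γ₁ hy₀B).symm
    obtain ⟨σ, hσp, hσi, hσsub, hσe, -, -⟩ :=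
      seg_between' γ₂.walk γ₂.isPath γ₂.induced hm₂γ₂ γ₂.walk.start_mem_support
    obtain ⟨σB, hσBp, -, hσBsub, -, -, -⟩ :=
      seg_between' wB hwBp hwBi ((hwBsup _).2 hy₀B) ((hwBsup _).2 hx₁B)
    have hq : (σ.append σB).IsPath := by
      refine append_isPath hσp hσBp ?_
      intro u hu hu'
      exact hB₂ u (hσsub u hu) ((hwBsup u).1 (hσBsub u hu'))
    have hclq := clique_of_two_paths hBG hm₂x₁ post₁ (σ.append σB) hpostp hq ?_
    swap
    · intro u hu hu'
      rw [Walk.mem_support_append_iff] at hu'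
      rcases hu' with hu' | hu'
      · exact Or.inl (hpostm u hu (hσsub u hu'))
      · exact Or.inr (hB₁ u (hpostsub u hu) ((hwBsup u).1 (hσBsub u hu')))
    refine ⟨hclq m₂ (Or.inl post₁.start_mem_support) γ₁.last
      (Or.inl post₁.end_mem_support) hm₂x₁, ?_⟩
    refine hclq m₂ (Or.inl post₁.start_mem_support) γ₂.first ?_ hm₂y₀
    refine Or.inr ?_
    rw [Walk.mem_support_append_iff]
    exact Or.inl σ.end_mem_support
  have hintB : γ₁.last = γ₂.first → γ₁.last ∈ (P b).interior := by
    intro hxy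
    refine mem_interior_of horient hBne hx₁B hx₁t ?_
    rw [hxy]
    exact hy₀t'
  have hx₁M : γ₁.last = γ₂.first → γ₁.last ∈ μ₂.support := by
    intro hxy
    refine hMch _ ?_ γ₁.walk.end_mem_support
    rw [hxy]
    exact γ₂.walk.start_mem_support
  by_cases hDM : ∃ z ∈ μ₂.support, z ∈ (P k).vertexSet
  · obtain ⟨zD, hzDμ, hzDD⟩ := hDM
    by_cases hxy : γ₁.last = γ₂.first
    · obtain ⟨R, hRp, hRi, hRsub, hRe, -, -⟩ :=
        seg_between' μ₂ hμ₂p hμ₂i (hx₁M hxy) hzDμ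
      obtain ⟨ζ, S, T, hsplitR, hζD, hSm⟩ :=
        split_first R (· ∈ (P k).vertexSet) ⟨zD, R.end_mem_support, hzDD⟩
      rw [hsplitR] at hRp hRi
      have hSsub : ∀ z ∈ S.support, z ∈ μ₂.support := by
        intro z hz
        refine hRsub z ?_
        rw [hsplitR, Walk.mem_support_append_iff]
        exact Or.inl hz
      have hζμ : ζ ∈ μ₂.support := hSsub ζ S.end_mem_support
      have hζint : ζ ∈ (P k).interior := by
        refine hintD ζ hζD ?_ ?_
        · intro h; rw [h] at hζμ; exact hdfγ₂ (hμ₂sub _ hζμ)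
        · intro h; rw [h] at hζμ; exact hdlγ₁ (hμ _ hζμ)
      set SIP : InducedPath G := ⟨γ₁.last, ζ, S, hRp.of_append_left,
        indOn_left hRp hRi⟩ with hSIP
      refine hforb (Or.inl ⟨b, k, SIP, Ne.symm hkb, ?_, hintB hxy, hζint, ?_, ?_, ?_⟩)
      · intro u hu
        rw [mem_vs] at hu
        exact hind₂ (hμ₂sub _ (hSsub u hu))
      · refine inter_eq_single S.start_mem_support hx₁B ?_
        intro u hu hu'
        exact ((hMB u (hSsub u hu) hu').1)
      · exact inter_eq_single S.end_mem_support hζD hSm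
      · refine notContains_sub hnc₂ (fun u hu => hμ₂sub _ (hSsub u hu)) ?_
        intro e he
        refine hμ₂e e (hRe e ?_)
        rw [hsplitR, Walk.edges_append, List.mem_append]
        exact Or.inl he
    · obtain ⟨hax₁, hay₀⟩ := hanchor hxy
      obtain ⟨R, hRp, hRi, hRsub, hRe, -, -⟩ :=
        seg_between' μ₂ hμ₂p hμ₂i hzDμ hm₂M
      obtain ⟨mt, U, w, hsplitR, hmtD, hwm⟩ :=
        split_last R (· ∈ (P k).vertexSet) ⟨zD, R.start_mem_support, hzDD⟩
      rw [hsplitR] at hRp hRi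
      have hwsub : ∀ z ∈ w.support, z ∈ μ₂.support := by
        intro z hz
        refine hRsub z ?_
        rw [hsplitR, Walk.mem_support_append_iff]
        exact Or.inr hz
      have hmtμ : mt ∈ μ₂.support := hwsub mt w.start_mem_support
      have hmtint : mt ∈ (P k).interior := by
        refine hintD mt hmtD ?_ ?_
        · intro h; rw [h] at hmtμ; exact hdfγ₂ (hμ₂sub _ hmtμ)
        · intro h; rw [h] at hmtμ; exact hdlγ₁ (hμ _ hmtμ)
      set QIP : InducedPath G := ⟨mt, m₂, w, hRp.of_append_right,
        indOn_right hRp hRi⟩ with hQIP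
      refine hforb (Or.inr (Or.inl ⟨k, b, QIP, γ₁.last, γ₂.first, hkb, ?_, hmtint,
        ?_, ?_, hx₁B, hy₀B, hxy, hax₁, hay₀, ?_⟩))
      · intro u hu
        rw [mem_vs] at hu
        exact hind₂ (hμ₂sub _ (hwsub u hu))
      · exact inter_eq_single w.start_mem_support hmtD hwm
      · refine inter_eq_empty ?_
        intro u hu hu'
        exact hxy ((hMB u (hwsub u hu) hu').1.symm.trans (hMB u (hwsub u hu) hu').2)
      · refine notContains_sub hnc₂ (fun u hu => hμ₂sub _ (hwsub u hu)) ?_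
        intro e he
        refine hμ₂e e (hRe e ?_)
        rw [hsplitR, Walk.edges_append, List.mem_append]
        exact Or.inr he
  · push_neg at hDM
    obtain ⟨ε, Dp, Dq, hsplitD, hεe₂, hDpm⟩ :=
      split_first wD (· ∈ e₂.support) ⟨dl, wD.end_mem_support, hdle₂⟩
    rw [hsplitD] at hwDp
    have hDpsub : ∀ z ∈ Dp.support, z ∈ (P k).vertexSet := by
      intro z hz
      refine (hwDsup z).1 ?_
      rw [hsplitD, Walk.mem_support_append_iff]
      exact Or.inl hz
    have hεD : ε ∈ (P k).vertexSet := hDpsub ε Dp.end_mem_support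
    obtain ⟨η, Dp₁, Dp₂, hsplitDp, hηd₁, hDp₂m⟩ :=
      split_last Dp (· ∈ d₁.support) ⟨df, Dp.start_mem_support, hdfd₁⟩
    have hDpp : Dp.IsPath := hwDp.of_append_left
    rw [hsplitDp] at hDpp
    have hDp₂p : Dp₂.IsPath := hDpp.of_append_right
    have hDp₂sub : ∀ z ∈ Dp₂.support, z ∈ Dp.support := by
      intro z hz
      rw [hsplitDp, Walk.mem_support_append_iff]
      exact Or.inr hz
    have hηD : η ∈ (P k).vertexSet := hDpsub η (hDp₂sub η Dp₂.start_mem_support)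
    have hηγ₁ : η ∈ γ₁.walk.support := hd₁sub η hηd₁
    have hηε : η ≠ ε := by
      intro h
      rw [h] at hηγ₁
      exact hDM ε (hMch ε (he₂sub ε hεe₂) hηγ₁) hεD
    obtain ⟨σ₁, hσ₁p, hσ₁i, hσ₁sub, hσ₁e, -, -⟩ :=
      seg_between' d₁ hd₁p hd₁i hηd₁ d₁.end_mem_support
    obtain ⟨σ₂, hσ₂p, hσ₂i, hσ₂sub, hσ₂e, -, -⟩ :=
      seg_between' e₂ he₂p he₂i e₂.start_mem_support hεe₂
    have hq : (σ₁.append σ₂).IsPath := by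
      refine append_isPath hσ₁p hσ₂p ?_
      intro u hu hu'
      exact hlastm u (hσ₂sub u hu') (hd₁sub u (hσ₁sub u hu))
    have hclq := clique_of_two_paths hBG hηε Dp₂ (σ₁.append σ₂) hDp₂p hq ?_
    swap
    · intro u hu hu'
      rw [Walk.mem_support_append_iff] at hu'
      rcases hu' with hu' | hu'
      · exact Or.inl (hDp₂m u hu (hσ₁sub u hu'))
      · exact Or.inr (hDpm u (hDp₂sub u hu) (hσ₂sub u hu'))
    have hvq : v ∈ (σ₁.append σ₂).support := by
      rw [Walk.mem_support_append_iff]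
      exact Or.inl σ₁.end_mem_support
    have hvD : v ∉ (P k).vertexSet := fun h => hDM v μ₂.end_mem_support h
    have hvη : v ≠ η := fun h => hvD (h ▸ hηD)
    have hvε : v ≠ ε := fun h => hvD (h ▸ hεD)
    have adjvη : G.Adj v η :=
      (hclq η (Or.inl Dp₂.start_mem_support) v (Or.inr hvq) hvη.symm).symm
    have adjvε : G.Adj v ε :=
      hclq v (Or.inr hvq) ε (Or.inl Dp₂.end_mem_support) hvε
    by_cases hxy : γ₁.last = γ₂.first
    · obtain ⟨Qw, hQp, hQi, hQsub, hQe, -, -⟩ :=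
        seg_between' μ₂ hμ₂p hμ₂i (hx₁M hxy) μ₂.end_mem_support
      set QIP : InducedPath G := ⟨γ₁.last, v, Qw, hQp, hQi⟩ with hQIP
      refine hforb (Or.inr (Or.inl ⟨b, k, QIP, η, ε, Ne.symm hkb, ?_, hintB hxy,
        ?_, ?_, hηD, hεD, hηε, adjvη, adjvε, ?_⟩))
      · intro u hu
        rw [mem_vs] at hu
        exact hind₂ (hμ₂sub _ (hQsub u hu))
      · refine inter_eq_single Qw.start_mem_support hx₁B ?_
        intro u hu hu'
        exact (hMB u (hQsub u hu) hu').1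
      · refine inter_eq_empty ?_
        intro u hu hu'
        exact hDM u (hQsub u hu) hu'
      · refine notContains_sub hnc₂ (fun u hu => hμ₂sub _ (hQsub u hu)) ?_
        intro e he
        exact hμ₂e e (hQe e he)
    · obtain ⟨hax₁, hay₀⟩ := hanchor hxy
      obtain ⟨Qw, hQp, hQi, hQsub, hQe, -, -⟩ :=
        seg_between' μ₂ hμ₂p hμ₂i μ₂.end_mem_support hm₂M
      set QIP : InducedPath G := ⟨v, m₂, Qw, hQp, hQi⟩ with hQIP
      refine hforb (Or.inr (Or.inr (Or.inl ⟨k, b, QIP, η, ε, γ₁.last, γ₂.first,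
        hkb, ?_, ?_, ?_, hηD, hεD, hηε, hx₁B, hy₀B, hxy, adjvη, adjvε, hax₁, hay₀, ?_⟩)))
      · intro u hu
        rw [mem_vs] at hu
        exact hind₂ (hμ₂sub _ (hQsub u hu))
      · refine inter_eq_empty ?_
        intro u hu hu'
        exact hDM u (hQsub u hu) hu'
      · refine inter_eq_empty ?_
        intro u hu hu'
        exact hxy ((hMB u (hQsub u hu) hu').1.symm.trans (hMB u (hQsub u hu) hu').2)
      · refine notContains_sub hnc₂ (fun u hu => hμ₂sub _ (hQsub u hu)) ?_
        intro e he
        exact hμ₂e e (hQe e he)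

end BigLemmas

end BGAux
/-- **Theorem (Statement 12).** Suppose `P_ind` contains no internal strand, internal
fork, double fork, or complete ladder. If `γ₁` is a strand from `P a` to `P b`, `γ₂`
is a strand from `P b` to `P c`, and `γ₁` and `γ₂` intersect, then `K_{P_ind}`
contains the arc `(a,c)`. -/
theorem blockGraph_strands_compose_arc {V : Type*} [Fintype V] [DecidableEq V]
    (G : SimpleGraph V) (hBG : IsBlockGraph G) (ℓ : ℕ) (P : Fin ℓ → InducedPath G)
    (hdisj : PairwiseVertexDisjoint G P) (φ : Fin ℓ → Fin 2 → V)
    (horient : ∀ i, IsOrientation G (P i) (φ i))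
    (hforb : ¬ HasForbidden G P)
    (a b c : Fin ℓ) (γ₁ γ₂ : InducedPath G)
    (h₁ : IsStrand G P φ a b γ₁) (h₂ : IsStrand G P φ b c γ₂)
    (hmeet : (γ₁.vertexSet ∩ γ₂.vertexSet).Nonempty) :
    KArc G P φ a c := by
  classical
  by_cases hac : a = c
  · subst hac
    exact (BGAux.lemM hBG hdisj horient hforb h₁ h₂ hmeet).elim
  -- unpack the strands
  obtain ⟨hab, hind₁, hx₀s', hx₁t, hiA, hiB₁, hnc₁⟩ := h₁
  obtain ⟨hbc, hind₂, hy₀t', hy₁u, hiB₂, hiC, hnc₂⟩ := h₂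
  obtain ⟨⟨hx₀γ, hx₀A⟩, hA₁⟩ := BGAux.inter_eq_iff hiA
  obtain ⟨⟨hx₁γ, hx₁B⟩, hB₁⟩ := BGAux.inter_eq_iff hiB₁
  obtain ⟨⟨hy₀γ, hy₀B⟩, hB₂⟩ := BGAux.inter_eq_iff hiB₂
  obtain ⟨⟨hy₁γ, hy₁C⟩, hC₂⟩ := BGAux.inter_eq_iff hiC
  -- the three paths have at least two vertices
  have hAne : (P a).first ≠ (P a).last := BGAux.family_two hx₀γ hx₀A hnc₁
  have hCne : (P c).first ≠ (P c).last := BGAux.family_two hy₁γ hy₁C hnc₂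
  -- oriented copies of A and C
  obtain ⟨wA, hwAp, hwAi, hwAsup, hwAe⟩ := BGAux.orient_walk horient hAne
  obtain ⟨wC, hwCp, hwCi, hwCsup, hwCe⟩ := BGAux.orient_walk horient hCne
  -- the meet vertex (last meet along γ₂)
  obtain ⟨m0, hm0₁, hm0₂⟩ := hmeet
  obtain ⟨n₁, pre₂, rest₂, heq2a, hn₁γ₁, hpre⟩ :=
    BGAux.split_first γ₂.walk (· ∈ γ₁.walk.support) ⟨m0, hm0₂, hm0₁⟩
  obtain ⟨v, μ₂, e₂, heq2b, hv₁, hlastm⟩ :=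
    BGAux.split_last rest₂ (· ∈ γ₁.walk.support) ⟨n₁, rest₂.start_mem_support, hn₁γ₁⟩
  have hsplit₂ : γ₂.walk = pre₂.append (μ₂.append e₂) := by rw [heq2a, heq2b]
  set d₂ : G.Walk γ₂.first v := pre₂.append μ₂ with hd₂
  have hsplit₂' : γ₂.walk = d₂.append e₂ := by
    rw [hsplit₂, hd₂, Walk.append_assoc]
  have hγ₂p := γ₂.isPath
  rw [hsplit₂] at hγ₂p
  have hγ₂i : BGAux.IndOn (pre₂.append (μ₂.append e₂)) := by
    have h := γ₂.induced
    rw [hsplit₂] at h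
    exact h
  have hμ : ∀ z ∈ μ₂.support, z ∈ γ₁.walk.support := by
    have hμp : μ₂.IsPath := (hγ₂p.of_append_right).of_append_left
    have hμi : BGAux.IndOn μ₂ :=
      BGAux.indOn_left hγ₂p.of_append_right (BGAux.indOn_right hγ₂p hγ₂i)
    have hvγ₁ : v ∈ γ₁.walk.support := hv₁
    obtain ⟨σg, hσgp, hσgi, hσgsub, -, -, -⟩ :=
      BGAux.seg_between' γ₁.walk γ₁.isPath γ₁.induced hn₁γ₁ hvγ₁
    intro z hz
    exact hσgsub z
      (BGAux.uniq_subset hBG (μ₂.length + σg.length) μ₂ σg hμp hσgp hμi hσgi le_rfl z hz)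
  clear hγ₂p hγ₂i
  have hv₂ : v ∈ γ₂.walk.support := by
    rw [hsplit₂', Walk.mem_support_append_iff]
    exact Or.inl d₂.end_mem_support
  obtain ⟨v', d₁, e₁, hsplit₁, hveq, -⟩ :=
    BGAux.split_first γ₁.walk (· = v) ⟨v, hv₁, rfl⟩
  subst hveq
  -- segments of A and C
  have hx₀wA : γ₁.first ∈ wA.support := (hwAsup _).2 hx₀A
  obtain ⟨x₀', σA, restA, hsplitA, hx₀eq, -⟩ :=
    BGAux.split_first wA (· = γ₁.first) ⟨_, hx₀wA, rfl⟩
  subst hx₀eq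
  have hy₁wC : γ₂.last ∈ wC.support := (hwCsup _).2 hy₁C
  obtain ⟨y₁', preC, σC, hsplitC, hy₁eq, -⟩ :=
    BGAux.split_first wC (· = γ₂.last) ⟨_, hy₁wC, rfl⟩
  subst hy₁eq
  -- the walk from φ a 0 to φ c 1
  set W0 : G.Walk (φ a 0) (φ c 1) := σA.append (d₁.append (e₂.append σC)) with hW0
  obtain ⟨Q, hQf, hQl, hQsup⟩ := BGAux.exists_inducedPath (G := G) W0
  have hW0mem : ∀ z ∈ W0.support,
      z ∈ σA.support ∨ z ∈ d₁.support ∨ z ∈ e₂.support ∨ z ∈ σC.support := by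
    intro z hz
    rw [hW0, Walk.mem_support_append_iff, Walk.mem_support_append_iff,
      Walk.mem_support_append_iff] at hz
    tauto
  have hσAsub : ∀ z ∈ σA.support, z ∈ (P a).vertexSet := by
    intro z hz
    refine (hwAsup z).1 ?_
    rw [hsplitA, Walk.mem_support_append_iff]
    exact Or.inl hz
  have hσCsub : ∀ z ∈ σC.support, z ∈ (P c).vertexSet := by
    intro z hz
    refine (hwCsup z).1 ?_
    rw [hsplitC, Walk.mem_support_append_iff]
    exact Or.inr hz
  have hd₁sub : ∀ z ∈ d₁.support, z ∈ γ₁.walk.support := by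
    intro z hz
    rw [hsplit₁, Walk.mem_support_append_iff]
    exact Or.inl hz
  have he₂sub : ∀ z ∈ e₂.support, z ∈ γ₂.walk.support := by
    intro z hz
    rw [hsplit₂', Walk.mem_support_append_iff]
    exact Or.inr hz
  have hstrand₁ : IsStrand G P φ a b γ₁ := ⟨hab, hind₁, hx₀s', hx₁t, hiA, hiB₁, hnc₁⟩
  have hstrand₂ : IsStrand G P φ b c γ₂ := ⟨hbc, hind₂, hy₀t', hy₁u, hiB₂, hiC, hnc₂⟩
  have hmeet' : (γ₁.vertexSet ∩ γ₂.vertexSet).Nonempty := ⟨m0, hm0₁, hm0₂⟩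
  refine ⟨Q, ?_, ?_, ?_⟩
  · -- IsPathOfInd
    intro z hz
    rw [BGAux.mem_vs] at hz
    rcases hW0mem z (hQsup z hz) with h | h | h | h
    · exact BGAux.mem_famVerts (hσAsub z h)
    · exact hind₁ (hd₁sub z h)
    · exact hind₂ (he₂sub z h)
    · exact BGAux.mem_famVerts (hσCsub z h)
  · rw [hQf, hQl]
  · -- contains no P k
    intro k hcon
    have hget : ∀ xk ∈ (P k).vertexSet, xk ∈ W0.support := by
      intro xk hxk
      have := hcon.1 hxk
      rw [BGAux.mem_vs] at this
      exact hQsup xk this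
    by_cases hka : k = a
    · subst hka
      have hs'W := hget (φ k 1) (BGAux.phi_mem horient 1)
      rcases hW0mem _ hs'W with h | h | h | h
      · -- σA part: junction forces γ₁.first = φ k 1
        rw [hsplitA] at hwAp
        have := BGAux.eq_junction hwAp h restA.end_mem_support
        exact hx₀s' this.symm
      · exact hx₀s' (hA₁ _ (hd₁sub _ h) (BGAux.phi_mem horient 1)).symm
      · exact BGAux.lemRA hBG hdisj horient hforb hac hstrand₁ hstrand₂ hmeet'
          (he₂sub _ h)
      · exact absurd rfl ((hdisj k c hac).ne_of_mem (BGAux.phi_mem horient 1) (hσCsub _ h))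
    · by_cases hkc : k = c
      · subst hkc
        have huW := hget (φ k 0) (BGAux.phi_mem horient 0)
        rcases hW0mem _ huW with h | h | h | h
        · exact absurd rfl ((hdisj a k hac).ne_of_mem (hσAsub _ h)
            (BGAux.phi_mem horient 0)).symm
        · exact BGAux.lemRC hBG hdisj horient hforb hac hstrand₁ hstrand₂ hmeet'
            (hd₁sub _ h)
        · exact hy₁u (hC₂ _ (he₂sub _ h) (BGAux.phi_mem horient 0)).symm
        · rw [hsplitC] at hwCp
          have := BGAux.eq_junction hwCp preC.start_mem_support h
          exact hy₁u this.symm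
      · by_cases hkb : k = b
        · subst hkb
          -- any vertex of B on W0 equals v
          have hBv : ∀ z ∈ (P k).vertexSet, z ∈ W0.support → z = v' := by
            intro z hzB hzW
            rcases hW0mem _ hzW with h | h | h | h
            · exact absurd rfl ((hdisj a k hab).ne_of_mem (hσAsub _ h) hzB).symm
            · have hzx₁ : z = γ₁.last := hB₁ _ (hd₁sub _ h) hzB
              subst hzx₁
              have hp := γ₁.isPath
              rw [hsplit₁] at hp
              exact BGAux.eq_junction hp h e₁.end_mem_support
            · have hzy₀ : z = γ₂.first := hB₂ _ (he₂sub _ h) hzB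
              subst hzy₀
              have hp₂ := γ₂.isPath
              rw [hsplit₂'] at hp₂
              exact BGAux.eq_junction hp₂ d₂.start_mem_support h
            · exact absurd rfl ((hdisj k c hbc).ne_of_mem hzB (hσCsub _ h))
          have hBne : (P k).first ≠ (P k).last := BGAux.family_two hx₁γ hx₁B hnc₁
          have h0 := hBv (φ k 0) (BGAux.phi_mem horient 0) (hget _ (BGAux.phi_mem horient 0))
          have h1 := hBv (φ k 1) (BGAux.phi_mem horient 1) (hget _ (BGAux.phi_mem horient 1))
          exact (BGAux.orient_ne horient hBne).1 (h0.trans h1.symm)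
        · -- other paths
          refine BGAux.lemP3 hBG hdisj horient hforb hac hstrand₁ hstrand₂
            hsplit₁ hsplit₂ hpre hμ hlastm hka hkb hkc ?_
          intro z hz
          rcases hW0mem z (hget z hz) with h | h | h | h
          · exact absurd rfl ((hdisj k a hka).ne_of_mem hz (hσAsub _ h))
          · exact Or.inl h
          · exact Or.inr h
          · exact absurd rfl ((hdisj k c hkc).ne_of_mem hz (hσCsub _ h))
end

section
/- Let G be a finite simple block graph and let P_1,…,P_ℓ be vertex-disjoint induced paths of G. The following are equivalent: (1) P_ind does not contain an internal strand, an internal fork, a double fork, or a complete ladder as a subgraph; (2) P_ind does not contain a complete ladder, nor an internal strand, internal fork, or double fork that is edge-disjoint from P̲ = P_1 ∪ … ∪ P_ℓ. -/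
open SimpleGraph

/- ===== auxiliary machinery ===== -/
set_option linter.unusedSectionVars false
set_option linter.unusedVariables false
set_option maxHeartbeats 1000000

namespace BGAux
variable {V : Type*} {G : SimpleGraph V}

lemma mem_support_of_mem_edge {u z : V} {w : G.Walk u z} {e : Sym2 V} (he : e ∈ w.edges)
    {x : V} (hx : x ∈ e) : x ∈ w.support := by
  induction e using Sym2.ind with
  | _ a b =>
    rcases Sym2.mem_iff.mp hx with rfl | rfl
    · exact w.fst_mem_support_of_mem_edges he
    · exact w.snd_mem_support_of_mem_edges he

lemma edge_at_head {x y z : V} (h : G.Adj x y) (p' : G.Walk y z)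
    (hp : (Walk.cons h p').IsPath) {e : Sym2 V} (he : e ∈ (Walk.cons h p').edges)
    (hx : x ∈ e) : e = s(x, y) := by
  rw [Walk.edges_cons, List.mem_cons] at he
  rcases he with he | he
  · exact he
  · exact absurd (mem_support_of_mem_edge he hx) (((Walk.cons_isPath_iff _ _).mp hp)).2

lemma exists_edge_of_mem_support {u z : V} {w : G.Walk u z} (hw : ¬ w.Nil)
    {v : V} (hv : v ∈ w.support) : ∃ e ∈ w.edges, v ∈ e := by
  induction w with
  | nil => simp at hw
  | @cons a b c r p ih =>
    rw [Walk.support_cons, List.mem_cons] at hv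
    rcases hv with rfl | hv
    · exact ⟨s(v, b), by simp, by simp⟩
    · cases p with
      | nil =>
        simp only [Walk.support_nil, List.mem_singleton] at hv
        subst hv
        exact ⟨s(a, v), by simp, by simp⟩
      | cons r' p' =>
        obtain ⟨e, he, hve⟩ := ih Walk.not_nil_cons hv
        exact ⟨e, by rw [Walk.edges_cons]; exact List.mem_cons_of_mem _ he, hve⟩

/-- In a path graph, any path between the two endpoints uses all the edges. -/
lemma edges_forced {x z : V} (p : G.Walk x z) (hp : p.IsPath) :
    ∀ (w : G.Walk x z), w.IsPath → (w.edges ⊆ p.edges) → p.edges ⊆ w.edges := by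
  induction p with
  | nil => intro w _ _; simp
  | @cons x y z h p' ih =>
    intro w hw hsub
    have hxp' : x ∉ p'.support := (((Walk.cons_isPath_iff _ _).mp hp)).2
    have hxz : x ≠ z := fun hh => hxp' (hh ▸ p'.end_mem_support)
    cases w with
    | nil => exact absurd rfl hxz
    | @cons _ b _ hb w' =>
      have hfirst : s(x, b) ∈ (Walk.cons h p').edges := hsub (by simp)
      have hby : s(x, b) = s(x, y) := edge_at_head h p' hp hfirst (by simp)
      have hbeq : b = y := by
        rcases Sym2.eq_iff.mp hby with ⟨_, h2⟩ | ⟨h1, h2⟩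
        · exact h2
        · exact (G.loopless.irrefl x (h2 ▸ hb)).elim
      subst hbeq
      have hw' : w'.IsPath := (((Walk.cons_isPath_iff _ _).mp hw)).1
      have hxw' : x ∉ w'.support := (((Walk.cons_isPath_iff _ _).mp hw)).2
      have hsub' : w'.edges ⊆ p'.edges := by
        intro e he
        have : e ∈ (Walk.cons h p').edges := hsub (by rw [Walk.edges_cons]; exact List.mem_cons_of_mem _ he)
        rw [Walk.edges_cons, List.mem_cons] at this
        rcases this with rfl | h3
        · exact absurd (mem_support_of_mem_edge he (by simp)) hxw'
        · exact h3
      intro e he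
      rw [Walk.edges_cons, List.mem_cons] at he
      rcases he with rfl | he
      · simp
      · have := ih (((Walk.cons_isPath_iff _ _).mp hp)).1 w' hw' hsub' he
        simp [Walk.edges_cons]
        right; exact this


section Hits
variable [DecidableEq V]

lemma exists_firstHit (T : Set V) {a b : V} (w : G.Walk a b)
    (hex : ∃ x ∈ w.support, x ∈ T) :
    ∃ (u : V) (h : u ∈ w.support), u ∈ T ∧
      ∀ y ∈ (w.takeUntil u h).support, y ∈ T → y = u := by
  induction w with
  | nil =>
    obtain ⟨x, hx, hxT⟩ := hex
    rw [Walk.support_nil, List.mem_singleton] at hx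
    subst hx
    refine ⟨x, by simp, hxT, ?_⟩
    intro y hy _
    have := Walk.support_takeUntil_subset _ (by simp : x ∈ (Walk.nil : G.Walk x x).support) hy
    simpa using this
  | @cons a c b r p ih =>
    by_cases haT : a ∈ T
    · refine ⟨a, by simp, haT, ?_⟩
      have heq : (Walk.cons r p).takeUntil a (by simp) = Walk.nil := by
        simp [Walk.takeUntil]
      rw [heq]
      intro y hy _
      simpa using hy
    · have hpex : ∃ x ∈ p.support, x ∈ T := by
        obtain ⟨x, hx, hxT⟩ := hex
        rw [Walk.support_cons, List.mem_cons] at hx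
        rcases hx with rfl | hx
        · exact absurd hxT haT
        · exact ⟨x, hx, hxT⟩
      obtain ⟨u, h, huT, hprop⟩ := ih hpex
      have hau : a ≠ u := fun hh => haT (hh ▸ huT)
      refine ⟨u, by rw [Walk.support_cons]; exact List.mem_cons_of_mem _ h, huT, ?_⟩
      have heq : (Walk.cons r p).takeUntil u
          (by rw [Walk.support_cons]; exact List.mem_cons_of_mem _ h)
          = Walk.cons r (p.takeUntil u h) := by
        simp [Walk.takeUntil, hau]
      rw [heq]
      intro y hy hyT
      rw [Walk.support_cons, List.mem_cons] at hy
      rcases hy with rfl | hy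
      · exact absurd hyT haT
      · exact hprop y hy hyT

lemma exists_lastHit (T : Set V) {a b : V} (w : G.Walk a b) (hw : w.IsPath)
    (hex : ∃ x ∈ w.support, x ∈ T) :
    ∃ (v : V) (h : v ∈ w.support), v ∈ T ∧
      ∀ y ∈ (w.dropUntil v h).support, y ∈ T → y = v := by
  induction w with
  | nil =>
    obtain ⟨x, hx, hxT⟩ := hex
    rw [Walk.support_nil, List.mem_singleton] at hx
    subst hx
    refine ⟨x, by simp, hxT, ?_⟩
    intro y hy _
    have := Walk.support_dropUntil_subset _ (by simp : x ∈ (Walk.nil : G.Walk x x).support) hy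
    simpa using this
  | @cons a c b r p ih =>
    by_cases hpex : ∃ x ∈ p.support, x ∈ T
    · obtain ⟨v, h, hvT, hprop⟩ := ih ((Walk.cons_isPath_iff _ _).mp hw).1 hpex
      have hav : a ≠ v := fun hh => ((Walk.cons_isPath_iff _ _).mp hw).2 (hh ▸ h)
      refine ⟨v, by rw [Walk.support_cons]; exact List.mem_cons_of_mem _ h, hvT, ?_⟩
      have heq : (Walk.cons r p).dropUntil v
          (by rw [Walk.support_cons]; exact List.mem_cons_of_mem _ h)
          = p.dropUntil v h := by
        simp [Walk.dropUntil, hav]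
      rw [heq]
      exact hprop
    · have haT : a ∈ T := by
        obtain ⟨x, hx, hxT⟩ := hex
        rw [Walk.support_cons, List.mem_cons] at hx
        rcases hx with rfl | hx
        · exact hxT
        · exact absurd ⟨x, hx, hxT⟩ hpex
      refine ⟨a, by simp, haT, ?_⟩
      have heq : (Walk.cons r p).dropUntil a (by simp) = Walk.cons r p := by
        simp [Walk.dropUntil]
      rw [heq]
      intro y hy hyT
      rw [Walk.support_cons, List.mem_cons] at hy
      rcases hy with rfl | hy
      · rfl
      · exact absurd ⟨y, hy, hyT⟩ hpex

lemma length_take_add_drop {u a b : V} (w : G.Walk a b) (h : u ∈ w.support) :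
    (w.takeUntil u h).length + (w.dropUntil u h).length = w.length := by
  have := congrArg Walk.length (w.take_spec h)
  rwa [Walk.length_append] at this

lemma mem_take_or_drop {u a b : V} (w : G.Walk a b) (h : u ∈ w.support)
    {x : V} (hx : x ∈ w.support) :
    x ∈ (w.takeUntil u h).support ∨ x ∈ (w.dropUntil u h).support := by
  rw [← w.take_spec h] at hx
  exact (Walk.mem_support_append_iff _ _).mp hx

lemma one_le_length_of_ne {a b : V} (w : G.Walk a b) {x y : V}
    (hx : x ∈ w.support) (hy : y ∈ w.support) (hxy : x ≠ y) : 1 ≤ w.length := by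
  cases w with
  | nil =>
    rw [Walk.support_nil, List.mem_singleton] at hx hy
    exact absurd (hx.trans hy.symm) hxy
  | cons r p => simp [Walk.length_cons]

end Hits

end BGAux

namespace BGAux
section KeyLemma
open SimpleGraph.Subgraph
variable {V : Type*} {G : SimpleGraph V}

lemma toSubgraph_adj_mem_edges {a b : V} {p : G.Walk a b} {x y : V}
    (h : p.toSubgraph.Adj x y) : s(x, y) ∈ p.edges := by
  rw [← Walk.mem_edges_toSubgraph, SimpleGraph.Subgraph.mem_edgeSet]; exact h

lemma le_del {K H : SimpleGraph.Subgraph G} {v : V} (hle : K ≤ H) (hv : v ∉ K.verts) :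
    K ≤ H.deleteVerts {v} := by
  refine ⟨?_, ?_⟩
  · intro w hw
    refine ⟨hle.1 hw, ?_⟩
    simp only [Set.mem_singleton_iff]
    rintro rfl; exact hv hw
  · intro a b hab
    rw [SimpleGraph.Subgraph.deleteVerts_adj]
    have ha := K.edge_vert hab
    have hb := K.edge_vert hab.symm
    refine ⟨hle.1 ha, ?_, hle.1 hb, ?_, hle.2 hab⟩
    · simp only [Set.mem_singleton_iff]; rintro rfl; exact hv ha
    · simp only [Set.mem_singleton_iff]; rintro rfl; exact hv hb

lemma exists_tail_subgraph {v c : V} (w : G.Walk v c) (hw : w.IsPath) (hvc : v ≠ c) :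
    ∃ K : SimpleGraph.Subgraph G, K ≤ w.toSubgraph ∧ K.Connected ∧ c ∈ K.verts ∧
      K.verts = w.toSubgraph.verts \ {v} := by
  cases w with
  | nil => exact absurd rfl hvc
  | @cons _ b _ r p =>
    have hvp : v ∉ p.support := ((Walk.cons_isPath_iff _ _).mp hw).2
    refine ⟨p.toSubgraph, le_sup_right, p.toSubgraph_connected, ?_, ?_⟩
    · rw [Walk.mem_verts_toSubgraph]; exact p.end_mem_support
    · ext y
      simp only [Walk.verts_toSubgraph, Set.mem_setOf_eq, Walk.toSubgraph,
        SimpleGraph.Subgraph.verts_sup, SimpleGraph.subgraphOfAdj_verts, Set.mem_diff,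
        Set.mem_union, Set.mem_insert_iff, Set.mem_singleton_iff]
      constructor
      · intro hy
        refine ⟨Or.inr hy, ?_⟩
        rintro rfl; exact hvp hy
      · rintro ⟨h1, h2⟩
        rcases h1 with (rfl | rfl) | h1
        · exact absurd rfl h2
        · exact p.start_mem_support
        · exact h1

lemma del_start_conn [DecidableEq V] {x z : V} (A B : G.Walk x z)
    (hA : A.IsPath) (hB : B.IsPath) (hxz : x ≠ z) :
    ((A.toSubgraph ⊔ B.toSubgraph).deleteVerts {x}).Connected := by
  obtain ⟨KA, hKAle, hKAc, hKAz, hKAv⟩ := exists_tail_subgraph A hA hxz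
  obtain ⟨KB, hKBle, hKBc, hKBz, hKBv⟩ := exists_tail_subgraph B hB hxz
  have hconn : (KA ⊔ KB).Connected :=
    SimpleGraph.Subgraph.connected_sup hKAc.preconnected hKBc.preconnected ⟨z, by rw [SimpleGraph.Subgraph.verts_inf]; exact ⟨hKAz, hKBz⟩⟩
  apply hconn.mono
  · refine le_del (sup_le_sup hKAle hKBle) ?_
    rw [SimpleGraph.Subgraph.verts_sup, hKAv, hKBv]
    simp
  · rw [SimpleGraph.Subgraph.verts_sup, hKAv, hKBv,
      SimpleGraph.Subgraph.deleteVerts_verts, SimpleGraph.Subgraph.verts_sup]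
    ext y
    simp only [Set.mem_union, Set.mem_diff, Set.mem_singleton_iff]
    tauto

lemma del_interior_conn [DecidableEq V] {x z v : V} (A B : G.Walk x z)
    (hA : A.IsPath) (hB : B.IsPath)
    (hvA : v ∈ A.support) (hvB : v ∉ B.support) (hvx : v ≠ x) (hvz : v ≠ z) :
    ((A.toSubgraph ⊔ B.toSubgraph).deleteVerts {v}).Connected := by
  have htp : (A.takeUntil v hvA).IsPath := hA.takeUntil hvA
  have hdp : (A.dropUntil v hvA).IsPath := hA.dropUntil hvA
  have hAeq : (A.takeUntil v hvA).append (A.dropUntil v hvA) = A := A.take_spec hvA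
  have hAsub : (A.takeUntil v hvA).toSubgraph ⊔ (A.dropUntil v hvA).toSubgraph
      = A.toSubgraph := by
    rw [← Walk.toSubgraph_append, hAeq]
  obtain ⟨K1, hK1le, hK1c, hK1x, hK1v⟩ :=
    exists_tail_subgraph (A.takeUntil v hvA).reverse htp.reverse hvx
  obtain ⟨K2, hK2le, hK2c, hK2z, hK2v⟩ :=
    exists_tail_subgraph (A.dropUntil v hvA) hdp hvz
  rw [Walk.toSubgraph_reverse] at hK1le hK1v
  have h1A : K1 ≤ A.toSubgraph := by
    refine hK1le.trans ?_
    rw [← hAsub]; exact le_sup_left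
  have h2A : K2 ≤ A.toSubgraph := by
    refine hK2le.trans ?_
    rw [← hAsub]; exact le_sup_right
  have hc1 : (B.toSubgraph ⊔ K1).Connected := by
    refine SimpleGraph.Subgraph.connected_sup B.toSubgraph_connected.preconnected hK1c.preconnected ⟨x, ?_⟩
    rw [SimpleGraph.Subgraph.verts_inf]
    exact ⟨B.start_mem_verts_toSubgraph, hK1x⟩
  have hc : ((B.toSubgraph ⊔ K1) ⊔ K2).Connected := by
    refine SimpleGraph.Subgraph.connected_sup hc1.preconnected hK2c.preconnected ⟨z, ?_⟩
    rw [SimpleGraph.Subgraph.verts_inf, SimpleGraph.Subgraph.verts_sup]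
    exact ⟨Or.inl B.end_mem_verts_toSubgraph, hK2z⟩
  apply hc.mono
  · refine le_del ?_ ?_
    · refine sup_le (sup_le le_sup_right (h1A.trans le_sup_left)) (h2A.trans le_sup_left)
    · rw [SimpleGraph.Subgraph.verts_sup, SimpleGraph.Subgraph.verts_sup, hK1v, hK2v]
      intro hvmem
      rcases hvmem with (hvmem | hvmem) | hvmem
      · rw [Walk.mem_verts_toSubgraph] at hvmem; exact hvB hvmem
      · exact hvmem.2 rfl
      · exact hvmem.2 rfl
  · rw [SimpleGraph.Subgraph.deleteVerts_verts, SimpleGraph.Subgraph.verts_sup,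
      SimpleGraph.Subgraph.verts_sup, SimpleGraph.Subgraph.verts_sup, hK1v, hK2v]
    have hAv : ∀ y, y ∈ A.support ↔ y ∈ (A.takeUntil v hvA).support ∨
        y ∈ (A.dropUntil v hvA).support := by
      intro y
      conv_lhs => rw [← hAeq]
      exact Walk.mem_support_append_iff _ _
    ext y
    simp only [Set.mem_union, Set.mem_diff, Set.mem_singleton_iff,
      Walk.verts_toSubgraph, Set.mem_setOf_eq]
    have hyB : y ∈ B.support → y ≠ v := fun h hv => hvB (hv ▸ h)
    have := hAv y
    tauto

lemma del_conn [DecidableEq V] {x z : V} (A B : G.Walk x z)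
    (hA : A.IsPath) (hB : B.IsPath) (hxz : x ≠ z)
    (hAB : ∀ y, y ∈ A.support → y ∈ B.support → y = x ∨ y = z) (v : V) :
    ((A.toSubgraph ⊔ B.toSubgraph).deleteVerts {v}).Connected := by
  by_cases hvA : v ∈ A.support <;> by_cases hvB : v ∈ B.support
  · rcases hAB v hvA hvB with rfl | rfl
    · exact del_start_conn A B hA hB hxz
    · have := del_start_conn A.reverse B.reverse hA.reverse hB.reverse (Ne.symm hxz)
      rwa [Walk.toSubgraph_reverse, Walk.toSubgraph_reverse] at this
  · refine del_interior_conn A B hA hB hvA hvB ?_ ?_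
    · rintro rfl; exact hvB B.start_mem_support
    · rintro rfl; exact hvB B.end_mem_support
  · rw [sup_comm]
    refine del_interior_conn B A hB hA hvB hvA ?_ ?_
    · rintro rfl; exact hvA A.start_mem_support
    · rintro rfl; exact hvA A.end_mem_support
  · have hc : (A.toSubgraph ⊔ B.toSubgraph).Connected := by
      refine SimpleGraph.Subgraph.connected_sup A.toSubgraph_connected.preconnected B.toSubgraph_connected.preconnected ⟨x, ?_⟩
      rw [SimpleGraph.Subgraph.verts_inf]
      exact ⟨A.start_mem_verts_toSubgraph, B.start_mem_verts_toSubgraph⟩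
    apply hc.mono
    · refine le_del le_rfl ?_
      rw [SimpleGraph.Subgraph.verts_sup]
      intro h
      rcases h with h | h <;> rw [Walk.mem_verts_toSubgraph] at h
      · exact hvA h
      · exact hvB h
    · rw [SimpleGraph.Subgraph.deleteVerts_verts, SimpleGraph.Subgraph.verts_sup]
      ext y
      simp only [Set.mem_union, Set.mem_diff, Set.mem_singleton_iff,
        Walk.verts_toSubgraph, Set.mem_setOf_eq]
      constructor
      · intro h
        refine ⟨h, ?_⟩
        rintro rfl
        rcases h with h | h
        · exact hvA h
        · exact hvB h
      · exact fun h => h.1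

lemma finSub [Fintype V] : Finite (SimpleGraph.Subgraph G) :=
  Finite.of_injective (fun H => (H.verts, H.Adj))
    (fun _ _ h => SimpleGraph.Subgraph.ext (congrArg Prod.fst h) (congrArg Prod.snd h))

end KeyLemma
end BGAux

section KeyLemma2
variable {V : Type*} {G : SimpleGraph V}

lemma BGAux.two_paths_biconnected [DecidableEq V] {x z : V} (A B : G.Walk x z)
    (hA : A.IsPath) (hB : B.IsPath) (hxz : x ≠ z)
    (hAB : ∀ y, y ∈ A.support → y ∈ B.support → y = x ∨ y = z) :
    SubgraphBiconnected (A.toSubgraph ⊔ B.toSubgraph) := by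
  constructor
  · have hc : (A.toSubgraph ⊔ B.toSubgraph).Connected := by
      refine SimpleGraph.Subgraph.connected_sup A.toSubgraph_connected.preconnected B.toSubgraph_connected.preconnected ⟨x, ?_⟩
      rw [SimpleGraph.Subgraph.verts_inf]
      exact ⟨A.start_mem_verts_toSubgraph, B.start_mem_verts_toSubgraph⟩
    exact hc.coe
  · intro v
    exact (BGAux.del_conn A B hA hB hxz hAB v).coe

lemma BGAux.exists_block_above_s15 [Fintype V] (H : G.Subgraph) (hH : SubgraphBiconnected H) :
    ∃ H', IsBlock H' ∧ H ≤ H' := by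
  have : Finite (SimpleGraph.Subgraph G) := BGAux.finSub
  obtain ⟨M, hMs, hMmax⟩ := Set.Finite.exists_maximalFor id
    {H' : G.Subgraph | SubgraphBiconnected H' ∧ H ≤ H'} (Set.toFinite _) ⟨H, hH, le_refl H⟩
  exact ⟨M, ⟨hMs.1, fun H' hH' hle => le_antisymm (hMmax ⟨hH', hMs.2.trans hle⟩ hle) hle⟩, hMs.2⟩

lemma BGAux.key_adj [Fintype V] [DecidableEq V] (hBG : IsBlockGraph G) {x z : V} (hxz : x ≠ z)
    (A B : G.Walk x z) (hA : A.IsPath) (hB : B.IsPath)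
    (hAB : ∀ y, y ∈ A.support → y ∈ B.support → y = x ∨ y = z) : G.Adj x z := by
  obtain ⟨M, hM, hle⟩ := BGAux.exists_block_above_s15 _
    (BGAux.two_paths_biconnected A B hA hB hxz hAB)
  have hx : x ∈ M.verts := hle.1 (Or.inl A.start_mem_verts_toSubgraph)
  have hz : z ∈ M.verts := hle.1 (Or.inl A.end_mem_verts_toSubgraph)
  exact M.adj_sub (hBG M hM x hx z hz hxz)
end KeyLemma2

namespace BGAux
section IP
variable {V : Type*} {G : SimpleGraph V} [DecidableEq V]

lemma eq_of_mem_take_drop {a b u : V} (w : G.Walk a b) (hw : w.IsPath) (h : u ∈ w.support)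
    {x : V} (hx1 : x ∈ (w.takeUntil u h).support) (hx2 : x ∈ (w.dropUntil u h).support) :
    x = u := by
  by_contra hxu
  have hnd : (((w.takeUntil u h).support) ++ ((w.dropUntil u h).support.tail)).Nodup := by
    rw [← Walk.support_append, w.take_spec h]
    exact hw.support_nodup
  have hx2' : x ∈ (w.dropUntil u h).support.tail := by
    have := (w.dropUntil u h).support_eq_cons
    rw [this, List.mem_cons] at hx2
    rcases hx2 with rfl | hx2
    · exact absurd rfl hxu
    · exact hx2
  exact (List.disjoint_of_nodup_append hnd) hx1 hx2'

/-- The prefix of an induced path up to a vertex of its support. -/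
def ipTake (Q : InducedPath G) {u : V} (h : u ∈ Q.walk.support) : InducedPath G where
  first := Q.first
  last := u
  walk := Q.walk.takeUntil u h
  isPath := Q.isPath.takeUntil h
  induced := by
    intro x hx y hy hadj
    have hmem := Q.induced x (Q.walk.support_takeUntil_subset h hx) y
      (Q.walk.support_takeUntil_subset h hy) hadj
    have : s(x, y) ∈ ((Q.walk.takeUntil u h).append (Q.walk.dropUntil u h)).edges := by
      rw [Q.walk.take_spec h]; exact hmem
    rw [Walk.edges_append, List.mem_append] at this
    rcases this with h1 | h1
    · exact h1
    · have hxd : x ∈ (Q.walk.dropUntil u h).support := mem_support_of_mem_edge h1 (by simp)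
      have hyd : y ∈ (Q.walk.dropUntil u h).support := mem_support_of_mem_edge h1 (by simp)
      have hx' := eq_of_mem_take_drop Q.walk Q.isPath h hx hxd
      have hy' := eq_of_mem_take_drop Q.walk Q.isPath h hy hyd
      exact absurd (hy' ▸ hx' ▸ hadj) (G.irrefl)

/-- The suffix of an induced path from a vertex of its support. -/
def ipDrop (Q : InducedPath G) {u : V} (h : u ∈ Q.walk.support) : InducedPath G where
  first := u
  last := Q.last
  walk := Q.walk.dropUntil u h
  isPath := Q.isPath.dropUntil h
  induced := by
    intro x hx y hy hadj
    have hmem := Q.induced x (Q.walk.support_dropUntil_subset h hx) y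
      (Q.walk.support_dropUntil_subset h hy) hadj
    have : s(x, y) ∈ ((Q.walk.takeUntil u h).append (Q.walk.dropUntil u h)).edges := by
      rw [Q.walk.take_spec h]; exact hmem
    rw [Walk.edges_append, List.mem_append] at this
    rcases this with h1 | h1
    · have hxd : x ∈ (Q.walk.takeUntil u h).support := mem_support_of_mem_edge h1 (by simp)
      have hyd : y ∈ (Q.walk.takeUntil u h).support := mem_support_of_mem_edge h1 (by simp)
      have hx' := eq_of_mem_take_drop Q.walk Q.isPath h hxd hx
      have hy' := eq_of_mem_take_drop Q.walk Q.isPath h hyd hy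
      exact absurd (hy' ▸ hx' ▸ hadj) (G.irrefl)
    · exact h1

/-- The reverse of an induced path. -/
def ipReverse (Q : InducedPath G) : InducedPath G where
  first := Q.last
  last := Q.first
  walk := Q.walk.reverse
  isPath := Q.isPath.reverse
  induced := by
    intro x hx y hy hadj
    rw [Walk.support_reverse, List.mem_reverse] at hx hy
    rw [Walk.edges_reverse, List.mem_reverse]
    exact Q.induced x hx y hy hadj

/-- The one-vertex induced path. -/
def ipNil (v : V) : InducedPath G where
  first := v
  last := v
  walk := Walk.nil
  isPath := Walk.IsPath.nil
  induced := by
    intro x hx y hy hadj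
    rw [Walk.support_nil, List.mem_singleton] at hx hy
    exact absurd (hy ▸ hx ▸ hadj) (G.irrefl)

@[simp] lemma ipTake_first (Q : InducedPath G) {u : V} (h : u ∈ Q.walk.support) :
    (ipTake Q h).first = Q.first := rfl
@[simp] lemma ipTake_last (Q : InducedPath G) {u : V} (h : u ∈ Q.walk.support) :
    (ipTake Q h).last = u := rfl
@[simp] lemma ipDrop_first (Q : InducedPath G) {u : V} (h : u ∈ Q.walk.support) :
    (ipDrop Q h).first = u := rfl
@[simp] lemma ipDrop_last (Q : InducedPath G) {u : V} (h : u ∈ Q.walk.support) :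
    (ipDrop Q h).last = Q.last := rfl

lemma ipTake_vertexSet_subset (Q : InducedPath G) {u : V} (h : u ∈ Q.walk.support) :
    (ipTake Q h).vertexSet ⊆ Q.vertexSet := fun _ hx =>
  Q.walk.support_takeUntil_subset h hx
lemma ipDrop_vertexSet_subset (Q : InducedPath G) {u : V} (h : u ∈ Q.walk.support) :
    (ipDrop Q h).vertexSet ⊆ Q.vertexSet := fun _ hx =>
  Q.walk.support_dropUntil_subset h hx
lemma ipTake_edgeSet_subset (Q : InducedPath G) {u : V} (h : u ∈ Q.walk.support) :
    (ipTake Q h).edgeSet ⊆ Q.edgeSet := fun _ hx =>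
  Q.walk.edges_takeUntil_subset h hx
lemma ipDrop_edgeSet_subset (Q : InducedPath G) {u : V} (h : u ∈ Q.walk.support) :
    (ipDrop Q h).edgeSet ⊆ Q.edgeSet := fun _ hx =>
  Q.walk.edges_dropUntil_subset h hx

lemma ipReverse_vertexSet (Q : InducedPath G) : (ipReverse Q).vertexSet = Q.vertexSet := by
  ext y; simp [InducedPath.vertexSet, ipReverse, Walk.support_reverse]
lemma ipReverse_edgeSet (Q : InducedPath G) : (ipReverse Q).edgeSet = Q.edgeSet := by
  ext e; simp [InducedPath.edgeSet, ipReverse, Walk.edges_reverse]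

lemma ipNil_vertexSet (v : V) : (ipNil (G := G) v).vertexSet = {v} := by
  ext y; simp [InducedPath.vertexSet, ipNil]
lemma ipNil_edgeSet (v : V) : (ipNil (G := G) v).edgeSet = ∅ := by
  ext e; simp [InducedPath.edgeSet, ipNil]

lemma first_mem_vertexSet (Q : InducedPath G) : Q.first ∈ Q.vertexSet :=
  Q.walk.start_mem_support
lemma last_mem_vertexSet (Q : InducedPath G) : Q.last ∈ Q.vertexSet :=
  Q.walk.end_mem_support

/-- A segment of a path between two support vertices. -/
lemma seg {a b : V} (p : G.Walk a b) (hp : p.IsPath) {x y : V}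
    (hx : x ∈ p.support) (hy : y ∈ p.support) :
    ∃ B : G.Walk x y, B.IsPath ∧ (∀ z ∈ B.support, z ∈ p.support) ∧
      (∀ e ∈ B.edges, e ∈ p.edges) := by
  by_cases hyd : y ∈ (p.dropUntil x hx).support
  · refine ⟨(p.dropUntil x hx).takeUntil y hyd, (hp.dropUntil hx).takeUntil hyd, ?_, ?_⟩
    · intro z hz
      exact p.support_dropUntil_subset hx
        ((p.dropUntil x hx).support_takeUntil_subset hyd hz)
    · intro e he
      exact p.edges_dropUntil_subset hx
        ((p.dropUntil x hx).edges_takeUntil_subset hyd he)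
  · have hyt : y ∈ (p.takeUntil x hx).support := by
      rcases mem_take_or_drop p hx hy with h | h
      · exact h
      · exact absurd h hyd
    refine ⟨((p.takeUntil x hx).dropUntil y hyt).reverse,
      ((hp.takeUntil hx).dropUntil hyt).reverse, ?_, ?_⟩
    · intro z hz
      rw [Walk.support_reverse, List.mem_reverse] at hz
      exact p.support_takeUntil_subset hx
        ((p.takeUntil x hx).support_dropUntil_subset hyt hz)
    · intro e he
      rw [Walk.edges_reverse, List.mem_reverse] at he
      exact p.edges_takeUntil_subset hx
        ((p.takeUntil x hx).edges_dropUntil_subset hyt he)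

end IP
end BGAux

namespace BGAux
section MID
variable {V : Type*} {G : SimpleGraph V} [Fintype V] [DecidableEq V]

/-- Along any path inside `Q` joining two vertices of `P_k`, one can find a walk
using only common edges of `Q` and `P_k`. -/
lemma mid (hBG : IsBlockGraph G) (Q Pk : InducedPath G) :
    ∀ (n : ℕ) {s t : V} (m : G.Walk s t), m.length ≤ n → m.IsPath →
      (∀ y ∈ m.support, y ∈ Q.walk.support) →
      s ∈ Pk.walk.support → t ∈ Pk.walk.support →
      ∃ w : G.Walk s t, (∀ e ∈ w.edges, e ∈ Pk.walk.edges) ∧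
        (∀ e ∈ w.edges, e ∈ Q.walk.edges) := by
  intro n
  induction n with
  | zero =>
    intro s t m hlen hm hsubQ hs ht
    cases m with
    | nil => exact ⟨Walk.nil, by simp, by simp⟩
    | cons r p => simp [Walk.length_cons] at hlen
  | succ n ih =>
    intro s t m hlen hm hsubQ hs ht
    cases m with
    | nil => exact ⟨Walk.nil, by simp, by simp⟩
    | @cons _ b _ r p =>
      have hsp : s ∉ p.support := ((Walk.cons_isPath_iff _ _).mp hm).2
      have hpp : p.IsPath := ((Walk.cons_isPath_iff _ _).mp hm).1
      obtain ⟨s', h', hs'T, hprop⟩ := exists_firstHit {y | y ∈ Pk.walk.support} p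
        ⟨t, p.end_mem_support, ht⟩
      have hss' : s ≠ s' := fun hh => hsp (hh ▸ h')
      have hA : (Walk.cons r (p.takeUntil s' h')).IsPath := by
        rw [Walk.cons_isPath_iff]
        refine ⟨hpp.takeUntil h', fun hc => hsp (p.support_takeUntil_subset h' hc)⟩
      obtain ⟨B, hBp, hBsub, _⟩ := seg Pk.walk Pk.isPath hs hs'T
      have hadj : G.Adj s s' := by
        refine key_adj hBG hss' (Walk.cons r (p.takeUntil s' h')) B hA hBp ?_
        intro y hyA hyB
        rw [Walk.support_cons, List.mem_cons] at hyA
        rcases hyA with rfl | hyA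
        · exact Or.inl rfl
        · exact Or.inr (hprop y hyA (hBsub y hyB))
      have hsQ : s ∈ Q.walk.support := hsubQ s (Walk.start_mem_support _)
      have hs'Q : s' ∈ Q.walk.support := hsubQ s'
        (by rw [Walk.support_cons, List.mem_cons]; exact Or.inr h')
      have heQ : s(s, s') ∈ Q.walk.edges := Q.induced s hsQ s' hs'Q hadj
      have hePk : s(s, s') ∈ Pk.walk.edges := Pk.induced s hs s' hs'T hadj
      have hlen2 : (p.dropUntil s' h').length ≤ n := by
        have h1 := p.length_dropUntil_le h'
        rw [Walk.length_cons] at hlen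
        omega
      have hsub2 : ∀ y ∈ (p.dropUntil s' h').support, y ∈ Q.walk.support := by
        intro y hy
        refine hsubQ y ?_
        rw [Walk.support_cons, List.mem_cons]
        exact Or.inr (p.support_dropUntil_subset h' hy)
      obtain ⟨w2, hw2P, hw2Q⟩ := ih (p.dropUntil s' h') hlen2 (hpp.dropUntil h') hsub2 hs'T ht
      refine ⟨Walk.cons hadj w2, ?_, ?_⟩
      · intro e he
        rw [Walk.edges_cons, List.mem_cons] at he
        rcases he with rfl | he
        · exact hePk
        · exact hw2P e he
      · intro e he
        rw [Walk.edges_cons, List.mem_cons] at he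
        rcases he with rfl | he
        · exact heQ
        · exact hw2Q e he

/-- If `Q` meets both endpoints of `P_k`, then `Q` contains `P_k`. -/
lemma swallow (hBG : IsBlockGraph G) (Q Pk : InducedPath G)
    {u v : V} (hu : u ∈ Q.walk.support) (hv : v ∈ Q.walk.support)
    (huv : u ≠ v)
    (hfl : (u = Pk.first ∧ v = Pk.last) ∨ (u = Pk.last ∧ v = Pk.first)) :
    PathContains G Q Pk := by
  have huP : u ∈ Pk.walk.support := by
    rcases hfl with ⟨rfl, _⟩ | ⟨rfl, _⟩
    · exact Walk.start_mem_support _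
    · exact Walk.end_mem_support _
  have hvP : v ∈ Pk.walk.support := by
    rcases hfl with ⟨_, rfl⟩ | ⟨_, rfl⟩
    · exact Walk.end_mem_support _
    · exact Walk.start_mem_support _
  obtain ⟨m, hmp, hmsub, _⟩ := seg Q.walk Q.isPath hu hv
  obtain ⟨w, hwP, hwQ⟩ := mid hBG Q Pk m.length m (le_refl _) hmp hmsub huP hvP
  have hw0 : ∃ w0 : G.Walk Pk.first Pk.last,
      (∀ e ∈ w0.edges, e ∈ Pk.walk.edges) ∧ (∀ e ∈ w0.edges, e ∈ Q.walk.edges) := by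
    rcases hfl with ⟨hu1, hv1⟩ | ⟨hu1, hv1⟩
    · subst hu1; subst hv1
      exact ⟨w, hwP, hwQ⟩
    · subst hu1; subst hv1
      refine ⟨w.reverse, ?_, ?_⟩
      · intro e he
        rw [Walk.edges_reverse, List.mem_reverse] at he
        exact hwP e he
      · intro e he
        rw [Walk.edges_reverse, List.mem_reverse] at he
        exact hwQ e he
  obtain ⟨w0, hw0P, hw0Q⟩ := hw0
  have hforced : ∀ e ∈ Pk.walk.edges, e ∈ w0.bypass.edges :=
    fun e he => edges_forced Pk.walk Pk.isPath w0.bypass w0.bypass_isPath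
      (fun e' he' => hw0P e' (w0.edges_bypass_subset he')) he
  have key : ∀ e ∈ Pk.walk.edges, e ∈ Q.walk.edges :=
    fun e he => hw0Q e (w0.edges_bypass_subset (hforced e he))
  have hne : Pk.first ≠ Pk.last := by
    rcases hfl with ⟨rfl, rfl⟩ | ⟨rfl, rfl⟩
    · exact huv
    · exact huv.symm
  constructor
  · intro y hy
    obtain ⟨e, he, hye⟩ := exists_edge_of_mem_support (Walk.not_nil_of_ne hne) hy
    exact mem_support_of_mem_edge (key e he) hye
  · intro e he
    exact key e he

end MID
end BGAux

namespace BGAux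
section MAIN
variable {V : Type*} {G : SimpleGraph V} [Fintype V] [DecidableEq V] {ℓ : ℕ}

lemma sub_not_contains {Q Q' : InducedPath G} {P : Fin ℓ → InducedPath G}
    (hv : Q'.vertexSet ⊆ Q.vertexSet) (he : Q'.edgeSet ⊆ Q.edgeSet)
    (h : ∀ m, ¬ PathContains G Q (P m)) : ∀ m, ¬ PathContains G Q' (P m) :=
  fun m hc => h m ⟨hc.1.trans hv, hc.2.trans he⟩

lemma inter_eq_single_s15 {Qv Pv : Set V} {u : V} (hu : u ∈ Qv) (huP : u ∈ Pv)
    (h : ∀ y, y ∈ Qv → y ∈ Pv → y = u) : Qv ∩ Pv = {u} := by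
  ext y
  constructor
  · rintro ⟨h1, h2⟩
    exact h y h1 h2
  · rintro rfl
    exact ⟨hu, huP⟩

lemma inter_sub_single {A B C : Set V} {a : V} (hsub : A ⊆ B) (h : B ∩ C = {a})
    (ha : a ∈ A) : A ∩ C = {a} := by
  have haC : a ∈ C := (Set.ext_iff.mp h a).mpr rfl |>.2
  ext y
  constructor
  · rintro ⟨h1, h2⟩
    exact (Set.ext_iff.mp h y).mp ⟨hsub h1, h2⟩
  · rintro rfl
    exact ⟨ha, haC⟩

lemma inter_sub_empty {A B C : Set V} (hsub : A ⊆ B) (h : B ∩ C = ∅) : A ∩ C = ∅ := by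
  ext y
  simp only [Set.mem_empty_iff_false, iff_false]
  rintro ⟨h1, h2⟩
  exact (Set.ext_iff.mp h y).mp ⟨hsub h1, h2⟩

lemma shared_ne {Q Pi : InducedPath G} {a : V} (hsing : Q.vertexSet ∩ Pi.vertexSet = {a})
    {e : Sym2 V} (heQ : e ∈ Q.edgeSet) (hei : e ∈ Pi.edgeSet) : False := by
  induction e using Sym2.ind with
  | _ p₁ p₂ =>
    have hadj : G.Adj p₁ p₂ := Q.walk.adj_of_mem_edges heQ
    have h1 : p₁ ∈ Q.vertexSet := Q.walk.fst_mem_support_of_mem_edges heQ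
    have h2 : p₂ ∈ Q.vertexSet := Q.walk.snd_mem_support_of_mem_edges heQ
    have h1' : p₁ ∈ Pi.vertexSet := Pi.walk.fst_mem_support_of_mem_edges hei
    have h2' : p₂ ∈ Pi.vertexSet := Pi.walk.snd_mem_support_of_mem_edges hei
    have e1 : p₁ = a := (Set.ext_iff.mp hsing p₁).mp ⟨h1, h1'⟩
    have e2 : p₂ = a := (Set.ext_iff.mp hsing p₂).mp ⟨h2, h2'⟩
    exact hadj.ne (e1.trans e2.symm)

lemma shared_empty {Q Pi : InducedPath G} (hempty : Q.vertexSet ∩ Pi.vertexSet = ∅)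
    {e : Sym2 V} (heQ : e ∈ Q.edgeSet) (hei : e ∈ Pi.edgeSet) : False := by
  induction e using Sym2.ind with
  | _ p₁ p₂ =>
    have h1 : p₁ ∈ Q.vertexSet := Q.walk.fst_mem_support_of_mem_edges heQ
    have h1' : p₁ ∈ Pi.vertexSet := Pi.walk.fst_mem_support_of_mem_edges hei
    exact (Set.ext_iff.mp hempty p₁).mp ⟨h1, h1'⟩

lemma pair_not_in_fam {P : Fin ℓ → InducedPath G} (hdisj : PairwiseVertexDisjoint G P)
    {j : Fin ℓ} {l b : V} (hbj : b ∈ (P j).vertexSet) (hl : l ∉ (P j).vertexSet) :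
    s(l, b) ∉ famEdges G P := by
  intro h
  obtain ⟨m, hm⟩ := Set.mem_iUnion.mp h
  have hlm : l ∈ (P m).vertexSet := (P m).walk.fst_mem_support_of_mem_edges hm
  have hbm : b ∈ (P m).vertexSet := (P m).walk.snd_mem_support_of_mem_edges hm
  by_cases hmj : m = j
  · exact hl (hmj ▸ hlm)
  · exact Set.disjoint_left.mp (hdisj m j hmj) hbm hbj

/-- Main analysis of a shared edge between `Q` and `P k`. -/
lemma hits {P : Fin ℓ → InducedPath G} {k : Fin ℓ} (Q : InducedPath G)
    {e : Sym2 V} (heQ : e ∈ Q.edgeSet) (hek : e ∈ (P k).edgeSet) :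
    ∃ (u v : V) (hu : u ∈ Q.walk.support) (hv : v ∈ Q.walk.support),
      u ∈ (P k).vertexSet ∧ v ∈ (P k).vertexSet ∧ u ≠ v ∧
      (∀ y ∈ (Q.walk.takeUntil u hu).support, y ∈ (P k).vertexSet → y = u) ∧
      (∀ y ∈ (Q.walk.dropUntil v hv).support, y ∈ (P k).vertexSet → y = v) ∧
      (Q.walk.takeUntil u hu).length < Q.walk.length ∧
      (Q.walk.dropUntil v hv).length < Q.walk.length := by
  induction e using Sym2.ind with
  | _ p₁ p₂ =>
    have hadj : G.Adj p₁ p₂ := Q.walk.adj_of_mem_edges heQ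
    have h1 : p₁ ∈ Q.walk.support := Q.walk.fst_mem_support_of_mem_edges heQ
    have h2 : p₂ ∈ Q.walk.support := Q.walk.snd_mem_support_of_mem_edges heQ
    have h1' : p₁ ∈ (P k).vertexSet := (P k).walk.fst_mem_support_of_mem_edges hek
    have h2' : p₂ ∈ (P k).vertexSet := (P k).walk.snd_mem_support_of_mem_edges hek
    obtain ⟨u, hu, huT, hputake⟩ :=
      exists_firstHit (P k).vertexSet Q.walk ⟨p₁, h1, h1'⟩
    obtain ⟨v, hv, hvT, hpdrop⟩ :=
      exists_lastHit (P k).vertexSet Q.walk Q.isPath ⟨p₁, h1, h1'⟩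
    have huv : u ≠ v := by
      rintro rfl
      have e1 : p₁ = u := by
        rcases mem_take_or_drop Q.walk hu h1 with h | h
        · exact hputake p₁ h h1'
        · exact hpdrop p₁ h h1'
      have e2 : p₂ = u := by
        rcases mem_take_or_drop Q.walk hu h2 with h | h
        · exact hputake p₂ h h2'
        · exact hpdrop p₂ h h2'
      exact hadj.ne (e1.trans e2.symm)
    have hvdrop : v ∈ (Q.walk.dropUntil u hu).support := by
      rcases mem_take_or_drop Q.walk hu hv with h | h
      · exact absurd (hputake v h hvT) (fun hh => huv hh.symm)
      · exact h
    have hutake : u ∈ (Q.walk.takeUntil v hv).support := by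
      rcases mem_take_or_drop Q.walk hv hu with h | h
      · exact h
      · exact absurd (hpdrop u h huT) huv
    have hlen1 : 1 ≤ (Q.walk.dropUntil u hu).length :=
      one_le_length_of_ne _ (Walk.start_mem_support _) hvdrop huv
    have hlen2 : 1 ≤ (Q.walk.takeUntil v hv).length :=
      one_le_length_of_ne _ hutake (Walk.end_mem_support _) huv
    have hs1 := length_take_add_drop Q.walk hu
    have hs2 := length_take_add_drop Q.walk hv
    exact ⟨u, v, hu, hv, huT, hvT, huv, hputake, hpdrop, by omega, by omega⟩

lemma ip_edgeSet_nil {Q : InducedPath G} (h : Q.walk.length = 0) : Q.edgeSet = ∅ := by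
  have hlen : Q.walk.edges = [] := List.length_eq_zero_iff.mp (by rw [Walk.length_edges]; exact h)
  ext e
  simp [InducedPath.edgeSet, hlen]

lemma strand_main (hBG : IsBlockGraph G) (P : Fin ℓ → InducedPath G)
    (hdisj : PairwiseVertexDisjoint G P) :
    ∀ (n : ℕ) (i j : Fin ℓ) (Q : InducedPath G), Q.walk.length ≤ n →
      IsInternalStrand G P i j Q → HasForbiddenEdgeDisjoint G P := by
  intro n
  induction n with
  | zero =>
    intro i j Q hlen hQ
    refine Or.inl ⟨i, j, Q, hQ, ?_⟩
    rw [ip_edgeSet_nil (Nat.le_zero.mp hlen)]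
    exact Set.empty_disjoint _
  | succ n ih =>
    intro i j Q hlen hQ
    by_cases hdisjQ : Disjoint Q.edgeSet (famEdges G P)
    · exact Or.inl ⟨i, j, Q, hQ, hdisjQ⟩
    · obtain ⟨e, heQ, hef⟩ := Set.not_disjoint_iff.mp hdisjQ
      obtain ⟨k, hek⟩ := Set.mem_iUnion.mp hef
      obtain ⟨hij, hind, hfi, hlj, hQi, hQj, hnc⟩ := hQ
      have hki : k ≠ i := fun hh => shared_ne hQi heQ (hh ▸ hek)
      have hkj : k ≠ j := fun hh => shared_ne hQj heQ (hh ▸ hek)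
      obtain ⟨u, v, hu, hv, huT, hvT, huv, hputake, hpdrop, hlt1, hlt2⟩ := hits Q heQ hek
      by_cases hub : u ∈ (P k).boundary
      · by_cases hvb : v ∈ (P k).boundary
        · exfalso
          refine hnc k (swallow hBG Q (P k) hu hv huv ?_)
          rcases Set.mem_insert_iff.mp hub with hu1 | hu1 <;>
            rcases Set.mem_insert_iff.mp hvb with hv1 | hv1
          · exact absurd (hu1.trans hv1.symm) huv
          · exact Or.inl ⟨hu1, Set.mem_singleton_iff.mp hv1⟩
          · exact Or.inr ⟨Set.mem_singleton_iff.mp hu1, hv1⟩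
          · exact absurd ((Set.mem_singleton_iff.mp hu1).trans
              (Set.mem_singleton_iff.mp hv1).symm) huv
        · refine ih k j (ipDrop Q hv) (by show (Q.walk.dropUntil v hv).length ≤ n; omega) ⟨hkj, ?_, ?_, ?_, ?_, ?_, ?_⟩
          · exact fun y hy => hind (ipDrop_vertexSet_subset Q hv hy)
          · exact ⟨hvT, hvb⟩
          · exact hlj
          · exact inter_eq_single_s15 (Walk.start_mem_support _) hvT hpdrop
          · exact inter_sub_single (ipDrop_vertexSet_subset Q hv) hQj (Walk.end_mem_support _)
          · exact sub_not_contains (ipDrop_vertexSet_subset Q hv)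
              (ipDrop_edgeSet_subset Q hv) hnc
      · refine ih i k (ipTake Q hu) (by show (Q.walk.takeUntil u hu).length ≤ n; omega)
          ⟨fun hh => hki hh.symm, ?_, ?_, ?_, ?_, ?_, ?_⟩
        · exact fun y hy => hind (ipTake_vertexSet_subset Q hu hy)
        · exact hfi
        · exact ⟨huT, hub⟩
        · exact inter_sub_single (ipTake_vertexSet_subset Q hu) hQi (Walk.start_mem_support _)
        · exact inter_eq_single_s15 (Walk.end_mem_support _) huT hputake
        · exact sub_not_contains (ipTake_vertexSet_subset Q hu)
            (ipTake_edgeSet_subset Q hu) hnc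

lemma fork_full_disjoint {P : Fin ℓ → InducedPath G} (hdisj : PairwiseVertexDisjoint G P)
    {j : Fin ℓ} {Qe : Set (Sym2 V)} {l b c : V} (hQd : Disjoint Qe (famEdges G P))
    (hbj : b ∈ (P j).vertexSet) (hcj : c ∈ (P j).vertexSet) (hl : l ∉ (P j).vertexSet) :
    Disjoint (Qe ∪ {s(l, b), s(l, c)}) (famEdges G P) := by
  rw [Set.disjoint_union_left]
  refine ⟨hQd, ?_⟩
  rw [Set.disjoint_left]
  intro e he
  rcases Set.mem_insert_iff.mp he with rfl | he
  · exact pair_not_in_fam hdisj hbj hl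
  · rw [Set.mem_singleton_iff] at he
    subst he
    exact pair_not_in_fam hdisj hcj hl

lemma fork_main (hBG : IsBlockGraph G) (P : Fin ℓ → InducedPath G)
    (hdisj : PairwiseVertexDisjoint G P) :
    ∀ (n : ℕ) (i j : Fin ℓ) (Q : InducedPath G) (b c : V), Q.walk.length ≤ n →
      IsInternalFork G P i j Q b c → HasForbiddenEdgeDisjoint G P := by
  intro n
  induction n with
  | zero =>
    intro i j Q b c hlen hQ
    obtain ⟨hij, hind, hfi, hQi, hQjE, hbj, hcj, hbc, hab, hac, hnc⟩ := hQ
    have hlnotj : Q.last ∉ (P j).vertexSet := fun h =>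
      ((Set.ext_iff.mp hQjE Q.last).mp ⟨last_mem_vertexSet Q, h⟩)
    refine Or.inr (Or.inl ⟨i, j, Q, b, c,
      ⟨hij, hind, hfi, hQi, hQjE, hbj, hcj, hbc, hab, hac, hnc⟩, ?_⟩)
    refine fork_full_disjoint hdisj ?_ hbj hcj hlnotj
    rw [ip_edgeSet_nil (Nat.le_zero.mp hlen)]
    exact Set.empty_disjoint _
  | succ n ih =>
    intro i j Q b c hlen hQ
    obtain ⟨hij, hind, hfi, hQi, hQjE, hbj, hcj, hbc, hab, hac, hnc⟩ := hQ
    have hlnotj : Q.last ∉ (P j).vertexSet := fun h =>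
      ((Set.ext_iff.mp hQjE Q.last).mp ⟨last_mem_vertexSet Q, h⟩)
    by_cases hdisjQ : Disjoint Q.edgeSet (famEdges G P)
    · exact Or.inr (Or.inl ⟨i, j, Q, b, c,
        ⟨hij, hind, hfi, hQi, hQjE, hbj, hcj, hbc, hab, hac, hnc⟩,
        fork_full_disjoint hdisj hdisjQ hbj hcj hlnotj⟩)
    · obtain ⟨e, heQ, hef⟩ := Set.not_disjoint_iff.mp hdisjQ
      obtain ⟨k, hek⟩ := Set.mem_iUnion.mp hef
      have hki : k ≠ i := fun hh => shared_ne hQi heQ (hh ▸ hek)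
      have hkj : k ≠ j := fun hh => shared_empty hQjE heQ (hh ▸ hek)
      obtain ⟨u, v, hu, hv, huT, hvT, huv, hputake, hpdrop, hlt1, hlt2⟩ := hits Q heQ hek
      by_cases hub : u ∈ (P k).boundary
      · by_cases hvb : v ∈ (P k).boundary
        · exfalso
          refine hnc k (swallow hBG Q (P k) hu hv huv ?_)
          rcases Set.mem_insert_iff.mp hub with hu1 | hu1 <;>
            rcases Set.mem_insert_iff.mp hvb with hv1 | hv1
          · exact absurd (hu1.trans hv1.symm) huv
          · exact Or.inl ⟨hu1, Set.mem_singleton_iff.mp hv1⟩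
          · exact Or.inr ⟨Set.mem_singleton_iff.mp hu1, hv1⟩
          · exact absurd ((Set.mem_singleton_iff.mp hu1).trans
              (Set.mem_singleton_iff.mp hv1).symm) huv
        · -- v is interior to P k
          have hvnotj : v ∉ (P j).vertexSet := Set.disjoint_left.mp (hdisj k j hkj) hvT
          by_cases hveq : v = Q.last
          · -- trivial fork at v
            have habv : G.Adj v b := by rw [hveq]; exact hab
            have hacv : G.Adj v c := by rw [hveq]; exact hac
            refine Or.inr (Or.inl ⟨k, j, ipNil v, b, c,
              ⟨hkj, ?_, ⟨hvT, hvb⟩, ?_, ?_, hbj, hcj, hbc, habv, hacv, ?_⟩, ?_⟩)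
            · intro y hy
              have : y = v := List.mem_singleton.mp hy
              subst this
              exact hind hv
            · refine inter_eq_single_s15 (Walk.start_mem_support _) hvT ?_
              intro y hy _
              exact List.mem_singleton.mp hy
            · ext y
              simp only [Set.mem_inter_iff, Set.mem_empty_iff_false, iff_false, not_and]
              intro hy
              have : y = v := List.mem_singleton.mp hy
              subst this
              exact fun hc => hvnotj hc
            · intro m hc
              have hfm : (P m).first = v := List.mem_singleton.mp (hc.1 (first_mem_vertexSet _))
              have hvm : v ∈ (P m).vertexSet := hfm ▸ first_mem_vertexSet (P m)
              have hmk : m = k := by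
                by_contra hmk
                exact Set.disjoint_left.mp (hdisj m k hmk) hvm hvT
              subst hmk
              have : u = v := List.mem_singleton.mp (hc.1 huT)
              exact huv this
            · refine fork_full_disjoint hdisj ?_ hbj hcj hvnotj
              rw [ipNil_edgeSet]
              exact Set.empty_disjoint _
          · -- suffix fork from k to j
            have hlast : Q.last ∈ (ipDrop Q hv).vertexSet := Walk.end_mem_support _
            refine ih k j (ipDrop Q hv) b c
              (show (Q.walk.dropUntil v hv).length ≤ n by omega)
              ⟨hkj, ?_, ⟨hvT, hvb⟩, ?_, ?_, hbj, hcj, hbc, hab, hac, ?_⟩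
            · exact fun y hy => hind (ipDrop_vertexSet_subset Q hv hy)
            · exact inter_eq_single_s15 (Walk.start_mem_support _) hvT hpdrop
            · exact inter_sub_empty (ipDrop_vertexSet_subset Q hv) hQjE
            · exact sub_not_contains (ipDrop_vertexSet_subset Q hv)
                (ipDrop_edgeSet_subset Q hv) hnc
      · -- u interior: prefix is an internal strand from i to k
        refine strand_main hBG P hdisj (ipTake Q hu).walk.length i k (ipTake Q hu) le_rfl
          ⟨fun hh => hki hh.symm, ?_, hfi, ⟨huT, hub⟩, ?_, ?_, ?_⟩
        · exact fun y hy => hind (ipTake_vertexSet_subset Q hu hy)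
        · exact inter_sub_single (ipTake_vertexSet_subset Q hu) hQi (Walk.start_mem_support _)
        · exact inter_eq_single_s15 (Walk.end_mem_support _) huT hputake
        · exact sub_not_contains (ipTake_vertexSet_subset Q hu)
            (ipTake_edgeSet_subset Q hu) hnc

lemma dfork_full_disjoint {P : Fin ℓ → InducedPath G} (hdisj : PairwiseVertexDisjoint G P)
    {i j : Fin ℓ} {Qe : Set (Sym2 V)} {f l a b c d : V} (hQd : Disjoint Qe (famEdges G P))
    (hai : a ∈ (P i).vertexSet) (hbi : b ∈ (P i).vertexSet) (hf : f ∉ (P i).vertexSet)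
    (hcj : c ∈ (P j).vertexSet) (hdj : d ∈ (P j).vertexSet) (hl : l ∉ (P j).vertexSet) :
    Disjoint (Qe ∪ {s(f, a), s(f, b), s(l, c), s(l, d)}) (famEdges G P) := by
  rw [Set.disjoint_union_left]
  refine ⟨hQd, ?_⟩
  rw [Set.disjoint_left]
  intro e he
  rcases Set.mem_insert_iff.mp he with rfl | he
  · exact pair_not_in_fam hdisj hai hf
  rcases Set.mem_insert_iff.mp he with rfl | he
  · exact pair_not_in_fam hdisj hbi hf
  rcases Set.mem_insert_iff.mp he with rfl | he
  · exact pair_not_in_fam hdisj hcj hl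
  rw [Set.mem_singleton_iff] at he
  subst he
  exact pair_not_in_fam hdisj hdj hl

lemma dfork_main (hBG : IsBlockGraph G) (P : Fin ℓ → InducedPath G)
    (hdisj : PairwiseVertexDisjoint G P) (i j : Fin ℓ) (Q : InducedPath G) (a b c d : V)
    (hQ : IsDoubleFork G P i j Q a b c d) : HasForbiddenEdgeDisjoint G P := by
  obtain ⟨hij, hind, hQiE, hQjE, hai, hbi, habne, hcj, hdj, hcdne, hfa, hfb, hlc, hld, hnc⟩ := hQ
  have hfnoti : Q.first ∉ (P i).vertexSet := fun h =>
    ((Set.ext_iff.mp hQiE Q.first).mp ⟨first_mem_vertexSet Q, h⟩)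
  have hlnotj : Q.last ∉ (P j).vertexSet := fun h =>
    ((Set.ext_iff.mp hQjE Q.last).mp ⟨last_mem_vertexSet Q, h⟩)
  by_cases hdisjQ : Disjoint Q.edgeSet (famEdges G P)
  · exact Or.inr (Or.inr (Or.inl ⟨i, j, Q, a, b, c, d,
      ⟨hij, hind, hQiE, hQjE, hai, hbi, habne, hcj, hdj, hcdne, hfa, hfb, hlc, hld, hnc⟩,
      dfork_full_disjoint hdisj hdisjQ hai hbi hfnoti hcj hdj hlnotj⟩))
  · obtain ⟨e, heQ, hef⟩ := Set.not_disjoint_iff.mp hdisjQ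
    obtain ⟨k, hek⟩ := Set.mem_iUnion.mp hef
    have hki : k ≠ i := fun hh => shared_empty hQiE heQ (hh ▸ hek)
    have hkj : k ≠ j := fun hh => shared_empty hQjE heQ (hh ▸ hek)
    obtain ⟨u, v, hu, hv, huT, hvT, huv, hputake, hpdrop, hlt1, hlt2⟩ := hits Q heQ hek
    by_cases hub : u ∈ (P k).boundary
    · by_cases hvb : v ∈ (P k).boundary
      · exfalso
        refine hnc k (swallow hBG Q (P k) hu hv huv ?_)
        rcases Set.mem_insert_iff.mp hub with hu1 | hu1 <;>
          rcases Set.mem_insert_iff.mp hvb with hv1 | hv1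
        · exact absurd (hu1.trans hv1.symm) huv
        · exact Or.inl ⟨hu1, Set.mem_singleton_iff.mp hv1⟩
        · exact Or.inr ⟨Set.mem_singleton_iff.mp hu1, hv1⟩
        · exact absurd ((Set.mem_singleton_iff.mp hu1).trans
            (Set.mem_singleton_iff.mp hv1).symm) huv
      · -- v interior: build a fork from k to j with c, d
        have hvnotj : v ∉ (P j).vertexSet := Set.disjoint_left.mp (hdisj k j hkj) hvT
        by_cases hveq : v = Q.last
        · have hlcv : G.Adj v c := by rw [hveq]; exact hlc
          have hldv : G.Adj v d := by rw [hveq]; exact hld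
          refine Or.inr (Or.inl ⟨k, j, ipNil v, c, d,
            ⟨hkj, ?_, ⟨hvT, hvb⟩, ?_, ?_, hcj, hdj, hcdne, hlcv, hldv, ?_⟩, ?_⟩)
          · intro y hy
            have : y = v := List.mem_singleton.mp hy
            subst this
            exact hind hv
          · refine inter_eq_single_s15 (Walk.start_mem_support _) hvT ?_
            intro y hy _
            exact List.mem_singleton.mp hy
          · ext y
            simp only [Set.mem_inter_iff, Set.mem_empty_iff_false, iff_false, not_and]
            intro hy
            have : y = v := List.mem_singleton.mp hy
            subst this
            exact fun hc => hvnotj hc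
          · intro m hc
            have hfm : (P m).first = v := List.mem_singleton.mp (hc.1 (first_mem_vertexSet _))
            have hvm : v ∈ (P m).vertexSet := hfm ▸ first_mem_vertexSet (P m)
            have hmk : m = k := by
              by_contra hmk
              exact Set.disjoint_left.mp (hdisj m k hmk) hvm hvT
            subst hmk
            have : u = v := List.mem_singleton.mp (hc.1 huT)
            exact huv this
          · refine fork_full_disjoint hdisj ?_ hcj hdj hvnotj
            rw [ipNil_edgeSet]
            exact Set.empty_disjoint _
        · refine fork_main hBG P hdisj (ipDrop Q hv).walk.length k j (ipDrop Q hv) c d le_rfl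
            ⟨hkj, ?_, ⟨hvT, hvb⟩, ?_, ?_, hcj, hdj, hcdne, hlc, hld, ?_⟩
          · exact fun y hy => hind (ipDrop_vertexSet_subset Q hv hy)
          · exact inter_eq_single_s15 (Walk.start_mem_support _) hvT hpdrop
          · exact inter_sub_empty (ipDrop_vertexSet_subset Q hv) hQjE
          · exact sub_not_contains (ipDrop_vertexSet_subset Q hv)
              (ipDrop_edgeSet_subset Q hv) hnc
    · -- u interior: build a fork from k to i with a, b
      have hunoti : u ∉ (P i).vertexSet := Set.disjoint_left.mp (hdisj k i hki) huT
      by_cases hueq : u = Q.first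
      · have hfau : G.Adj u a := by rw [hueq]; exact hfa
        have hfbu : G.Adj u b := by rw [hueq]; exact hfb
        refine Or.inr (Or.inl ⟨k, i, ipNil u, a, b,
          ⟨hki, ?_, ⟨huT, hub⟩, ?_, ?_, hai, hbi, habne, hfau, hfbu, ?_⟩, ?_⟩)
        · intro y hy
          have : y = u := List.mem_singleton.mp hy
          subst this
          exact hind hu
        · refine inter_eq_single_s15 (Walk.start_mem_support _) huT ?_
          intro y hy _
          exact List.mem_singleton.mp hy
        · ext y
          simp only [Set.mem_inter_iff, Set.mem_empty_iff_false, iff_false, not_and]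
          intro hy
          have : y = u := List.mem_singleton.mp hy
          subst this
          exact fun hc => hunoti hc
        · intro m hc
          have hfm : (P m).first = u := List.mem_singleton.mp (hc.1 (first_mem_vertexSet _))
          have hum : u ∈ (P m).vertexSet := hfm ▸ first_mem_vertexSet (P m)
          have hmk : m = k := by
            by_contra hmk
            exact Set.disjoint_left.mp (hdisj m k hmk) hum huT
          subst hmk
          have : v = u := List.mem_singleton.mp (hc.1 hvT)
          exact huv this.symm
        · refine fork_full_disjoint hdisj ?_ hai hbi hunoti
          rw [ipNil_edgeSet]
          exact Set.empty_disjoint _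
      · refine fork_main hBG P hdisj (ipReverse (ipTake Q hu)).walk.length k i
          (ipReverse (ipTake Q hu)) a b le_rfl
          ⟨hki, ?_, ⟨huT, hub⟩, ?_, ?_, hai, hbi, habne, hfa, hfb, ?_⟩
        · intro y hy
          rw [ipReverse_vertexSet] at hy
          exact hind (ipTake_vertexSet_subset Q hu hy)
        · rw [ipReverse_vertexSet]
          exact inter_eq_single_s15 (Walk.end_mem_support _) huT hputake
        · rw [ipReverse_vertexSet]
          exact inter_sub_empty (ipTake_vertexSet_subset Q hu) hQiE
        · refine sub_not_contains ?_ ?_ hnc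
          · intro y hy
            rw [ipReverse_vertexSet] at hy
            exact ipTake_vertexSet_subset Q hu hy
          · intro e' he'
            rw [ipReverse_edgeSet] at he'
            exact ipTake_edgeSet_subset Q hu he'

end MAIN
end BGAux


/-- **Theorem (Statement 15).** For vertex-disjoint induced paths of a finite simple
block graph, `P_ind` contains no internal strand, internal fork, double fork, or
complete ladder if and only if it contains no complete ladder, nor an internal
strand, internal fork, or double fork which is edge-disjoint from the family. -/
theorem blockGraph_no_forbidden_iff_no_edgeDisjoint_forbidden {V : Type*} [Fintype V]
    [DecidableEq V] (G : SimpleGraph V) (hBG : IsBlockGraph G) (ℓ : ℕ)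
    (P : Fin ℓ → InducedPath G) (hdisj : PairwiseVertexDisjoint G P) :
    ¬ HasForbidden G P ↔ ¬ HasForbiddenEdgeDisjoint G P := by
  
  constructor
  · intro hnF hFed
    apply hnF
    rcases hFed with ⟨i, j, Q, h, _⟩ | ⟨i, j, Q, b, c, h, _⟩ | ⟨i, j, Q, a, b, c, d, h, _⟩ | h
    · exact Or.inl ⟨i, j, Q, h⟩
    · exact Or.inr (Or.inl ⟨i, j, Q, b, c, h⟩)
    · exact Or.inr (Or.inr (Or.inl ⟨i, j, Q, a, b, c, d, h⟩))
    · exact Or.inr (Or.inr (Or.inr h))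
  · intro hnFed hF
    apply hnFed
    rcases hF with ⟨i, j, Q, h⟩ | ⟨i, j, Q, b, c, h⟩ | ⟨i, j, Q, a, b, c, d, h⟩ | h
    · exact BGAux.strand_main hBG P hdisj Q.walk.length i j Q le_rfl h
    · exact BGAux.fork_main hBG P hdisj Q.walk.length i j Q b c le_rfl h
    · exact BGAux.dfork_main hBG P hdisj i j Q a b c d h
    · exact Or.inr (Or.inr (Or.inr h))
end
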